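/- arXiv:1003.0412 — 9 statements merged into one kernel-verified Lean document; each statement's English description precedes it below -/
import Mathlib

section
/- Let k be a field, V a finite-dimensional k-vector space, and g ∈ GL(V) a unipotent element with N := g − 1, whose Jordan blocks have sizes n_1 ≥ n_2 ≥ … ≥ n_u ≥ 1. Let m_1 ≥ m_2 ≥ … ≥ m_f ≥ 1 be integers with m_1 + … + m_f = dim V, and suppose there exist vectors x_1, …, x_f in V such that the vectors g^i x_r (r ∈ [1,f], i ∈ [0, m_r − 1]) form a basis of V. Setting n_i = 0 for i > u and m_i = 0 for i > f, one has m_1 + m_2 + … + m_c ≤ n_1 + n_2 + … + n_c for every c ≥ 1; in particular u ≤ f. -/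
/-- Proposition 3.1: let `g ∈ GL(V)` be unipotent with Jordan blocks of sizes
`n_1 ≥ … ≥ n_u ≥ 1` (encoded by a Jordan basis `v_{r,i}`, `r ∈ [1,u]`, `i ∈ [0, n_r − 1]`,
with `(g−1) v_{r,i} = v_{r,i+1}` and `(g−1) v_{r,n_r−1} = 0`), let `m_1 ≥ … ≥ m_f ≥ 1` with
`m_1 + … + m_f = dim V`, and suppose vectors `x_1, …, x_f` exist such that the vectors
`g^i x_r` (`r ∈ [1,f]`, `i ∈ [0, m_r − 1]`) form a basis of `V`. Setting `n_i = 0` for `i > u`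
and `m_i = 0` for `i > f`, then `m_1 + … + m_c ≤ n_1 + … + n_c` for every `c ≥ 1`;
in particular `u ≤ f`. -/
theorem stmt_0 {k : Type*} [Field k] {V : Type*} [AddCommGroup V] [Module k V]
    [FiniteDimensional k V]
    (g : V ≃ₗ[k] V)
    (hg_unip : IsNilpotent (g.toLinearMap - LinearMap.id : Module.End k V))
    (u : ℕ) (n : ℕ → ℕ)
    (hn1 : ∀ r ∈ Finset.Icc 1 u, 1 ≤ n r)
    (hn_mono : ∀ i j, 1 ≤ i → i ≤ j → j ≤ u → n j ≤ n i)
    (hn0 : ∀ i, u < i → n i = 0)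
    (v : ℕ → ℕ → V)
    (hv_li : LinearIndependent k
      (fun q : {q : ℕ × ℕ // 1 ≤ q.1 ∧ q.1 ≤ u ∧ q.2 < n q.1} => v q.1.1 q.1.2))
    (hv_sp : Submodule.span k
      (Set.range fun q : {q : ℕ × ℕ // 1 ≤ q.1 ∧ q.1 ≤ u ∧ q.2 < n q.1} => v q.1.1 q.1.2) = ⊤)
    (hv_step : ∀ r, 1 ≤ r → r ≤ u → ∀ i, i + 2 ≤ n r → g (v r i) - v r i = v r (i + 1))
    (hv_end : ∀ r, 1 ≤ r → r ≤ u → g (v r (n r - 1)) - v r (n r - 1) = 0)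
    (f : ℕ) (m : ℕ → ℕ)
    (hm1 : ∀ r ∈ Finset.Icc 1 f, 1 ≤ m r)
    (hm_mono : ∀ i j, 1 ≤ i → i ≤ j → j ≤ f → m j ≤ m i)
    (hm0 : ∀ i, f < i → m i = 0)
    (hm_sum : ∑ r ∈ Finset.Icc 1 f, m r = Module.finrank k V)
    (x : ℕ → V)
    (hx_li : LinearIndependent k
      (fun q : {q : ℕ × ℕ // 1 ≤ q.1 ∧ q.1 ≤ f ∧ q.2 < m q.1} => (g ^ q.1.2) (x q.1.1)))
    (hx_sp : Submodule.span k
      (Set.range fun q : {q : ℕ × ℕ // 1 ≤ q.1 ∧ q.1 ≤ f ∧ q.2 < m q.1} =>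
        (g ^ q.1.2) (x q.1.1)) = ⊤) :
    (∀ c, 1 ≤ c → ∑ r ∈ Finset.Icc 1 c, m r ≤ ∑ r ∈ Finset.Icc 1 c, n r) ∧ u ≤ f := by
  classical
  set a : Module.End k V := g.toLinearMap with hadef
  set N : Module.End k V := g.toLinearMap - LinearMap.id with hNdef
  have hNapp : ∀ w : V, N w = g w - w := fun w => rfl
  have hpow : ∀ (i : ℕ) (y : V), (g ^ i) y = (a ^ i) y := by
    intro i y
    rw [LinearEquiv.pow_apply, Module.End.pow_apply]
    rfl
  -- action of powers of N on the Jordan basis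
  have hNv : ∀ (t r i : ℕ), 1 ≤ r → r ≤ u → i < n r →
      (N ^ t) (v r i) = if i + t < n r then v r (i + t) else 0 := by
    intro t
    induction t with
    | zero => intro r i h1 h2 h3; simp [h3]
    | succ t ih =>
      intro r i h1 h2 h3
      rw [pow_succ', Module.End.mul_apply, ih r i h1 h2 h3]
      by_cases h : i + t < n r
      · rw [if_pos h]
        by_cases h' : i + (t + 1) < n r
        · rw [if_pos h', hNapp]
          have := hv_step r h1 h2 (i + t) (by omega)
          rw [show i + (t + 1) = (i + t) + 1 by omega]
          exact this
        · rw [if_neg h', hNapp]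
          have he := hv_end r h1 h2
          rw [show i + t = n r - 1 by omega]
          exact he
      · rw [if_neg h, if_neg (by omega)]
        simp
  -- key telescoping lemma
  have hkey : ∀ (y : V) (b t : ℕ),
      (N ^ t) ((a ^ b) y) - (a ^ (b + t)) y ∈
        Submodule.span k ((fun s => (a ^ s) y) '' Set.Ico b (b + t)) := by
    intro y b t
    induction t with
    | zero => simp
    | succ t ih =>
      set S := Submodule.span k ((fun s => (a ^ s) y) '' Set.Ico b (b + (t + 1))) with hS
      have hgen : ∀ s, b ≤ s → s < b + (t + 1) → (a ^ s) y ∈ S :=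
        fun s h1 h2 => Submodule.subset_span ⟨s, ⟨h1, h2⟩, rfl⟩
      have hNd : N ((N ^ t) ((a ^ b) y) - (a ^ (b + t)) y) ∈ S := by
        have h1 : N ((N ^ t) ((a ^ b) y) - (a ^ (b + t)) y) ∈
            Submodule.map N (Submodule.span k ((fun s => (a ^ s) y) '' Set.Ico b (b + t))) :=
          Submodule.mem_map_of_mem ih
        rw [Submodule.map_span] at h1
        refine Submodule.span_le.mpr ?_ h1
        rintro z ⟨w, ⟨s, ⟨hs1, hs2⟩, rfl⟩, rfl⟩
        have hz : N ((a ^ s) y) = (a ^ (s + 1)) y - (a ^ s) y := by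
          rw [hNapp, pow_succ', Module.End.mul_apply]
          rfl
        rw [hz]
        exact sub_mem (hgen (s + 1) (by omega) (by omega))
          (hgen s hs1 (by omega))
      have hT : (N ^ (t + 1)) ((a ^ b) y) - (a ^ (b + (t + 1))) y
          = N ((N ^ t) ((a ^ b) y) - (a ^ (b + t)) y) - (a ^ (b + t)) y := by
        rw [pow_succ' (N) t, Module.End.mul_apply, map_sub]
        have : N ((a ^ (b + t)) y) = (a ^ (b + t + 1)) y - (a ^ (b + t)) y := by
          rw [hNapp, pow_succ', Module.End.mul_apply]
          rfl
        rw [this, show b + (t + 1) = b + t + 1 by omega]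
        abel
      rw [hT]
      exact sub_mem hNd (hgen (b + t) (by omega) (by omega))
  -- lower bound : dim V ≤ rank N^j + ∑ min (m r) j
  have hLB : ∀ j : ℕ, Module.finrank k V ≤
      Module.finrank k (LinearMap.range (N ^ j)) + ∑ r ∈ Finset.Icc 1 f, min (m r) j := by
    intro j
    set U : Finset V := ((Finset.Icc 1 f).sigma fun r => Finset.range (min (m r) j)).image
      (fun s => (a ^ s.2) (x s.1)) with hU
    set W : Submodule k V := LinearMap.range (N ^ j) ⊔ Submodule.span k (U : Set V) with hW
    have hmem : ∀ r, 1 ≤ r → r ≤ f → ∀ i, i < m r → (a ^ i) (x r) ∈ W := by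
      intro r h1 h2 i
      induction i using Nat.strong_induction_on with
      | _ i ih =>
        intro hi
        by_cases hij : i < j
        · refine le_sup_right (α := Submodule k V) (Submodule.subset_span ?_)
          refine Finset.mem_coe.mpr (Finset.mem_image.mpr ⟨⟨r, i⟩, ?_, rfl⟩)
          simp only [Finset.mem_sigma, Finset.mem_Icc, Finset.mem_range]
          exact ⟨⟨h1, h2⟩, by omega⟩
        · push_neg at hij
          have hd := hkey (x r) (i - j) j
          rw [Nat.sub_add_cancel hij] at hd
          have h1' : (N ^ j) ((a ^ (i - j)) (x r)) ∈ W :=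
            le_sup_left (α := Submodule k V) (LinearMap.mem_range_self _ _)
          have h2' : (N ^ j) ((a ^ (i - j)) (x r)) - (a ^ i) (x r) ∈ W := by
            refine (Submodule.span_le.mpr ?_) hd
            rintro z ⟨s, ⟨hs1, hs2⟩, rfl⟩
            exact ih s hs2 (by omega)
          have heq : (a ^ i) (x r)
              = (N ^ j) ((a ^ (i - j)) (x r))
                - ((N ^ j) ((a ^ (i - j)) (x r)) - (a ^ i) (x r)) := by abel
          rw [heq]
          exact sub_mem h1' h2'
    have htop : W = ⊤ := by
      refine top_unique ?_
      rw [← hx_sp]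
      refine Submodule.span_le.mpr ?_
      rintro z ⟨q, rfl⟩
      have := hmem q.1.1 q.2.1 q.2.2.1 q.1.2 q.2.2.2
      rwa [← hpow] at this
    have hcard : U.card ≤ ∑ r ∈ Finset.Icc 1 f, min (m r) j := by
      refine le_trans Finset.card_image_le ?_
      rw [Finset.card_sigma]
      simp
    have hfr : Module.finrank k (Submodule.span k (U : Set V)) ≤ U.card :=
      finrank_span_finset_le_card (R := k) U
    have hsup := Submodule.finrank_sup_add_finrank_inf_eq
      (LinearMap.range (N ^ j)) (Submodule.span k (U : Set V))
    have hfV : Module.finrank k V = Module.finrank k W := by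
      rw [htop, finrank_top]
    have hWsup : Module.finrank k W = Module.finrank k
        ((LinearMap.range (N ^ j) ⊔ Submodule.span k (U : Set V) : Submodule k V)) := rfl
    omega
  -- upper bound : rank N^j ≤ ∑ (n r - j)
  have hUB : ∀ j : ℕ, Module.finrank k (LinearMap.range (N ^ j)) ≤
      ∑ r ∈ Finset.Icc 1 u, (n r - j) := by
    intro j
    set T : Finset V := ((Finset.Icc 1 u).sigma fun r => Finset.Ico j (n r)).image
      (fun s => v s.1 s.2) with hT
    have hle : LinearMap.range (N ^ j) ≤ Submodule.span k (T : Set V) := by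
      rw [LinearMap.range_eq_map, ← hv_sp, Submodule.map_span]
      refine Submodule.span_le.mpr ?_
      rintro z ⟨w, ⟨q, rfl⟩, rfl⟩
      rw [hNv j q.1.1 q.1.2 q.2.1 q.2.2.1 q.2.2.2]
      by_cases h : q.1.2 + j < n q.1.1
      · rw [if_pos h]
        refine Submodule.subset_span (Finset.mem_coe.mpr (Finset.mem_image.mpr
          ⟨⟨q.1.1, q.1.2 + j⟩, ?_, rfl⟩))
        simp only [Finset.mem_sigma, Finset.mem_Icc, Finset.mem_Ico]
        exact ⟨⟨q.2.1, q.2.2.1⟩, by omega, h⟩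
      · rw [if_neg h]
        exact Submodule.zero_mem _
    have hcard : T.card ≤ ∑ r ∈ Finset.Icc 1 u, (n r - j) := by
      refine le_trans Finset.card_image_le ?_
      rw [Finset.card_sigma]
      simp
    exact le_trans (le_trans (Submodule.finrank_mono hle)
      (finrank_span_finset_le_card (R := k) T)) hcard
  -- combine
  have hsplit : ∀ j, (∑ r ∈ Finset.Icc 1 f, min (m r) j) + (∑ r ∈ Finset.Icc 1 f, (m r - j))
      = Module.finrank k V := by
    intro j
    rw [← Finset.sum_add_distrib, ← hm_sum]
    exact Finset.sum_congr rfl fun r _ => by omega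
  have hMB : ∀ j, ∑ r ∈ Finset.Icc 1 f, (m r - j) ≤ ∑ r ∈ Finset.Icc 1 u, (n r - j) := by
    intro j
    have h1 := hLB j
    have h2 := hUB j
    have h3 := hsplit j
    omega
  have hdom : ∀ c, 1 ≤ c → ∑ r ∈ Finset.Icc 1 c, m r ≤ ∑ r ∈ Finset.Icc 1 c, n r := by
    intro c hc
    set j := n (c + 1) with hj
    have hmc : ∑ r ∈ Finset.Icc 1 c, (m r - j) ≤ ∑ r ∈ Finset.Icc 1 f, (m r - j) := by
      rcases le_total c f with h | h
      · exact Finset.sum_le_sum_of_subset (Finset.Icc_subset_Icc_right h)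
      · refine le_of_eq (Finset.sum_subset (Finset.Icc_subset_Icc_right h) ?_).symm
        intro r hr hr'
        simp only [Finset.mem_Icc] at hr hr'
        have : f < r := by omega
        simp [hm0 r this]
    have hnc : ∑ r ∈ Finset.Icc 1 u, (n r - j) ≤ ∑ r ∈ Finset.Icc 1 c, (n r - j) := by
      rcases le_total u c with h | h
      · exact Finset.sum_le_sum_of_subset (Finset.Icc_subset_Icc_right h)
      · refine le_of_eq (Finset.sum_subset (Finset.Icc_subset_Icc_right h) ?_).symm
        intro r hr hr'
        simp only [Finset.mem_Icc] at hr hr'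
        have h1 : c + 1 ≤ r := by omega
        have := hn_mono (c + 1) r (by omega) h1 hr.2
        omega
    have hjle : ∀ r ∈ Finset.Icc 1 c, j ≤ n r := by
      intro r hr
      simp only [Finset.mem_Icc] at hr
      by_cases hcu : c + 1 ≤ u
      · exact hn_mono r (c + 1) hr.1 (by omega) hcu
      · rw [hj, hn0 (c + 1) (by omega)]
        omega
    have h1 : ∑ r ∈ Finset.Icc 1 c, (m r - j) ≤ ∑ r ∈ Finset.Icc 1 c, (n r - j) :=
      le_trans hmc (le_trans (hMB j) hnc)
    have h2 : ∑ r ∈ Finset.Icc 1 c, n r = ∑ r ∈ Finset.Icc 1 c, (j + (n r - j)) :=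
      Finset.sum_congr rfl fun r hr => by have := hjle r hr; omega
    have h3 : ∑ r ∈ Finset.Icc 1 c, m r ≤ ∑ r ∈ Finset.Icc 1 c, (j + (m r - j)) :=
      Finset.sum_le_sum fun r _ => by omega
    rw [h2, Finset.sum_add_distrib]
    rw [Finset.sum_add_distrib] at h3
    omega
  refine ⟨hdom, ?_⟩
  -- u ≤ f
  by_cases hu : u = 0
  · omega
  · have hnr : ∀ r : Fin u, 1 ≤ n ((r : ℕ) + 1) := fun r =>
      hn1 _ (Finset.mem_Icc.mpr ⟨by omega, by have := r.2; omega⟩)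
    have hker : u ≤ Module.finrank k (LinearMap.ker N) := by
      have hinj : Function.Injective (fun r : Fin u =>
          (⟨((r : ℕ) + 1, n ((r : ℕ) + 1) - 1), Nat.le_add_left 1 _, r.2,
            Nat.sub_lt (hnr r) Nat.one_pos⟩ :
            {q : ℕ × ℕ // 1 ≤ q.1 ∧ q.1 ≤ u ∧ q.2 < n q.1})) := by
        intro r r' h
        have h1 : (r : ℕ) + 1 = (r' : ℕ) + 1 :=
          congrArg (fun q : {q : ℕ × ℕ // 1 ≤ q.1 ∧ q.1 ≤ u ∧ q.2 < n q.1} => q.1.1) h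
        exact Fin.ext (by omega)
      have hli := hv_li.comp _ hinj
      have hmemker : ∀ r : Fin u,
          v ((r : ℕ) + 1) (n ((r : ℕ) + 1) - 1) ∈ LinearMap.ker N := by
        intro r
        rw [LinearMap.mem_ker, hNapp]
        exact hv_end ((r : ℕ) + 1) (by omega) r.2
      have hli' : LinearIndependent k
          (fun r : Fin u => (⟨v ((r : ℕ) + 1) (n ((r : ℕ) + 1) - 1), hmemker r⟩ :
            LinearMap.ker N)) := by
        apply LinearIndependent.of_comp (LinearMap.ker N).subtype
        exact hli
      have hcard := hli'.fintype_card_le_finrank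
      simpa using hcard
    have hrk := LinearMap.finrank_range_add_finrank_ker N
    have hLB1 := hLB 1
    rw [pow_one] at hLB1
    have hsum1 : ∑ r ∈ Finset.Icc 1 f, min (m r) 1 = f := by
      rw [Finset.sum_congr rfl
        (fun r hr => by have := hm1 r hr; omega : ∀ r ∈ Finset.Icc 1 f, min (m r) 1 = 1)]
      simp
    omega
end

section
/- Let k be a field, V a finite-dimensional k-vector space, g ∈ GL(V), and N := g − 1 ∈ End(V). Let m_1 ≥ m_2 ≥ … ≥ m_f ≥ 1 be integers with m_1 + … + m_f = dim V, and suppose there exist vectors x_1, …, x_f in V such that the vectors g^i x_r (r ∈ [1,f], i ∈ [0, m_r − 1]) form a basis of V. Then for every integer k ≥ 0, dim N^k(V) ≥ Σ_{r=1}^{f} max(m_r − k, 0). -/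
open Submodule
section
variable {k : Type*} [Field k] {V : Type*} [AddCommGroup V] [Module k V]

lemma np_apply (g : V ≃ₗ[k] V) (x : V) (t : ℕ) :
    (g.toLinearMap - LinearMap.id : Module.End k V) ((g ^ t) x)
      = (g ^ (t+1)) x - (g ^ t) x := by
  have h : (g ^ (t+1)) x = g ((g ^ t) x) := by rw [pow_succ']; rfl
  simp [LinearMap.sub_apply, h]

lemma np_pow_mem (g : V ≃ₗ[k] V) (x : V) (K i : ℕ) :
    ((g.toLinearMap - LinearMap.id : Module.End k V) ^ K) ((g ^ i) x) - (g ^ (i + K)) x ∈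
      Submodule.span k ((fun t => (g ^ t) x) '' Set.Ico i (i + K)) := by
  induction K with
  | zero => simp
  | succ K ih =>
    set Np : Module.End k V := g.toLinearMap - LinearMap.id with hNp
    have hstep : (Np ^ (K+1)) ((g ^ i) x) - (g ^ (i + (K+1))) x
        = Np ((Np ^ K) ((g ^ i) x) - (g ^ (i + K)) x) - (g ^ (i + K)) x := by
      rw [map_sub, pow_succ', Module.End.mul_apply, np_apply]
      have : i + K + 1 = i + (K + 1) := by omega
      rw [this]
      abel
    rw [hstep]
    have hsub : Submodule.span k ((fun t => (g ^ t) x) '' Set.Ico i (i + K)) ≤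
        Submodule.comap Np (Submodule.span k ((fun t => (g ^ t) x) '' Set.Ico i (i + (K+1)))) := by
      rw [Submodule.span_le]
      rintro v ⟨t, ht, rfl⟩
      simp only [Set.mem_Ico] at ht
      simp only [SetLike.mem_coe, Submodule.mem_comap]
      rw [np_apply]
      exact sub_mem
        (Submodule.subset_span ⟨t+1, by simp [Set.mem_Ico]; omega, rfl⟩)
        (Submodule.subset_span ⟨t, by simp [Set.mem_Ico]; omega, rfl⟩)
    have h1 : Np ((Np ^ K) ((g ^ i) x) - (g ^ (i + K)) x) ∈
        Submodule.span k ((fun t => (g ^ t) x) '' Set.Ico i (i + (K+1))) := hsub ih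
    exact sub_mem h1 (Submodule.subset_span ⟨i + K, by simp [Set.mem_Ico], rfl⟩)

end

/-- if `g ∈ GL(V)`, `N := g − 1`, and there are vectors `x_1, …, x_f` such that
the vectors `g^i x_r` (`r ∈ [1,f]`, `i ∈ [0, m_r − 1]`) form a basis of `V`, where
`m_1 ≥ … ≥ m_f ≥ 1` and `m_1 + … + m_f = dim V`, then for every `K ≥ 0`,
`dim N^K(V) ≥ Σ_{r=1}^f max(m_r − K, 0)` (in `ℕ`, `m r - K` is the truncated difference). -/
theorem stmt_1 {k : Type*} [Field k] {V : Type*} [AddCommGroup V] [Module k V]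
    [FiniteDimensional k V]
    (g : V ≃ₗ[k] V) (f : ℕ) (m : ℕ → ℕ)
    (hm1 : ∀ r ∈ Finset.Icc 1 f, 1 ≤ m r)
    (hmono : ∀ i j, 1 ≤ i → i ≤ j → j ≤ f → m j ≤ m i)
    (hmsum : ∑ r ∈ Finset.Icc 1 f, m r = Module.finrank k V)
    (x : ℕ → V)
    (hxli : LinearIndependent k
      (fun q : {q : ℕ × ℕ // 1 ≤ q.1 ∧ q.1 ≤ f ∧ q.2 < m q.1} => (g ^ q.1.2) (x q.1.1)))
    (hxsp : Submodule.span k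
      (Set.range fun q : {q : ℕ × ℕ // 1 ≤ q.1 ∧ q.1 ≤ f ∧ q.2 < m q.1} =>
        (g ^ q.1.2) (x q.1.1)) = ⊤)
    (K : ℕ) :
    ∑ r ∈ Finset.Icc 1 f, (m r - K) ≤
      Module.finrank k
        (LinearMap.range ((g.toLinearMap - LinearMap.id : Module.End k V) ^ K)) := by
  classical
  set Np : Module.End k V := g.toLinearMap - LinearMap.id with hNpdef
  let B : Module.Basis {q : ℕ × ℕ // 1 ≤ q.1 ∧ q.1 ≤ f ∧ q.2 < m q.1} k V :=
    Module.Basis.mk hxli (by rw [hxsp])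
  have hB : ∀ q, B q = (g ^ q.1.2) (x q.1.1) := fun q => Module.Basis.mk_apply _ _ q
  let T : Finset ((_ : ℕ) × ℕ) := (Finset.Icc 1 f).sigma fun r => Finset.range (m r - K)
  have hT : ∀ q : T, 1 ≤ q.1.1 ∧ q.1.1 ≤ f ∧ q.1.2 + K < m q.1.1 := by
    intro q
    have h := Finset.mem_sigma.mp q.2
    have h1 := Finset.mem_Icc.mp h.1
    have h2 := Finset.mem_range.mp h.2
    exact ⟨h1.1, h1.2, by omega⟩
  let w : T → V := fun q => (Np ^ K) ((g ^ q.1.2) (x q.1.1))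
  have hw : LinearIndependent k w := by
    rw [Fintype.linearIndependent_iff]
    intro c hc
    suffices H : ∀ n (q : T), m q.1.1 - q.1.2 ≤ n → c q = 0 by
      intro q; exact H _ q le_rfl
    intro n
    induction n with
    | zero =>
      intro q hq
      have := (hT q).2.2
      omega
    | succ n ih =>
      intro q hq
      obtain ⟨hq1, hq2, hq3⟩ := hT q
      set r₀ := q.1.1 with hr₀
      set i₀ := q.1.2 with hi₀
      let qQ : {p : ℕ × ℕ // 1 ≤ p.1 ∧ p.1 ≤ f ∧ p.2 < m p.1} := ⟨(r₀, i₀ + K), hq1, hq2, hq3⟩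
      have h0 := congrArg (B.coord qQ) hc
      rw [map_sum, map_zero] at h0
      -- coordinate of a basis-type vector
      have hcoord : ∀ (r t : ℕ) (h1 : 1 ≤ r) (h2 : r ≤ f) (h3 : t < m r),
          (B.coord qQ) ((g ^ t) (x r)) = if ((r, t) : ℕ × ℕ) = (r₀, i₀ + K) then 1 else 0 := by
        intro r t h1 h2 h3
        have : (g ^ t) (x r) = B ⟨(r, t), h1, h2, h3⟩ := (hB ⟨(r, t), h1, h2, h3⟩).symm
        rw [this, Module.Basis.coord_apply, Module.Basis.repr_self, Finsupp.single_apply]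
        congr 1
        simp [qQ, Subtype.ext_iff]
      -- coordinate of the "lower" part vanishes when i₀ ≥ i' or r' ≠ r₀
      have hz : ∀ p : T, (p.1.1 ≠ r₀ ∨ p.1.2 ≤ i₀) →
          (B.coord qQ) (w p - (g ^ (p.1.2 + K)) (x p.1.1)) = 0 := by
        intro p hcase
        obtain ⟨hp1, hp2, hp3⟩ := hT p
        have hmem := np_pow_mem g (x p.1.1) K p.1.2
        have hker : Submodule.span k ((fun t => (g ^ t) (x p.1.1)) '' Set.Ico p.1.2 (p.1.2 + K))
            ≤ LinearMap.ker (B.coord qQ) := by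
          rw [Submodule.span_le]
          rintro v ⟨t, ht, rfl⟩
          simp only [Set.mem_Ico] at ht
          simp only [SetLike.mem_coe, LinearMap.mem_ker]
          rw [hcoord p.1.1 t hp1 hp2 (by omega)]
          rw [if_neg]
          intro heq
          have h1 : p.1.1 = r₀ := (Prod.mk.injEq _ _ _ _).mp heq |>.1
          have h2 : t = i₀ + K := (Prod.mk.injEq _ _ _ _).mp heq |>.2
          rcases hcase with hc' | hc' <;> omega
        exact hker hmem
      have key : ∀ p ∈ Finset.univ, (B.coord qQ) (c p • w p) = if p = q then c p else 0 := by
        intro p _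
        obtain ⟨hp1, hp2, hp3⟩ := hT p
        have hsplit : (B.coord qQ) (w p)
            = (B.coord qQ) ((g ^ (p.1.2 + K)) (x p.1.1))
              + (B.coord qQ) (w p - (g ^ (p.1.2 + K)) (x p.1.1)) := by
          rw [← map_add]; congr 1; abel
        rw [map_smul, smul_eq_mul, hsplit, hcoord p.1.1 (p.1.2 + K) hp1 hp2 hp3]
        by_cases hr : p.1.1 = r₀
        · by_cases hi : p.1.2 = i₀
          · have hpq : p = q := by
              apply Subtype.ext
              exact Sigma.ext hr (heq_of_eq hi)
            rw [hz p (Or.inr (le_of_eq hi)), if_pos (by simp [hr, hi]), if_pos hpq]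
            ring
          · have hpq : p ≠ q := by
              intro h; exact hi (by rw [h])
            rw [if_neg hpq]
            by_cases hle : p.1.2 ≤ i₀
            · rw [hz p (Or.inr hle), if_neg (by simp; omega)]
              ring
            · have : c p = 0 := ih p (by rw [hr]; omega)
              rw [this]; ring
        · have hpq : p ≠ q := by
            intro h; exact hr (by rw [h])
          rw [hz p (Or.inl hr), if_neg (by simp [hr]), if_neg hpq]
          ring
      rw [Finset.sum_congr rfl key, Finset.sum_ite_eq' Finset.univ q c] at h0
      simpa using h0
  -- conclude with a dimension count
  have hcard : Fintype.card T = ∑ r ∈ Finset.Icc 1 f, (m r - K) := by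
    simp [T, Fintype.card_coe, Finset.card_sigma]
  have hspan : Submodule.span k (Set.range w) ≤ LinearMap.range (Np ^ K) := by
    rw [Submodule.span_le]
    rintro v ⟨p, rfl⟩
    exact ⟨_, rfl⟩
  calc ∑ r ∈ Finset.Icc 1 f, (m r - K) = Fintype.card T := hcard.symm
    _ = Module.finrank k (Submodule.span k (Set.range w)) := (finrank_span_eq_card hw).symm
    _ ≤ Module.finrank k (LinearMap.range (Np ^ K)) := Submodule.finrank_mono hspan
end

section
/- Let p_* = (p_1 ≥ p_2 ≥ … ≥ p_σ) ∈ 𝒫_n and let ψ be the associated function. Then: ψ(1) = 1; ψ(2a) + ψ(2a+1) = 0 whenever 1 ≤ 2a < 2a+1 ≤ σ; for every odd h ∈ [1,σ], Σ_{r=1}^{h} ψ(r) = 1; for every even h ∈ [1,σ], Σ_{r=1}^{h} ψ(r) = 1 + ψ(h); and Σ_{t=1}^{σ} ψ(t) = κ_σ. -/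
/-- `p` represents a sequence `p_1 ≥ p_2 ≥ … ≥ p_σ` of integers `≥ 1` with sum `n`
(only the values `p t` for `t ∈ [1,σ]` matter). -/
def IsPartitionOf (n σ : ℕ) (p : ℕ → ℕ) : Prop :=
  1 ≤ σ ∧ (∀ t ∈ Finset.Icc 1 σ, 1 ≤ p t) ∧
    (∀ i j, 1 ≤ i → i ≤ j → j ≤ σ → p j ≤ p i) ∧ (∑ t ∈ Finset.Icc 1 σ, p t) = n

/-- The function ψ : [1,σ] → {−1,0,1} associated to a partition `p_* ∈ 𝒫_n`:
`ψ(t) = 1` if `t` is odd and `p_t < p_x` for all `x ∈ [1,t−1]`;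
`ψ(t) = −1` if `t` is even and `p_x < p_t` for all `x ∈ [t+1,σ]`;
`ψ(t) = 0` otherwise. -/
def psiFun (σ : ℕ) (p : ℕ → ℕ) (t : ℕ) : ℤ :=
  if Odd t ∧ ∀ x ∈ Finset.Ico 1 t, p t < p x then 1
  else if Even t ∧ ∀ x ∈ Finset.Icc (t + 1) σ, p x < p t then -1
  else 0

/-- basic properties of ψ. -/
theorem stmt_3 (n σ : ℕ) (p : ℕ → ℕ) (hp : IsPartitionOf n σ p) :
    psiFun σ p 1 = 1 ∧
    (∀ a : ℕ, 1 ≤ 2 * a → 2 * a + 1 ≤ σ →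
      psiFun σ p (2 * a) + psiFun σ p (2 * a + 1) = 0) ∧
    (∀ h ∈ Finset.Icc 1 σ, Odd h → ∑ r ∈ Finset.Icc 1 h, psiFun σ p r = 1) ∧
    (∀ h ∈ Finset.Icc 1 σ, Even h →
      ∑ r ∈ Finset.Icc 1 h, psiFun σ p r = 1 + psiFun σ p h) ∧
    (∑ t ∈ Finset.Icc 1 σ, psiFun σ p t) = ((σ % 2 : ℕ) : ℤ) := by
  obtain ⟨hσ, hpos, hmono, hsum⟩ := hp
  have psi1 : psiFun σ p 1 = 1 := by simp [psiFun]
  have pair : ∀ a : ℕ, 1 ≤ a → 2 * a + 1 ≤ σ →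
      psiFun σ p (2 * a) + psiFun σ p (2 * a + 1) = 0 := by
    intro a ha haσ
    have hA : (∀ x ∈ Finset.Icc (2*a + 1) σ, p x < p (2*a)) ↔ p (2*a+1) < p (2*a) := by
      constructor
      · intro h; exact h (2*a+1) (Finset.mem_Icc.mpr ⟨le_refl _, haσ⟩)
      · intro h x hx
        rw [Finset.mem_Icc] at hx
        exact lt_of_le_of_lt (hmono (2*a+1) x (by omega) hx.1 hx.2) h
    have hB : (∀ x ∈ Finset.Ico 1 (2*a+1), p (2*a+1) < p x) ↔ p (2*a+1) < p (2*a) := by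
      constructor
      · intro h; exact h (2*a) (Finset.mem_Ico.mpr ⟨by omega, by omega⟩)
      · intro h x hx
        rw [Finset.mem_Ico] at hx
        exact lt_of_lt_of_le h (hmono x (2*a) hx.1 (by omega) (by omega))
    have heven : Even (2*a) := even_two_mul a
    have hnotodd : ¬ Odd (2*a) := Nat.not_odd_iff_even.mpr heven
    have hodd : Odd (2*a+1) := ⟨a, by ring⟩
    have hnoteven : ¬ Even (2*a+1) := Nat.not_even_iff_odd.mpr hodd
    unfold psiFun
    by_cases hlt : p (2*a+1) < p (2*a)
    · rw [if_neg (fun h => hnotodd h.1), if_pos ⟨heven, hA.mpr hlt⟩,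
          if_pos ⟨hodd, hB.mpr hlt⟩]
      ring
    · rw [if_neg (fun h => hnotodd h.1), if_neg (fun h => hlt (hA.mp h.2)),
          if_neg (fun h => hlt (hB.mp h.2)), if_neg (fun h => hnoteven h.1)]
      ring
  have oddsum : ∀ a : ℕ, 2*a+1 ≤ σ → ∑ r ∈ Finset.Icc 1 (2*a+1), psiFun σ p r = 1 := by
    intro a
    induction a with
    | zero => intro _; simpa using psi1
    | succ b ih =>
      intro hle
      have h1 : 2*(b+1)+1 = (2*b+1) + 1 + 1 := by ring
      rw [h1, Finset.sum_Icc_succ_top (by omega), Finset.sum_Icc_succ_top (by omega),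
          ih (by omega)]
      have hpair := pair (b+1) (by omega) (by omega)
      rw [show 2*b+1+1 = 2*(b+1) from by ring]
      linarith
  have evensum : ∀ h, 1 ≤ h → h ≤ σ → Even h →
      ∑ r ∈ Finset.Icc 1 h, psiFun σ p r = 1 + psiFun σ p h := by
    intro h h1 h2 hh
    obtain ⟨a, ha⟩ := hh
    have ha2 : h = 2*a := by omega
    have ha1 : 1 ≤ a := by omega
    have e : h = (2*(a-1)+1) + 1 := by omega
    rw [e, Finset.sum_Icc_succ_top (by omega), oddsum (a-1) (by omega)]
  refine ⟨psi1, fun a ha => pair a (by omega), ?_, ?_, ?_⟩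
  · intro h hmem hodd
    rw [Finset.mem_Icc] at hmem
    obtain ⟨a, ha⟩ := hodd
    subst ha
    exact oddsum a hmem.2
  · intro h hmem hh
    rw [Finset.mem_Icc] at hmem
    exact evensum h hmem.1 hmem.2 hh
  · rcases Nat.even_or_odd σ with he | ho
    · have := evensum σ hσ (le_refl σ) he
      have hpsiσ : psiFun σ p σ = -1 := by
        rw [psiFun, if_neg (fun h => (Nat.not_odd_iff_even.mpr he) h.1),
            if_pos ⟨he, fun x hx => absurd hx (by simp)⟩]
      rw [this, hpsiσ, Nat.even_iff.mp he]
      ring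
    · obtain ⟨a, ha⟩ := ho
      subst ha
      rw [oddsum a (le_refl _)]
      omega
end

section
/- Let p_* = (p_1 ≥ p_2 ≥ … ≥ p_σ) ∈ 𝒫_n with associated function ψ, let κ ∈ {0,1}, and assume that if κ = 0 then σ is even. Set q_r = 2p_r for r ∈ [1,σ] and q_{σ+1} = κ; set ψ(σ+1) = −1 if κ = 1 and σ is odd, and ψ(σ+1) = 0 otherwise; and set π_r = q_r + ψ(r) for r ∈ [1, σ+1]. For k ≥ 0 define Λ_k = Σ_{r=1}^{σ+1} max(q_r − k, 0), define Λ'_k = Λ_k + 1 if k > 0 and there exists an odd d ∈ [1,σ] with q_{d+1} ≤ k ≤ q_d, and Λ'_k = Λ_k otherwise, and define Λ''_k = Σ_{r=1}^{σ+1} max(π_r − k, 0). Then Λ''_k = Λ'_k for every k ≥ 0. -/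
/-- `q_r = 2 p_r` for `r ∈ [1,σ]`, and `q_{σ+1} = κ`. -/
def qSeq (κ σ : ℕ) (p : ℕ → ℕ) (r : ℕ) : ℕ :=
  if r = σ + 1 then κ else 2 * p r

/-- ψ extended to `σ+1`: `ψ(σ+1) = −1` if `κ = 1` and `σ` is odd, `ψ(σ+1) = 0` otherwise. -/
def psiExt (κ σ : ℕ) (p : ℕ → ℕ) (r : ℕ) : ℤ :=
  if r = σ + 1 then (if κ = 1 ∧ Odd σ then -1 else 0) else psiFun σ p r

open scoped Classical

/- ### Auxiliary definitions and lemmas -/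

def Acond (p : ℕ → ℕ) (t : ℕ) : Prop := Odd t ∧ (t = 1 ∨ p t < p (t - 1))

def Bcond (σ : ℕ) (p : ℕ → ℕ) (t : ℕ) : Prop := Even t ∧ (t = σ ∨ p (t + 1) < p t)

noncomputable def cntA (p : ℕ → ℕ) (j : ℕ) : ℤ :=
  ∑ t ∈ Finset.Icc 1 j, (if Acond p t then (1:ℤ) else 0)

noncomputable def cntB (σ : ℕ) (p : ℕ → ℕ) (j : ℕ) : ℤ :=
  ∑ t ∈ Finset.Icc 1 j, (if Bcond σ p t then (1:ℤ) else 0)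

lemma not_A_and_B (σ : ℕ) (p : ℕ → ℕ) (t : ℕ) : ¬ (Acond p t ∧ Bcond σ p t) := by
  rintro ⟨⟨h1, -⟩, ⟨h2, -⟩⟩
  exact (Nat.not_odd_iff_even.mpr h2) h1

lemma Acond_succ_iff (σ : ℕ) (p : ℕ → ℕ) (t : ℕ) (ht1 : 1 ≤ t) (ht2 : t + 1 ≤ σ) :
    Acond p (t + 1) ↔ Bcond σ p t := by
  unfold Acond Bcond
  have h1 : t + 1 ≠ 1 := by omega
  have h2 : t ≠ σ := by omega
  have h3 : t + 1 - 1 = t := by omega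
  rw [Nat.odd_add_one, Nat.not_odd_iff_even, h3]
  constructor
  · rintro ⟨he, h⟩; exact ⟨he, Or.inr (h.resolve_left h1)⟩
  · rintro ⟨he, h⟩; exact ⟨he, Or.inr (h.resolve_left h2)⟩

lemma cntA_succ (p : ℕ → ℕ) (j : ℕ) :
    cntA p (j + 1) = cntA p j + (if Acond p (j + 1) then 1 else 0) :=
  Finset.sum_Icc_succ_top (by omega) _

lemma cntB_succ (σ : ℕ) (p : ℕ → ℕ) (j : ℕ) :
    cntB σ p (j + 1) = cntB σ p j + (if Bcond σ p (j + 1) then 1 else 0) :=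
  Finset.sum_Icc_succ_top (by omega) _

lemma cntA_zero (p : ℕ → ℕ) : cntA p 0 = 0 := by
  rw [cntA, Finset.Icc_eq_empty (by omega), Finset.sum_empty]

lemma cntB_zero (σ : ℕ) (p : ℕ → ℕ) : cntB σ p 0 = 0 := by
  rw [cntB, Finset.Icc_eq_empty (by omega), Finset.sum_empty]

lemma cnt_key (σ : ℕ) (p : ℕ → ℕ) :
    ∀ j, 1 ≤ j → j ≤ σ → cntA p j = cntB σ p (j - 1) + 1 := by
  intro j hj1
  induction j, hj1 using Nat.le_induction with
  | base =>
    intro _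
    have hA1 : Acond p 1 := ⟨odd_one, Or.inl rfl⟩
    have : cntA p 1 = 1 := by
      rw [cntA, show Finset.Icc 1 1 = {1} from Finset.Icc_self 1, Finset.sum_singleton,
        if_pos hA1]
    rw [this, show (1:ℕ) - 1 = 0 from rfl, cntB_zero]; ring
  | succ j hj ih =>
    intro hσ
    have h1 := ih (by omega)
    rw [cntA_succ, h1, show j + 1 - 1 = (j - 1) + 1 from by omega, cntB_succ]
    have h2 : Acond p (j + 1) ↔ Bcond σ p ((j - 1) + 1) := by
      rw [show (j - 1) + 1 = j from by omega]
      exact Acond_succ_iff σ p j hj hσ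
    rw [if_congr h2 rfl rfl]
    ring

lemma fLemma (σ : ℕ) (p : ℕ → ℕ) (j : ℕ) (hj1 : 1 ≤ j) (hj2 : j ≤ σ) :
    cntA p j - cntB σ p j = 1 - (if Bcond σ p j then 1 else 0) := by
  obtain ⟨m, rfl⟩ : ∃ m, j = m + 1 := ⟨j - 1, by omega⟩
  have h1 := cnt_key σ p (m + 1) (by omega) hj2
  rw [show m + 1 - 1 = m from rfl] at h1
  have h2 := cntB_succ σ p m
  rw [h1, h2]; ring

lemma cntA_const (p : ℕ → ℕ) (c : ℕ) :
    ∀ a b, a < b → (∀ t, a < t → t ≤ b → p t = c) →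
      cntA p b = cntA p a + (if Acond p (a + 1) then 1 else 0) := by
  intro a b hab
  induction b, hab using Nat.le_induction with
  | base => intro _; exact cntA_succ p a
  | succ b hb ih =>
    intro hconst
    have h1 := ih (fun t ht1 ht2 => hconst t ht1 (by omega))
    rw [cntA_succ, h1]
    have hnot : ¬ Acond p (b + 1) := by
      rintro ⟨-, h⟩
      rcases h with h | h
      · omega
      · rw [show b + 1 - 1 = b from rfl] at h
        rw [hconst (b+1) (by omega) le_rfl, hconst b (by omega) (by omega)] at h
        omega
    rw [if_neg hnot]; ring

lemma sum_ind_eq (σ J : ℕ) (hJ : J ≤ σ) (Q R : ℕ → Prop)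
    [DecidablePred Q] [DecidablePred R]
    (hiff : ∀ r, 1 ≤ r → r ≤ σ → (R r ↔ r ≤ J)) :
    (∑ r ∈ Finset.Icc 1 σ, if Q r ∧ R r then (1:ℤ) else 0)
      = ∑ r ∈ Finset.Icc 1 J, if Q r then (1:ℤ) else 0 := by
  rw [← Finset.sum_subset (Finset.Icc_subset_Icc_right hJ)
    (fun x hx hnx => ?_)]
  · refine Finset.sum_congr rfl (fun r hr => ?_)
    rw [Finset.mem_Icc] at hr
    exact if_congr (by rw [hiff r hr.1 (le_trans hr.2 hJ)]; simp [hr.2]) rfl rfl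
  · rw [Finset.mem_Icc] at hx hnx
    rw [if_neg]
    rintro ⟨-, hR⟩
    rw [hiff x hx.1 hx.2] at hR
    omega

lemma max_split (q k : ℕ) (a b : Prop) [Decidable a] [Decidable b] (hab : ¬(a ∧ b)) :
    max ((q:ℤ) + ((if a then 1 else 0) - (if b then 1 else 0)) - (k:ℤ)) 0
      = max ((q:ℤ) - (k:ℤ)) 0
        + ((if a ∧ k ≤ q then (1:ℤ) else 0) - (if b ∧ k + 1 ≤ q then (1:ℤ) else 0)) := by
  by_cases ha : a <;> by_cases hb : b
  · exact absurd ⟨ha, hb⟩ hab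
  all_goals simp only [ha, hb, if_true, if_false, true_and, false_and,
    ite_true, ite_false] <;> first
    | (split_ifs <;> omega)
    | omega

noncomputable def Jfun (p : ℕ → ℕ) (σ m : ℕ) : ℕ := Nat.findGreatest (fun r => m ≤ 2 * p r) σ

lemma Jfun_le (p : ℕ → ℕ) (σ m : ℕ) : Jfun p σ m ≤ σ := Nat.findGreatest_le σ

lemma Jfun_spec (p : ℕ → ℕ) (σ m : ℕ) (h : Jfun p σ m ≠ 0) : m ≤ 2 * p (Jfun p σ m) :=
  (Nat.findGreatest_eq_iff.mp rfl).2.1 h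

lemma Jfun_great (p : ℕ → ℕ) (σ m t : ℕ) (h1 : Jfun p σ m < t) (h2 : t ≤ σ) :
    ¬ (m ≤ 2 * p t) := by
  unfold Jfun at h1
  exact Nat.findGreatest_is_greatest (P := fun r => m ≤ 2 * p r) (n := σ) h1 h2

lemma Jfun_ge (p : ℕ → ℕ) (σ m r : ℕ) (h2 : r ≤ σ) (h : m ≤ 2 * p r) :
    r ≤ Jfun p σ m := Nat.le_findGreatest h2 h

lemma Jfun_mono (p : ℕ → ℕ) (σ : ℕ) {m m' : ℕ} (h : m ≤ m') :
    Jfun p σ m' ≤ Jfun p σ m :=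
  Nat.findGreatest_mono (fun r hr => le_trans h hr) le_rfl

lemma psiFun_eq (σ : ℕ) (p : ℕ → ℕ)
    (hmono : ∀ i j, 1 ≤ i → i ≤ j → j ≤ σ → p j ≤ p i)
    (t : ℕ) (ht1 : 1 ≤ t) (ht2 : t ≤ σ) :
    psiFun σ p t = (if Acond p t then 1 else 0) - (if Bcond σ p t then 1 else 0) := by
  have hA : (Odd t ∧ ∀ x ∈ Finset.Ico 1 t, p t < p x) ↔ Acond p t := by
    unfold Acond
    constructor
    · rintro ⟨ho, h⟩
      refine ⟨ho, ?_⟩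
      rcases eq_or_lt_of_le ht1 with h1 | h1
      · exact Or.inl h1.symm
      · exact Or.inr (h (t - 1) (Finset.mem_Ico.mpr ⟨by omega, by omega⟩))
    · rintro ⟨ho, h⟩
      refine ⟨ho, fun x hx => ?_⟩
      rw [Finset.mem_Ico] at hx
      rcases h with h | h
      · omega
      · calc p t < p (t - 1) := h
          _ ≤ p x := hmono x (t - 1) hx.1 (by omega) (by omega)
  have hB : (Even t ∧ ∀ x ∈ Finset.Icc (t + 1) σ, p x < p t) ↔ Bcond σ p t := by
    unfold Bcond
    constructor
    · rintro ⟨he, h⟩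
      refine ⟨he, ?_⟩
      rcases eq_or_lt_of_le ht2 with h1 | h1
      · exact Or.inl h1
      · exact Or.inr (h (t + 1) (Finset.mem_Icc.mpr ⟨le_rfl, by omega⟩))
    · rintro ⟨he, h⟩
      refine ⟨he, fun x hx => ?_⟩
      rw [Finset.mem_Icc] at hx
      rcases h with h | h
      · omega
      · calc p x ≤ p (t + 1) := hmono (t + 1) x (by omega) hx.1 hx.2
          _ < p t := h
  rw [psiFun]
  by_cases h1 : Acond p t
  · rw [if_pos (hA.mpr h1), if_pos h1, if_neg (fun hb => not_A_and_B σ p t ⟨h1, hb⟩)]; ring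
  · rw [if_neg (fun hh => h1 (hA.mp hh)), if_neg h1]
    by_cases h2 : Bcond σ p t
    · rw [if_pos (hB.mpr h2), if_pos h2]; ring
    · rw [if_neg (fun hh => h2 (hB.mp hh)), if_neg h2]; ring

theorem stmt_4 (n σ : ℕ) (p : ℕ → ℕ) (hp : IsPartitionOf n σ p)
    (κ : ℕ) (hκ : κ ≤ 1) (hκσ : κ = 0 → Even σ) :
    ∀ k : ℕ,
      (∑ r ∈ Finset.Icc 1 (σ + 1), max ((qSeq κ σ p r : ℤ) + psiExt κ σ p r - (k : ℤ)) 0)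
        = (∑ r ∈ Finset.Icc 1 (σ + 1), max ((qSeq κ σ p r : ℤ) - (k : ℤ)) 0)
          + (if 0 < k ∧ ∃ d ∈ Finset.Icc 1 σ, Odd d ∧ qSeq κ σ p (d + 1) ≤ k ∧ k ≤ qSeq κ σ p d
             then 1 else 0) := by
  obtain ⟨hσ, hge1, hmono, -⟩ := hp
  intro k
  have hJle : ∀ m, Jfun p σ m ≤ σ := fun m => Jfun_le p σ m
  have hpref : ∀ m r, 1 ≤ r → r ≤ σ → (m ≤ 2 * p r ↔ r ≤ Jfun p σ m) := by
    intro m r hr1 hr2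
    constructor
    · exact fun h => Jfun_ge p σ m r hr2 h
    · intro h
      have hs : m ≤ 2 * p (Jfun p σ m) := Jfun_spec p σ m (by omega)
      have := hmono r (Jfun p σ m) hr1 h (hJle m)
      omega
  have hmonoJ : Jfun p σ (k + 1) ≤ Jfun p σ k := Jfun_mono p σ (by omega)
  have hgreat : ∀ m t, Jfun p σ m < t → t ≤ σ → ¬ (m ≤ 2 * p t) :=
    fun m t h1 h2 => Jfun_great p σ m t h1 h2
  rw [Finset.sum_Icc_succ_top (by omega : 1 ≤ σ + 1),
    Finset.sum_Icc_succ_top (by omega : 1 ≤ σ + 1)]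
  have key : ∀ r ∈ Finset.Icc 1 σ,
      max ((qSeq κ σ p r : ℤ) + psiExt κ σ p r - (k : ℤ)) 0
        = max ((qSeq κ σ p r : ℤ) - (k : ℤ)) 0
          + ((if Acond p r ∧ k ≤ 2 * p r then (1:ℤ) else 0)
              - (if Bcond σ p r ∧ k + 1 ≤ 2 * p r then (1:ℤ) else 0)) := by
    intro r hr
    rw [Finset.mem_Icc] at hr
    have hq : qSeq κ σ p r = 2 * p r := by rw [qSeq, if_neg (by omega)]
    have hψ : psiExt κ σ p r
        = (if Acond p r then 1 else 0) - (if Bcond σ p r then 1 else 0) := by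
      rw [psiExt, if_neg (by omega)]
      exact psiFun_eq σ p hmono r hr.1 hr.2
    rw [hq, hψ]
    exact max_split (2 * p r) k _ _ (not_A_and_B σ p r)
  rw [Finset.sum_congr rfl key, Finset.sum_add_distrib, Finset.sum_sub_distrib]
  have hAsum : (∑ r ∈ Finset.Icc 1 σ, if Acond p r ∧ k ≤ 2 * p r then (1:ℤ) else 0)
      = cntA p (Jfun p σ k) := by
    rw [cntA]
    exact sum_ind_eq σ (Jfun p σ k) (hJle k) (Acond p) (fun r => k ≤ 2 * p r) (hpref k)
  have hBsum : (∑ r ∈ Finset.Icc 1 σ, if Bcond σ p r ∧ k + 1 ≤ 2 * p r then (1:ℤ) else 0)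
      = cntB σ p (Jfun p σ (k + 1)) := by
    rw [cntB]
    exact sum_ind_eq σ (Jfun p σ (k + 1)) (hJle (k + 1)) (Bcond σ p)
      (fun r => k + 1 ≤ 2 * p r) (hpref (k + 1))
  rw [hAsum, hBsum]
  have hqlast : qSeq κ σ p (σ + 1) = κ := by rw [qSeq, if_pos rfl]
  have hψlast : psiExt κ σ p (σ + 1) = (if κ = 1 ∧ Odd σ then -1 else 0) := by
    rw [psiExt, if_pos rfl]
  rw [hqlast, hψlast]
  have hlast : max ((κ:ℤ) + (if κ = 1 ∧ Odd σ then (-1:ℤ) else 0) - (k:ℤ)) 0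
      = max ((κ:ℤ) - (k:ℤ)) 0 + (if κ = 1 ∧ Odd σ ∧ k = 0 then (-1:ℤ) else 0) := by
    by_cases h : κ = 1 ∧ Odd σ
    · rw [if_pos h]
      by_cases hk : k = 0
      · rw [if_pos (show κ = 1 ∧ Odd σ ∧ k = 0 from ⟨h.1, h.2, hk⟩), h.1, hk]
        omega
      · rw [if_neg (show ¬(κ = 1 ∧ Odd σ ∧ k = 0) from fun hh => hk hh.2.2)]
        have hκ1 : κ = 1 := h.1
        subst hκ1
        omega
    · rw [if_neg h, if_neg (fun hh => h ⟨hh.1, hh.2.1⟩)]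
      omega
  rw [hlast]
  have core : cntA p (Jfun p σ k) - cntB σ p (Jfun p σ (k + 1))
        + (if κ = 1 ∧ Odd σ ∧ k = 0 then (-1:ℤ) else 0)
      = (if 0 < k ∧ ∃ d ∈ Finset.Icc 1 σ, Odd d ∧ qSeq κ σ p (d + 1) ≤ k ∧ k ≤ qSeq κ σ p d
          then 1 else 0) := by
    rcases Nat.eq_zero_or_pos k with hk0 | hkpos
    · subst hk0
      have hJkσ : Jfun p σ 0 = σ :=
        le_antisymm (hJle 0) (Jfun_ge p σ 0 σ le_rfl (by omega))
      have hJ1σ : Jfun p σ (0 + 1) = σ := by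
        refine le_antisymm (hJle (0 + 1)) (Jfun_ge p σ (0 + 1) σ le_rfl ?_)
        have := hge1 σ (Finset.mem_Icc.mpr ⟨hσ, le_rfl⟩)
        omega
      rw [hJkσ, hJ1σ]
      have hno : ¬(0 < 0 ∧ ∃ d ∈ Finset.Icc 1 σ,
          Odd d ∧ qSeq κ σ p (d + 1) ≤ 0 ∧ 0 ≤ qSeq κ σ p d) :=
        fun h => absurd h.1 (lt_irrefl 0)
      rw [if_neg hno]
      have hf := fLemma σ p σ hσ le_rfl
      by_cases he : Even σ
      · rw [if_neg (show ¬(κ = 1 ∧ Odd σ ∧ 0 = 0) from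
          fun h => (Nat.not_odd_iff_even.mpr he) h.2.1)]
        rw [if_pos (show Bcond σ p σ from ⟨he, Or.inl rfl⟩)] at hf
        linarith
      · have hodd : Odd σ := Nat.not_even_iff_odd.mp he
        have hκ1 : κ = 1 := by
          have : κ ≠ 0 := fun h => he (hκσ h)
          omega
        rw [if_pos (show κ = 1 ∧ Odd σ ∧ 0 = 0 from ⟨hκ1, hodd, rfl⟩)]
        rw [if_neg (show ¬ Bcond σ p σ from
          fun h => (Nat.not_odd_iff_even.mpr h.1) hodd)] at hf
        linarith
    · rw [if_neg (show ¬(κ = 1 ∧ Odd σ ∧ k = 0) from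
        fun h => absurd h.2.2 (by omega))]
      have hEiff : (0 < k ∧ ∃ d ∈ Finset.Icc 1 σ,
            Odd d ∧ qSeq κ σ p (d + 1) ≤ k ∧ k ≤ qSeq κ σ p d)
          ↔ ∃ d, Odd d ∧ 1 ≤ d ∧ Jfun p σ (k + 1) ≤ d ∧ d ≤ Jfun p σ k := by
        constructor
        · rintro ⟨-, d, hd, hodd, h1, h2⟩
          rw [Finset.mem_Icc] at hd
          rw [qSeq, if_neg (by omega)] at h2
          have hdj : d ≤ Jfun p σ k := (hpref k d hd.1 hd.2).mp h2
          refine ⟨d, hodd, hd.1, ?_, hdj⟩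
          rcases eq_or_lt_of_le hd.2 with hds | hds
          · have := hJle (k + 1); omega
          · rw [qSeq, if_neg (by omega)] at h1
            by_contra hcon
            push_neg at hcon
            have := (hpref (k + 1) (d + 1) (by omega) (by omega)).mpr (by omega)
            omega
        · rintro ⟨d, hodd, h1, h2, h3⟩
          have hdσ : d ≤ σ := le_trans h3 (hJle k)
          refine ⟨hkpos, d, Finset.mem_Icc.mpr ⟨h1, hdσ⟩, hodd, ?_, ?_⟩
          · rcases eq_or_lt_of_le hdσ with hds | hds
            · rw [qSeq, if_pos (by omega)]; omega
            · rw [qSeq, if_neg (by omega)]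
              by_contra hcon
              push_neg at hcon
              have := (hpref (k + 1) (d + 1) (by omega) (by omega)).mp (by omega)
              omega
          · rw [qSeq, if_neg (by omega)]
            exact (hpref k d h1 hdσ).mpr h3
      rcases Nat.eq_zero_or_pos (Jfun p σ k) with hj0 | hjpos
      · have hj'0 : Jfun p σ (k + 1) = 0 := by omega
        rw [hj0, hj'0, cntA_zero, cntB_zero]
        rw [if_neg (fun h => by obtain ⟨d, -, h1, -, h3⟩ := hEiff.mp h; omega)]
        ring
      · rcases eq_or_lt_of_le hmonoJ with heq | hlt
        · rw [heq]
          have hf := fLemma σ p (Jfun p σ k) hjpos (hJle k)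
          by_cases hodd : Odd (Jfun p σ k)
          · rw [if_pos (hEiff.mpr ⟨Jfun p σ k, hodd, hjpos, heq.le, le_rfl⟩)]
            rw [if_neg (show ¬ Bcond σ p (Jfun p σ k) from
              fun h => (Nat.not_odd_iff_even.mpr h.1) hodd)] at hf
            linarith
          · rw [if_neg (fun h => by
                obtain ⟨d, ho, h1, h2, h3⟩ := hEiff.mp h
                have hdk : d = Jfun p σ k := le_antisymm h3 (by omega)
                exact hodd (hdk ▸ ho))]
            have hBj : Bcond σ p (Jfun p σ k) := by
              refine ⟨Nat.not_odd_iff_even.mp hodd, ?_⟩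
              rcases eq_or_lt_of_le (hJle k) with hds | hds
              · exact Or.inl hds
              · refine Or.inr ?_
                have hgt := hgreat k (Jfun p σ k + 1) (by omega) (by omega)
                have hle : k ≤ 2 * p (Jfun p σ k) := (hpref k (Jfun p σ k) hjpos (hJle k)).mpr le_rfl
                omega
            rw [if_pos hBj] at hf
            linarith
        · have hval : ∀ t, Jfun p σ (k + 1) < t → t ≤ Jfun p σ k → 2 * p t = k := by
            intro t h1 h2
            have hub := hgreat (k + 1) t h1 (le_trans h2 (hJle k))
            have hlb : k ≤ 2 * p t :=
              (hpref k t (by omega) (le_trans h2 (hJle k))).mpr h2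
            omega
          have hconst : ∀ t, Jfun p σ (k + 1) < t → t ≤ Jfun p σ k → p t = p (Jfun p σ (k + 1) + 1) := by
            intro t h1 h2
            have e1 := hval t h1 h2
            have e2 := hval (Jfun p σ (k + 1) + 1) (by omega) (by omega)
            omega
          have hcA := cntA_const p (p (Jfun p σ (k + 1) + 1)) (Jfun p σ (k + 1)) (Jfun p σ k) hlt hconst
          have hE : ∃ d, Odd d ∧ 1 ≤ d ∧ Jfun p σ (k + 1) ≤ d ∧ d ≤ Jfun p σ k := by
            rcases Nat.even_or_odd (Jfun p σ (k + 1) + 1) with he | ho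
            · have ho' : Odd (Jfun p σ (k + 1)) :=
                Nat.not_even_iff_odd.mp (Nat.even_add_one.mp he)
              obtain ⟨m, hm⟩ := ho'
              exact ⟨Jfun p σ (k + 1), ⟨m, hm⟩, by omega, le_rfl, by omega⟩
            · exact ⟨Jfun p σ (k + 1) + 1, ho, by omega, by omega, by omega⟩
          rw [if_pos (hEiff.mpr hE), hcA]
          rcases Nat.eq_zero_or_pos (Jfun p σ (k + 1)) with h0 | hpos'
          · have hA01 : Acond p (0 + 1) := ⟨odd_one, Or.inl rfl⟩
            rw [h0, cntB_zero, cntA_zero, if_pos hA01]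
            ring
          · have hf := fLemma σ p (Jfun p σ (k + 1)) hpos' (hJle (k + 1))
            have hiff : Acond p (Jfun p σ (k + 1) + 1) ↔ Bcond σ p (Jfun p σ (k + 1)) :=
              Acond_succ_iff σ p (Jfun p σ (k + 1)) hpos' (by have := hJle k; omega)
            rw [if_congr hiff rfl rfl]
            linarith
  linarith
end

section
/- Let p_* = (p_1 ≥ p_2 ≥ … ≥ p_σ) ∈ 𝒫_n with associated function ψ. Then the sequence (2p_1 + ψ(1), 2p_2 + ψ(2), …, 2p_σ + ψ(σ)) is nonincreasing, every term of it is ≥ 1, and its sum equals 2n + κ_σ. -/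
lemma psi_bounds (σ : ℕ) (p : ℕ → ℕ) (t : ℕ) :
    -1 ≤ psiFun σ p t ∧ psiFun σ p t ≤ 1 := by
  unfold psiFun; split_ifs <;> norm_num

lemma telescope (F : ℕ → ℤ) (σ : ℕ) :
    ∑ t ∈ Finset.Icc 1 σ, (F t - F (t + 1)) = F 1 - F (σ + 1) := by
  induction σ with
  | zero => simp
  | succ k ih => rw [Finset.sum_Icc_succ_top (by omega), ih]; ring

/-- the sequence `(2p_1 + ψ(1), …, 2p_σ + ψ(σ))` is nonincreasing,
every term is `≥ 1`, and its sum equals `2n + κ_σ`. -/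
theorem stmt_5 (n σ : ℕ) (p : ℕ → ℕ) (hp : IsPartitionOf n σ p) :
    (∀ i, 1 ≤ i → i + 1 ≤ σ →
      2 * (p (i + 1) : ℤ) + psiFun σ p (i + 1) ≤ 2 * (p i : ℤ) + psiFun σ p i) ∧
    (∀ i ∈ Finset.Icc 1 σ, 1 ≤ 2 * (p i : ℤ) + psiFun σ p i) ∧
    (∑ i ∈ Finset.Icc 1 σ, (2 * (p i : ℤ) + psiFun σ p i)) = 2 * (n : ℤ) + ((σ % 2 : ℕ) : ℤ) := by
  obtain ⟨hσ, hpos, hmono, hsum⟩ := hp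
  refine ⟨?_, ?_, ?_⟩
  · -- monotonicity
    intro i hi1 hiσ
    have hle : p (i + 1) ≤ p i := hmono i (i + 1) hi1 (by omega) hiσ
    rcases lt_or_eq_of_le hle with hlt | heq
    · have h1 := psi_bounds σ p i
      have h2 := psi_bounds σ p (i + 1)
      have : (p (i + 1) : ℤ) + 1 ≤ (p i : ℤ) := by exact_mod_cast hlt
      linarith [h1.1, h2.2]
    · have h1 : psiFun σ p (i + 1) ≤ 0 := by
        unfold psiFun
        split_ifs with hA hB
        · exact absurd (hA.2 i (by simp [Finset.mem_Ico]; omega)) (by omega)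
        · norm_num
        · norm_num
      have h2 : 0 ≤ psiFun σ p i := by
        unfold psiFun
        split_ifs with hA hB
        · norm_num
        · exact absurd (hB.2 (i + 1) (by simp [Finset.mem_Icc]; omega)) (by omega)
        · norm_num
      have : (p (i + 1) : ℤ) = (p i : ℤ) := by exact_mod_cast heq
      linarith
  · -- positivity
    intro i hi
    have h1 := hpos i hi
    have h2 := psi_bounds σ p i
    have : (1 : ℤ) ≤ (p i : ℤ) := by exact_mod_cast h1
    linarith [h2.1]
  · -- sum
    set F : ℕ → ℤ := fun t =>
      if Odd t ∧ (t = 1 ∨ t = σ + 1 ∨ p t < p (t - 1)) then 1 else 0 with hF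
    have hpsi : ∀ t, 1 ≤ t → t ≤ σ → psiFun σ p t = F t - F (t + 1) := by
      intro t ht1 htσ
      have hA : (Odd t ∧ ∀ x ∈ Finset.Ico 1 t, p t < p x) ↔
          (Odd t ∧ (t = 1 ∨ t = σ + 1 ∨ p t < p (t - 1))) := by
        constructor
        · rintro ⟨ho, h⟩
          refine ⟨ho, ?_⟩
          rcases eq_or_lt_of_le ht1 with h1 | h1
          · exact Or.inl h1.symm
          · exact Or.inr (Or.inr (h (t - 1) (by simp [Finset.mem_Ico]; omega)))
        · rintro ⟨ho, h1 | h1 | h1⟩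
          · subst h1; exact ⟨ho, by simp⟩
          · omega
          · refine ⟨ho, fun x hx => ?_⟩
            simp only [Finset.mem_Ico] at hx
            exact lt_of_lt_of_le h1 (hmono x (t - 1) hx.1 (by omega) (by omega))
      have hB : (Even t ∧ ∀ x ∈ Finset.Icc (t + 1) σ, p x < p t) ↔
          (Odd (t + 1) ∧ (t + 1 = 1 ∨ t + 1 = σ + 1 ∨ p (t + 1) < p (t + 1 - 1))) := by
        rw [Nat.odd_add_one, Nat.not_odd_iff_even]
        constructor
        · rintro ⟨he, h⟩
          refine ⟨he, ?_⟩
          rcases eq_or_lt_of_le htσ with h1 | h1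
          · exact Or.inr (Or.inl (by omega))
          · refine Or.inr (Or.inr ?_)
            simpa using h (t + 1) (by simp [Finset.mem_Icc]; omega)
        · rintro ⟨ho, h1 | h1 | h1⟩
          · exact absurd h1 (by omega)
          · refine ⟨ho, fun x hx => ?_⟩
            simp only [Finset.mem_Icc] at hx
            omega
          · refine ⟨ho, fun x hx => ?_⟩
            simp only [Finset.mem_Icc] at hx
            simp only [Nat.add_sub_cancel] at h1
            exact lt_of_le_of_lt (hmono (t + 1) x (by omega) hx.1 hx.2) h1
      unfold psiFun
      by_cases hA' : Odd t ∧ ∀ x ∈ Finset.Ico 1 t, p t < p x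
      · rw [if_pos hA']
        have hFt : F t = 1 := if_pos (hA.mp hA')
        have hFt1 : F (t + 1) = 0 := by
          apply if_neg
          rintro ⟨ho, -⟩
          exact (Nat.odd_add_one.mp ho) hA'.1
        rw [hFt, hFt1]; ring
      · rw [if_neg hA']
        by_cases hB' : Even t ∧ ∀ x ∈ Finset.Icc (t + 1) σ, p x < p t
        · rw [if_pos hB']
          have hFt : F t = 0 := by
            apply if_neg
            rintro ⟨ho, -⟩
            exact (Nat.not_odd_iff_even.mpr hB'.1) ho
          have hFt1 : F (t + 1) = 1 := if_pos (hB.mp hB')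
          rw [hFt, hFt1]; ring
        · rw [if_neg hB']
          have hFt : F t = 0 := if_neg (fun h => hA' (hA.mpr h))
          have hFt1 : F (t + 1) = 0 := if_neg (fun h => hB' (hB.mpr h))
          rw [hFt, hFt1]; ring
    have hψ : ∑ t ∈ Finset.Icc 1 σ, psiFun σ p t = F 1 - F (σ + 1) := by
      rw [Finset.sum_congr rfl (fun t ht => by
        simp only [Finset.mem_Icc] at ht
        exact hpsi t ht.1 ht.2)]
      exact telescope F σ
    have hsum2 : ∑ t ∈ Finset.Icc 1 σ, (p t : ℤ) = (n : ℤ) := by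
      rw [← Nat.cast_sum, hsum]
    rw [Finset.sum_add_distrib, ← Finset.mul_sum, hsum2, hψ]
    have hF1 : F 1 = 1 := by simp [hF]
    rw [hF1]
    rcases Nat.even_or_odd σ with he | ho
    · have hFσ : F (σ + 1) = 1 := if_pos ⟨Nat.odd_add_one.mpr (Nat.not_odd_iff_even.mpr he), Or.inr (Or.inl rfl)⟩
      rw [hFσ]
      have : σ % 2 = 0 := Nat.even_iff.mp he
      rw [this]; push_cast; ring
    · have hFσ : F (σ + 1) = 0 := by
        apply if_neg
        rintro ⟨h, -⟩
        exact (Nat.odd_add_one.mp h) ho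
      rw [hFσ]
      have : σ % 2 = 1 := Nat.odd_iff.mp ho
      rw [this]; push_cast; ring
end

section
/- Let n ≥ 1 and let p_* = (p_1 ≥ p_2 ≥ … ≥ p_σ) and p'_* = (p'_1 ≥ p'_2 ≥ … ≥ p'_σ) be two elements of 𝒫_n with the same number σ of parts, with associated functions ψ and ψ' respectively. If 2p_i + ψ(i) = 2p'_i + ψ'(i) for every i ∈ [1,σ], then p_i = p'_i for every i ∈ [1,σ]. -/
lemma psi_mem (σ : ℕ) (p : ℕ → ℕ) (t : ℕ) :
    psiFun σ p t = 0 ∨ (psiFun σ p t = 1 ∧ t % 2 = 1) ∨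
      (psiFun σ p t = -1 ∧ t % 2 = 0) := by
  unfold psiFun
  split_ifs with h1 h2
  · exact Or.inr (Or.inl ⟨rfl, Nat.odd_iff.mp h1.1⟩)
  · exact Or.inr (Or.inr ⟨rfl, Nat.even_iff.mp h2.1⟩)
  · exact Or.inl rfl

/-- if two partitions of `n` with the same number `σ` of parts satisfy
`2p_i + ψ(i) = 2p'_i + ψ'(i)` for every `i ∈ [1,σ]`, then `p_i = p'_i` for all `i ∈ [1,σ]`. -/
theorem stmt_6 (n σ : ℕ) (hn : 1 ≤ n) (p p' : ℕ → ℕ)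
    (hp : IsPartitionOf n σ p) (hp' : IsPartitionOf n σ p')
    (heq : ∀ i ∈ Finset.Icc 1 σ,
      2 * (p i : ℤ) + psiFun σ p i = 2 * (p' i : ℤ) + psiFun σ p' i) :
    ∀ i ∈ Finset.Icc 1 σ, p i = p' i := by
  intro i hi
  have h := heq i hi
  rcases psi_mem σ p i with h1 | ⟨h1, h1'⟩ | ⟨h1, h1'⟩ <;>
    rcases psi_mem σ p' i with h2 | ⟨h2, h2'⟩ | ⟨h2, h2'⟩ <;> omega
end

section
/- Let k be a field and V a k-vector space of dimension 2n with a nondegenerate alternating bilinear form (,). Let p_* = (p_1 ≥ … ≥ p_σ) ∈ 𝒫_n, let g be a unipotent isometry of V, N := g − 1, and let v_1, …, v_σ ∈ V satisfy: (g^i v_t, v_r) = 0 for all 1 ≤ t < r ≤ σ and i ∈ [−p_t, p_t − 1]; (v_r, g^i v_r) = 0 for i ∈ [−p_r + 1, p_r − 1]; (v_r, g^{p_r} v_r) = 1; and the vectors g^j v_t (t ∈ [1,σ], j ∈ [−p_t, p_t − 1]) form a basis of V. Let k_0 > 0 be an integer and d ∈ [1,σ] with 2p_d ≥ k_0 ≥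 2p_{d+1} (convention p_{σ+1} = 0), and assume dim N^{k_0}(V) = Σ_{r=1}^{d} (2p_r − k_0). Set W_d = span{g^j v_r : r ∈ [1,d], j ∈ [−p_r, p_r − 1]} and W'_d = span{g^j v_r : r ∈ [d+1,σ], j ∈ [−p_r, p_r − 1]}. Then: gW_d = W_d; gW'_d = W'_d; W'_d = W_d^⊥; N^{k_0} W'_d = 0; dim ker(N restricted to W_d) = d; and dim ker(N^{k_0} restricted to W_d) = k_0 · d (so each of the d Jordan blocks of g on W_d has size ≥ k_0). -/
open Finset Module Submodule

section auxx
variable {k V : Type*} [Field k] [AddCommGroup V] [Module k V]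

private lemma SW_npA (g : V ≃ₗ[k] V) (l : ℕ) (x : V) : (g.toLinearMap ^ l) x = (g ^ (l:ℤ)) x := by
  rw [zpow_natCast]
  induction l generalizing x with
  | zero => rfl
  | succ m ih => rw [pow_succ, pow_succ, Module.End.mul_apply, ih]; rfl

private lemma SW_zpA (g : V ≃ₗ[k] V) (a b : ℤ) (x : V) :
    (g ^ a) ((g ^ b) x) = (g ^ (a+b)) x := by rw [zpow_add]; rfl

private lemma SW_Nexp (g : V ≃ₗ[k] V) (s : ℕ) (y : V) :
    ((g.toLinearMap - LinearMap.id : Module.End k V) ^ s) y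
      = ∑ l ∈ range (s+1), ((-1:ℤ)^(s-l) * (s.choose l)) • ((g ^ (l:ℤ)) y) := by
  have h : (g.toLinearMap - LinearMap.id : Module.End k V) = g.toLinearMap + (-1) := by
    ext x; simp [sub_eq_add_neg]
  rw [h, (Commute.neg_one_right (g.toLinearMap : Module.End k V)).add_pow s]
  rw [LinearMap.sum_apply]
  refine Finset.sum_congr rfl fun l hl => ?_
  rw [Module.End.mul_apply, Module.End.mul_apply]
  have h1 : ((s.choose l : ℕ) : Module.End k V) y = (s.choose l : ℤ) • y := by
    simp [Module.End.natCast_apply]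
  rw [h1]
  have hm1 : (-1 : Module.End k V) = (((-1 : ℤ) : ℤ) : Module.End k V) := by simp
  have h2 : ((-1 : Module.End k V) ^ (s - l)) ((s.choose l : ℤ) • y)
      = ((-1:ℤ)^(s-l) * (s.choose l)) • y := by
    rw [hm1, ← Int.cast_pow, Module.End.intCast_apply, smul_smul]
  rw [h2, map_zsmul, SW_npA]

variable (B : V →ₗ[k] V →ₗ[k] k) (g : V ≃ₗ[k] V)

private lemma SW_isoZ (hg : ∀ x y : V, B (g x) (g y) = B x y) :
    ∀ (c : ℤ) (x y : V), B ((g^c) x) ((g^c) y) = B x y := by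
  have key : ∀ (c : ℕ) (x y : V), B ((g^(c:ℤ)) x) ((g^(c:ℤ)) y) = B x y := by
    intro c
    induction c with
    | zero => intro x y; simp
    | succ m ih =>
        intro x y
        have e : ∀ z : V, (g^((m+1:ℕ):ℤ)) z = (g^(m:ℤ)) (g z) := by
          intro z
          have : g z = (g^(1:ℤ)) z := by rw [zpow_one]
          rw [this, SW_zpA]; norm_num
        rw [e, e, ih]
        exact hg x y
  intro c x y
  rcases le_or_gt 0 c with h | h
  · obtain ⟨m, rfl⟩ := Int.eq_ofNat_of_zero_le h
    exact key m x y
  · obtain ⟨m, hm⟩ : ∃ m : ℕ, c = -(m:ℤ) := ⟨c.natAbs, by omega⟩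
    subst hm
    have := key m ((g^(-(m:ℤ))) x) ((g^(-(m:ℤ))) y)
    rw [SW_zpA, SW_zpA] at this
    simpa using this.symm


private lemma SW_shift (hg : ∀ x y : V, B (g x) (g y) = B x y) (a b : ℤ) (x y : V) :
    B ((g^a) x) ((g^b) y) = B ((g^(a-b)) x) y := by
  have h1 : (g^a) x = (g^b) ((g^(a-b)) x) := by rw [SW_zpA]; ring_nf
  rw [h1, SW_isoZ B g hg]

private lemma SW_shift' (hg : ∀ x y : V, B (g x) (g y) = B x y) (b : ℤ) (x y : V) :
    B x ((g^b) y) = B ((g^(-b)) x) y := by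
  have := SW_shift B g hg 0 b x y
  simpa using this

private lemma SW_antisym (halt : ∀ x : V, B x x = 0) (x y : V) : B x y = - B y x := by
  have h := halt (x + y)
  simp only [map_add, LinearMap.add_apply, halt x, halt y] at h
  linear_combination h

private lemma SW_Ncomm (a : ℤ) (x : V) :
    (g.toLinearMap - LinearMap.id : Module.End k V) ((g^a) x)
      = (g^a) ((g.toLinearMap - LinearMap.id : Module.End k V) x) := by
  have h : ∀ z : V, (g.toLinearMap - LinearMap.id : Module.End k V) z = g z - z := by
    intro z; simp [LinearMap.sub_apply]
  rw [h, h, map_sub]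
  congr 1
  have h1 : ∀ z : V, g z = (g^(1:ℤ)) z := by intro z; rw [zpow_one]
  rw [h1, h1, SW_zpA, SW_zpA]
  ring_nf

private lemma SW_Nscomm (s : ℕ) (a : ℤ) (x : V) :
    ((g.toLinearMap - LinearMap.id : Module.End k V)^s) ((g^a) x)
      = (g^a) (((g.toLinearMap - LinearMap.id : Module.End k V)^s) x) := by
  induction s generalizing x with
  | zero => rfl
  | succ m ih => rw [pow_succ, Module.End.mul_apply, Module.End.mul_apply, SW_Ncomm, ih]

private lemma SW_adj (hg : ∀ x y : V, B (g x) (g y) = B x y) (x y : V) :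
    B ((g.toLinearMap - LinearMap.id : Module.End k V) x) y
      = - B ((g^(1:ℤ)) x) ((g.toLinearMap - LinearMap.id : Module.End k V) y) := by
  have h : ∀ z : V, (g.toLinearMap - LinearMap.id : Module.End k V) z = g z - z := by
    intro z; simp [LinearMap.sub_apply]
  rw [h, h, zpow_one]
  rw [map_sub, LinearMap.sub_apply]
  rw [(B (g x)).map_sub]
  rw [hg]
  ring

private lemma SW_adjs (hg : ∀ x y : V, B (g x) (g y) = B x y) (s : ℕ) (x y : V) :
    B (((g.toLinearMap - LinearMap.id : Module.End k V)^s) x) y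
      = ((-1:ℤ)^s) • B ((g^(s:ℤ)) x) (((g.toLinearMap - LinearMap.id : Module.End k V)^s) y) := by
  induction s generalizing x y with
  | zero => simp
  | succ m ih =>
      have h1 : ((g.toLinearMap - LinearMap.id : Module.End k V)^(m+1)) x
          = ((g.toLinearMap - LinearMap.id : Module.End k V)^m)
            ((g.toLinearMap - LinearMap.id : Module.End k V) x) := by
        rw [pow_succ, Module.End.mul_apply]
      rw [h1, ih, ← SW_Ncomm, SW_adj B g hg]
      rw [SW_zpA]
      have h2 : ((g.toLinearMap - LinearMap.id : Module.End k V))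
          (((g.toLinearMap - LinearMap.id : Module.End k V)^m) y)
          = ((g.toLinearMap - LinearMap.id : Module.End k V)^(m+1)) y := by
        rw [pow_succ', Module.End.mul_apply]
      rw [h2]
      have h3 : (1 + (m:ℤ)) = ((m+1:ℕ):ℤ) := by push_cast; ring
      rw [h3, smul_neg, ← neg_smul]
      congr 1
      rw [pow_succ]
      ring

private lemma SW_kerpair (hg : ∀ x y : V, B (g x) (g y) = B x y) (s : ℕ) (x : V)
    (hx : ((g.toLinearMap - LinearMap.id : Module.End k V)^s) x = 0) (y : V) :
    B x (((g.toLinearMap - LinearMap.id : Module.End k V)^s) y) = 0 := by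
  have h := SW_adjs B g hg s ((g^(-(s:ℤ))) x) y
  have e1 : ((g.toLinearMap - LinearMap.id : Module.End k V)^s) ((g^(-(s:ℤ))) x) = 0 := by
    rw [SW_Nscomm, hx, map_zero]
  have e2 : (g^((s:ℤ))) ((g^(-(s:ℤ))) x) = x := by rw [SW_zpA]; simp
  rw [e1, e2] at h
  simp only [map_zero, LinearMap.zero_apply] at h
  rcases Nat.even_or_odd s with he | ho
  · rw [he.neg_one_pow] at h; simpa using h.symm
  · rw [ho.neg_one_pow] at h
    have h2 := h.symm
    rw [neg_smul, neg_eq_zero] at h2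
    simpa using h2

private lemma SW_kerof (hg : ∀ x y : V, B (g x) (g y) = B x y)
    (hnd : ∀ x : V, (∀ y : V, B x y = 0) → x = 0) (s : ℕ) (x : V)
    (h : ∀ y : V, B ((g^(s:ℤ)) x) (((g.toLinearMap - LinearMap.id : Module.End k V)^s) y) = 0) :
    ((g.toLinearMap - LinearMap.id : Module.End k V)^s) x = 0 := by
  apply hnd
  intro y
  rw [SW_adjs B g hg s x y, h y, smul_zero]

private lemma SW_ent (hg : ∀ x y : V, B (g x) (g y) = B x y) (v : ℕ → V)
    (s : ℕ) (r t : ℕ) (j i : ℤ) :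
    B ((g^j) (v r)) (((g.toLinearMap - LinearMap.id : Module.End k V)^s) ((g^i) (v t)))
      = ∑ l ∈ range (s+1), ((-1:ℤ)^(s-l) * (s.choose l)) • B ((g^(j - i - l)) (v r)) (v t) := by
  rw [SW_Nexp]
  rw [map_sum]
  refine Finset.sum_congr rfl fun l hl => ?_
  rw [map_zsmul]
  congr 1
  rw [SW_zpA, SW_shift B g hg]
  congr 2
  ring


private lemma SW_gram0 {σ : ℕ} (p : ℕ → ℕ) (v : ℕ → V)
    (hg : ∀ x y : V, B (g x) (g y) = B x y) (halt : ∀ x : V, B x x = 0)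
    (hv1 : ∀ r ∈ Finset.Icc 1 σ, ∀ t, 1 ≤ t → t < r →
      ∀ i : ℤ, -(p t : ℤ) ≤ i → i ≤ (p t : ℤ) - 1 → B ((g ^ i) (v t)) (v r) = 0)
    (hv2 : ∀ r ∈ Finset.Icc 1 σ,
      ∀ i : ℤ, -(p r : ℤ) + 1 ≤ i → i ≤ (p r : ℤ) - 1 → B (v r) ((g ^ i) (v r)) = 0)
    (r t : ℕ) (hr1 : 1 ≤ r) (hrσ : r ≤ σ) (ht1 : 1 ≤ t) (htσ : t ≤ σ) (m : ℤ)
    (hcase : (r < t ∧ -(p r:ℤ) ≤ m ∧ m ≤ (p r:ℤ) - 1)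
      ∨ (t < r ∧ -(p t:ℤ) + 1 ≤ m ∧ m ≤ (p t:ℤ))
      ∨ (r = t ∧ -(p r:ℤ) + 1 ≤ m ∧ m ≤ (p r:ℤ) - 1)) :
    B ((g^m) (v r)) (v t) = 0 := by
  rcases hcase with ⟨h1, h2, h3⟩ | ⟨h1, h2, h3⟩ | ⟨h1, h2, h3⟩
  · exact hv1 t (Finset.mem_Icc.2 ⟨ht1, htσ⟩) r hr1 h1 m h2 h3
  · have e1 : B ((g^m) (v r)) (v t) = - B ((g^(-m)) (v t)) (v r) := by
      rw [SW_antisym B halt, SW_shift' B g hg]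
    rw [e1, hv1 r (Finset.mem_Icc.2 ⟨hr1, hrσ⟩) t ht1 h1 (-m) (by omega) (by omega), neg_zero]
  · subst h1
    rw [SW_antisym B halt, hv2 r (Finset.mem_Icc.2 ⟨hr1, hrσ⟩) m h2 h3, neg_zero]

private lemma SW_gramDiag {σ : ℕ} (p : ℕ → ℕ) (v : ℕ → V) (halt : ∀ x : V, B x x = 0)
    (hv3 : ∀ r ∈ Finset.Icc 1 σ, B (v r) ((g ^ (p r : ℤ)) (v r)) = 1)
    (r : ℕ) (hr : r ∈ Finset.Icc 1 σ) :
    B ((g^((p r : ℕ):ℤ)) (v r)) (v r) = -1 := by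
  rw [SW_antisym B halt, hv3 r hr]

end auxx

section auxset
open Finset
variable {k V : Type*} [Field k] [AddCommGroup V] [Module k V]

/-- the index finset of block basis vectors -/
private noncomputable def SW_blk (p : ℕ → ℕ) (a b : ℕ) (s : ℕ) : Finset (ℕ × ℤ) :=
  (Finset.Icc a b).biUnion fun r =>
    (Finset.Icc (-(p r:ℤ)) ((p r:ℤ) - 1 - s)).map
      ⟨fun j => (r, j), fun _ _ h => by simpa using h⟩

private lemma SW_mem_blk {p : ℕ → ℕ} {a b s : ℕ} {x : ℕ × ℤ} :
    x ∈ SW_blk p a b s ↔ a ≤ x.1 ∧ x.1 ≤ b ∧ -(p x.1:ℤ) ≤ x.2 ∧ x.2 ≤ (p x.1:ℤ) - 1 - s := by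
  obtain ⟨r, j⟩ := x
  simp only [SW_blk, Finset.mem_biUnion, Finset.mem_map, Finset.mem_Icc,
    Function.Embedding.coeFn_mk, Prod.mk.injEq]
  constructor
  · rintro ⟨r', ⟨h1, h2⟩, j', ⟨h3, h4⟩, rfl, rfl⟩
    exact ⟨h1, h2, h3, h4⟩
  · rintro ⟨h1, h2, h3, h4⟩
    exact ⟨r, ⟨h1, h2⟩, j, ⟨h3, h4⟩, rfl⟩

private lemma SW_mem_blk_mk {p : ℕ → ℕ} {a b s : ℕ} {r : ℕ} {j : ℤ} :
    (r, j) ∈ SW_blk p a b s ↔ a ≤ r ∧ r ≤ b ∧ -(p r:ℤ) ≤ j ∧ j ≤ (p r:ℤ) - 1 - s :=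
  SW_mem_blk

private lemma SW_card_blk (p : ℕ → ℕ) (a b s : ℕ) :
    (SW_blk p a b s).card = ∑ r ∈ Finset.Icc a b, (2 * p r - s) := by
  rw [SW_blk, Finset.card_biUnion]
  · refine Finset.sum_congr rfl fun r _ => ?_
    rw [Finset.card_map, Int.card_Icc]
    omega
  · intro i hi j hj hij
    simp only [Finset.disjoint_left]
    intro x hx1 hx2
    simp only [Finset.mem_map, Function.Embedding.coeFn_mk] at hx1 hx2
    obtain ⟨j1, _, rfl⟩ := hx1
    obtain ⟨j2, _, h⟩ := hx2
    exact hij (congrArg Prod.fst h).symm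

private lemma SW_spanrank (S : Finset (ℕ × ℤ)) (F : ℕ × ℤ → V)
    (h : LinearIndependent k (fun x : ↥(S : Set (ℕ×ℤ)) => F ↑x)) :
    Module.finrank k (Submodule.span k (F '' ↑S)) = S.card := by
  classical
  have h2 := finrank_span_eq_card h
  have h3 : Set.range (fun x : ↥(S : Set (ℕ×ℤ)) => F ↑x) = F '' ↑S := by
    rw [show (fun x : ↥(S : Set (ℕ×ℤ)) => F ↑x) = F ∘ (Subtype.val) from rfl,
      Set.range_comp, Subtype.range_coe]
  rw [h3] at h2
  rw [h2]
  simp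

private lemma SW_ker_pow_le {U : Type*} [AddCommGroup U] [Module k U] [FiniteDimensional k U]
    (A : Module.End k U) (m : ℕ) :
    Module.finrank k (LinearMap.ker (A^m)) ≤ m * Module.finrank k (LinearMap.ker A) := by
  induction m with
  | zero => rw [pow_zero]; simp [Module.End.one_eq_id]; exact finrank_bot _ _
  | succ m ih =>
      set K := LinearMap.ker (A^(m+1))
      have hφrange : LinearMap.range (A.domRestrict K) ≤ LinearMap.ker (A^m) := by
        rintro y ⟨⟨x, hx⟩, rfl⟩
        simp only [LinearMap.domRestrict_apply, LinearMap.mem_ker]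
        have : (A^(m+1)) x = (A^m) (A x) := by rw [pow_succ, Module.End.mul_apply]
        rw [← this]
        exact hx
      have h1 : Module.finrank k (LinearMap.range (A.domRestrict K))
          + Module.finrank k (LinearMap.ker (A.domRestrict K)) = Module.finrank k K :=
        LinearMap.finrank_range_add_finrank_ker _
      have h2 : Module.finrank k (LinearMap.range (A.domRestrict K))
          ≤ Module.finrank k (LinearMap.ker (A^m)) := Submodule.finrank_mono hφrange
      have h3 : Module.finrank k (LinearMap.ker (A.domRestrict K))
          ≤ Module.finrank k (LinearMap.ker A) := by
        rw [LinearMap.ker_domRestrict]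
        have e := Submodule.comapSubtypeEquivOfLe (inf_le_right : LinearMap.ker A ⊓ K ≤ K)
        have : Submodule.comap K.subtype (LinearMap.ker A)
            = Submodule.comap K.subtype (LinearMap.ker A ⊓ K) := by
          ext ⟨x, hx⟩
          simp [hx]
        rw [this, e.finrank_eq]
        exact Submodule.finrank_mono inf_le_left
      have := le_trans (le_of_eq h1.symm) (add_le_add h2 h3)
      calc Module.finrank k K ≤ Module.finrank k (LinearMap.ker (A^m))
            + Module.finrank k (LinearMap.ker A) := by omega
        _ ≤ m * Module.finrank k (LinearMap.ker A) + Module.finrank k (LinearMap.ker A) := by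
            omega
        _ = (m+1) * Module.finrank k (LinearMap.ker A) := by ring

end auxset

section KL
open Finset
variable {k V : Type*} [Field k] [AddCommGroup V] [Module k V]

private lemma SW_KL {σ : ℕ} (p : ℕ → ℕ) (v : ℕ → V)
    (B : V →ₗ[k] V →ₗ[k] k) (g : V ≃ₗ[k] V)
    (hg : ∀ x y : V, B (g x) (g y) = B x y) (halt : ∀ x : V, B x x = 0)
    (hv1 : ∀ r ∈ Finset.Icc 1 σ, ∀ t, 1 ≤ t → t < r →
      ∀ i : ℤ, -(p t : ℤ) ≤ i → i ≤ (p t : ℤ) - 1 → B ((g ^ i) (v t)) (v r) = 0)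
    (hv2 : ∀ r ∈ Finset.Icc 1 σ,
      ∀ i : ℤ, -(p r : ℤ) + 1 ≤ i → i ≤ (p r : ℤ) - 1 → B (v r) ((g ^ i) (v r)) = 0)
    (hv3 : ∀ r ∈ Finset.Icc 1 σ, B (v r) ((g ^ (p r : ℤ)) (v r)) = 1)
    (hmono : ∀ i j, 1 ≤ i → i ≤ j → j ≤ σ → p j ≤ p i)
    (d : ℕ) (hd1 : 1 ≤ d) (hdσ : d ≤ σ) (s : ℕ) (hs : 1 ≤ s) :
    LinearIndependent k (fun x : ↥((SW_blk p 1 d s : Finset (ℕ×ℤ)) : Set (ℕ×ℤ)) =>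
      ((g.toLinearMap - LinearMap.id : Module.End k V)^s)
        ((g ^ (x : ℕ×ℤ).2) (v (x : ℕ×ℤ).1))) := by
  classical
  apply Fintype.linearIndependent_iff.2
  intro c hc
  set A := (g.toLinearMap - LinearMap.id : Module.End k V) with hA
  set X := ∑ i : ↥((SW_blk p 1 d s : Finset (ℕ×ℤ)) : Set (ℕ×ℤ)),
    c i • (g ^ (i:ℕ×ℤ).2) (v (i:ℕ×ℤ).1) with hX
  have hAX : (A^s) X = 0 := by
    rw [hX, map_sum]
    simp only [map_smul]
    exact hc
  have hpair : ∀ y : V, B X ((A^s) y) = 0 := SW_kerpair B g hg s X hAX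
  have main : ∀ (M : ℕ) (K : ℕ) (i : ↥((SW_blk p 1 d s : Finset (ℕ×ℤ)) : Set (ℕ×ℤ))),
      ((p (i:ℕ×ℤ).1 : ℤ) - (i:ℕ×ℤ).2).toNat = M → (i:ℕ×ℤ).1 = K → c i = 0 := by
    intro M
    induction M using Nat.strong_induction_on with
    | _ M IHM =>
      intro K
      induction K using Nat.strong_induction_on with
      | _ K IHK =>
        rintro ⟨⟨r0, j0⟩, hi0⟩ hM hK
        simp only at hM hK
        subst hK
        obtain ⟨hr01, hr0d, hj0l, hj0u⟩ := SW_mem_blk_mk.1 (Finset.mem_coe.1 hi0)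
        set y0 := (g ^ (j0 - (p r0:ℤ))) (v r0) with hy0
        have h0 : B X ((A^s) y0) = 0 := hpair y0
        have hexp : ∑ i : ↥((SW_blk p 1 d s : Finset (ℕ×ℤ)) : Set (ℕ×ℤ)),
            c i * (B ((g ^ (i:ℕ×ℤ).2) (v (i:ℕ×ℤ).1)) ((A^s) y0)) = 0 := by
          rw [← h0, hX, map_sum, LinearMap.sum_apply]
          refine Finset.sum_congr rfl fun i _ => ?_
          rw [map_smul, LinearMap.smul_apply, smul_eq_mul]
        have hdiag : B ((g ^ j0) (v r0)) ((A^s) y0) = ((-1:ℤ)^s) • (-1 : k) := by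
          rw [hy0, SW_ent B g hg v s r0 r0 j0 (j0 - (p r0:ℤ))]
          rw [Finset.sum_eq_single 0]
          · have e : j0 - (j0 - (p r0:ℤ)) - ((0:ℕ):ℤ) = ((p r0 : ℕ):ℤ) := by push_cast; ring
            rw [e, SW_gramDiag B g p v halt hv3 r0 (Finset.mem_Icc.2 ⟨hr01, le_trans hr0d hdσ⟩)]
            simp
          · intro l hl hlne
            have hl2 : l ≤ s := Nat.lt_succ_iff.1 (Finset.mem_range.1 hl)
            have e : j0 - (j0 - (p r0:ℤ)) - (l:ℤ) = (p r0:ℤ) - l := by push_cast; ring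
            rw [e, SW_gram0 B g p v hg halt hv1 hv2 r0 r0 hr01 (le_trans hr0d hdσ) hr01
              (le_trans hr0d hdσ) _
              (Or.inr (Or.inr ⟨rfl, by omega, by omega⟩)), smul_zero]
          · intro h
            exact absurd (Finset.mem_range.2 (Nat.succ_pos s)) h
        have hoff : ∀ (r : ℕ) (j : ℤ), (r, j) ∈ SW_blk p 1 d s → (r, j) ≠ (r0, j0) →
            ¬(((p r:ℤ) - j).toNat < M) →
            ¬(((p r:ℤ) - j).toNat = M ∧ r < r0) →
            B ((g ^ j) (v r)) ((A^s) y0) = 0 := by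
          intro r j hmem hne hnlt hnlt2
          obtain ⟨hr1, hrd, hjl, hju⟩ := SW_mem_blk_mk.1 hmem
          rw [hy0, SW_ent B g hg v s r r0 j (j0 - (p r0:ℤ))]
          apply Finset.sum_eq_zero
          intro l hl
          have hl2 : l ≤ s := Nat.lt_succ_iff.1 (Finset.mem_range.1 hl)
          have e : j - (j0 - (p r0:ℤ)) - (l:ℤ) = j - j0 + (p r0:ℤ) - l := by push_cast; ring
          rw [e]
          rcases lt_trichotomy r r0 with hrr | hrr | hrr
          · have hple : p r0 ≤ p r := hmono r r0 hr1 (le_of_lt hrr) (le_trans hr0d hdσ)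
            rw [SW_gram0 B g p v hg halt hv1 hv2 r r0 hr1 (le_trans hrd hdσ) hr01
              (le_trans hr0d hdσ) _ (Or.inl ⟨hrr, by omega, by omega⟩), smul_zero]
          · subst hrr
            have hjne : j ≠ j0 := fun h => hne (by rw [h])
            rw [SW_gram0 B g p v hg halt hv1 hv2 r r hr1 (le_trans hrd hdσ) hr1
              (le_trans hrd hdσ) _ (Or.inr (Or.inr ⟨rfl, by omega, by omega⟩)), smul_zero]
          · have hple : p r ≤ p r0 := hmono r0 r hr01 (le_of_lt hrr) (le_trans hrd hdσ)
            rw [SW_gram0 B g p v hg halt hv1 hv2 r r0 hr1 (le_trans hrd hdσ) hr01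
              (le_trans hr0d hdσ) _ (Or.inr (Or.inl ⟨hrr, by omega, by omega⟩)), smul_zero]
        rw [Finset.sum_eq_single
          (⟨(r0,j0), hi0⟩ : ↥((SW_blk p 1 d s : Finset (ℕ×ℤ)) : Set (ℕ×ℤ)))] at hexp
        · rw [hdiag] at hexp
          have hne0 : (((-1:ℤ)^s) • (-1:k)) ≠ 0 := by
            rcases Nat.even_or_odd s with he | ho
            · rw [he.neg_one_pow, one_smul]
              exact neg_ne_zero.2 one_ne_zero
            · rw [ho.neg_one_pow]
              simp
          exact (mul_eq_zero.1 hexp).resolve_right hne0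
        · rintro ⟨⟨r,j⟩, hmem⟩ _ hne
          by_cases hlt : ((p r:ℤ) - j).toNat < M
          · rw [IHM _ hlt r ⟨(r,j), hmem⟩ rfl rfl, zero_mul]
          · by_cases hlt2 : ((p r:ℤ) - j).toNat = M ∧ r < r0
            · rw [IHK r hlt2.2 ⟨(r,j), hmem⟩ hlt2.1 rfl, zero_mul]
            · rw [hoff r j (Finset.mem_coe.1 hmem)
                (fun h => hne (Subtype.ext h)) hlt hlt2, mul_zero]
        · intro h
          exact absurd (Finset.mem_univ _) h
  exact fun i => main _ _ i rfl rfl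

end KL

section comapaux
variable {k V : Type*} [Field k] [AddCommGroup V] [Module k V] [FiniteDimensional k V]

private lemma SW_comap_finrank (W X : Submodule k V) :
    Module.finrank k (Submodule.comap W.subtype X) = Module.finrank k (X ⊓ W : Submodule k V) := by
  have h : Submodule.comap W.subtype X = Submodule.comap W.subtype (X ⊓ W) := by
    ext ⟨x, hx⟩
    simp [hx]
  rw [h, (Submodule.comapSubtypeEquivOfLe (inf_le_right : X ⊓ W ≤ W)).finrank_eq]

end comapaux


open Finset Module Submodule


section

variable {k V : Type*} [Field k] [AddCommGroup V] [Module k V]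

/-- For a bilinear form `B` and a subspace `X`, the perpendicular subspace
`X^⊥ = {y ∈ V : B(y,x) = 0 for all x ∈ X}`. -/
def perpSub (B : V →ₗ[k] V →ₗ[k] k) (X : Submodule k V) : Submodule k V where
  carrier := {y | ∀ x ∈ X, B y x = 0}
  add_mem' := by
    intro a b ha hb
    simp only [Set.mem_setOf_eq] at *
    intro x hx
    rw [map_add, LinearMap.add_apply, ha x hx, hb x hx, add_zero]
  zero_mem' := by
    simp only [Set.mem_setOf_eq]
    intro x hx
    rw [map_zero, LinearMap.zero_apply]
  smul_mem' := by
    intro c a ha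
    simp only [Set.mem_setOf_eq] at *
    intro x hx
    rw [map_smul, LinearMap.smul_apply, ha x hx, smul_zero]

/-- `p_{≤r} = p_1 + … + p_r` (so `partialSum p (r-1) = p_{<r}`). -/
def partialSum (p : ℕ → ℕ) (r : ℕ) : ℕ := ∑ t ∈ Finset.Icc 1 r, p t

set_option maxHeartbeats 2000000 in
/-- 3.5(b): let `(V,B)` be a `2n`-dimensional symplectic space, `p_* ∈ 𝒫_n`,
`g` a unipotent isometry, `N = g − 1`, and `v_1, …, v_σ` vectors satisfying the orthogonality,
normalization and basis conditions of 3.3. If `k_0 > 0`, `d ∈ [1,σ]` with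
`2p_d ≥ k_0 ≥ 2p_{d+1}` (convention `p_{σ+1} = 0`) and `dim N^{k_0}(V) = Σ_{r=1}^d (2p_r − k_0)`,
then, with `W_d` (resp. `W'_d`) the span of the `g^j v_r` for `r ∈ [1,d]` (resp. `r ∈ [d+1,σ]`)
and `j ∈ [−p_r, p_r−1]`: `W_d` and `W'_d` are `g`-stable, `W'_d = W_d^⊥`, `N^{k_0} W'_d = 0`,
`N` restricted to `W_d` has kernel of dimension `d` (i.e. exactly `d` Jordan blocks), and
`N^{k_0}` restricted to `W_d` has kernel of dimension `k_0·d` (each block has size `≥ k_0`). -/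
theorem stmt_11 [FiniteDimensional k V] (n σ : ℕ) (p : ℕ → ℕ)
    (hp : IsPartitionOf n σ p)
    (B : V →ₗ[k] V →ₗ[k] k)
    (halt : ∀ x : V, B x x = 0)
    (hnd : ∀ x : V, (∀ y : V, B x y = 0) → x = 0)
    (hdim : Module.finrank k V = 2 * n)
    (g : V ≃ₗ[k] V)
    (hg : ∀ x y : V, B (g x) (g y) = B x y)
    (hgu : IsNilpotent (g.toLinearMap - LinearMap.id : Module.End k V))
    (v : ℕ → V)
    (hv1 : ∀ r ∈ Finset.Icc 1 σ, ∀ t, 1 ≤ t → t < r →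
      ∀ i : ℤ, -(p t : ℤ) ≤ i → i ≤ (p t : ℤ) - 1 → B ((g ^ i) (v t)) (v r) = 0)
    (hv2 : ∀ r ∈ Finset.Icc 1 σ,
      ∀ i : ℤ, -(p r : ℤ) + 1 ≤ i → i ≤ (p r : ℤ) - 1 → B (v r) ((g ^ i) (v r)) = 0)
    (hv3 : ∀ r ∈ Finset.Icc 1 σ, B (v r) ((g ^ (p r : ℤ)) (v r)) = 1)
    (hv_li : LinearIndependent k
      (fun q : {q : ℕ × ℤ // 1 ≤ q.1 ∧ q.1 ≤ σ ∧ -(p q.1 : ℤ) ≤ q.2 ∧ q.2 ≤ (p q.1 : ℤ) - 1} =>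
        (g ^ q.1.2) (v q.1.1)))
    (hv_sp : Submodule.span k
      {y | ∃ t, 1 ≤ t ∧ t ≤ σ ∧ ∃ j : ℤ, -(p t : ℤ) ≤ j ∧ j ≤ (p t : ℤ) - 1 ∧ y = (g ^ j) (v t)}
      = ⊤)
    (k0 : ℕ) (hk0 : 0 < k0) (d : ℕ) (hd : d ∈ Finset.Icc 1 σ)
    (hk0le : k0 ≤ 2 * p d)
    (hlek0 : 2 * (if d + 1 ≤ σ then p (d + 1) else 0) ≤ k0)
    (hrank : Module.finrank k
        (LinearMap.range ((g.toLinearMap - LinearMap.id : Module.End k V) ^ k0))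
      = ∑ r ∈ Finset.Icc 1 d, (2 * p r - k0)) :
    let Wd : Submodule k V := Submodule.span k
      {y | ∃ r, 1 ≤ r ∧ r ≤ d ∧ ∃ j : ℤ, -(p r : ℤ) ≤ j ∧ j ≤ (p r : ℤ) - 1 ∧ y = (g ^ j) (v r)}
    let Wd' : Submodule k V := Submodule.span k
      {y | ∃ r, d + 1 ≤ r ∧ r ≤ σ ∧
        ∃ j : ℤ, -(p r : ℤ) ≤ j ∧ j ≤ (p r : ℤ) - 1 ∧ y = (g ^ j) (v r)}
    let N : Module.End k V := g.toLinearMap - LinearMap.id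
    Submodule.map g.toLinearMap Wd = Wd ∧
    Submodule.map g.toLinearMap Wd' = Wd' ∧
    Wd' = perpSub B Wd ∧
    Submodule.map (N ^ k0) Wd' = ⊥ ∧
    Module.finrank k ↥(LinearMap.ker N ⊓ Wd) = d ∧
    Module.finrank k ↥(LinearMap.ker (N ^ k0) ⊓ Wd) = k0 * d := by
  classical
  intro Wd Wd' N
  obtain ⟨hσ1, hp1, hmono, hpsum⟩ := hp
  obtain ⟨hd1, hdσ⟩ := Finset.mem_Icc.1 hd
  set F : ℕ × ℤ → V := fun x => (g ^ x.2) (v x.1) with hF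
  -- set descriptions
  have hWset : Wd = span k (F '' ↑(SW_blk p 1 d 0)) := by
    show span k _ = _
    congr 1
    ext y
    simp only [Set.mem_setOf_eq, Set.mem_image, Finset.mem_coe]
    constructor
    · rintro ⟨r, h1, h2, j, h3, h4, rfl⟩
      exact ⟨(r, j), SW_mem_blk_mk.2 ⟨h1, h2, h3, by omega⟩, rfl⟩
    · rintro ⟨⟨r, j⟩, hm, rfl⟩
      obtain ⟨h1, h2, h3, h4⟩ := SW_mem_blk_mk.1 hm
      exact ⟨r, h1, h2, j, h3, by omega, rfl⟩
  have hW'set : Wd' = span k (F '' ↑(SW_blk p (d+1) σ 0)) := by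
    show span k _ = _
    congr 1
    ext y
    simp only [Set.mem_setOf_eq, Set.mem_image, Finset.mem_coe]
    constructor
    · rintro ⟨r, h1, h2, j, h3, h4, rfl⟩
      exact ⟨(r, j), SW_mem_blk_mk.2 ⟨h1, h2, h3, by omega⟩, rfl⟩
    · rintro ⟨⟨r, j⟩, hm, rfl⟩
      obtain ⟨h1, h2, h3, h4⟩ := SW_mem_blk_mk.1 hm
      exact ⟨r, h1, h2, j, h3, by omega, rfl⟩
  -- independence of subfamilies of the basis family
  have hind : ∀ a b : ℕ, 1 ≤ a → b ≤ σ →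
      LinearIndependent k (fun x : ↥((SW_blk p a b 0 : Finset (ℕ×ℤ)) : Set (ℕ×ℤ)) => F ↑x) := by
    intro a b ha hb
    let e : ↥((SW_blk p a b 0 : Finset (ℕ×ℤ)) : Set (ℕ×ℤ)) →
        {q : ℕ × ℤ // 1 ≤ q.1 ∧ q.1 ≤ σ ∧ -(p q.1 : ℤ) ≤ q.2 ∧ q.2 ≤ (p q.1 : ℤ) - 1} :=
      fun x => ⟨x.val, by
        have h := SW_mem_blk.1 (Finset.mem_coe.1 x.2)
        exact ⟨by omega, by omega, by omega, by omega⟩⟩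
    have hval : ∀ x, (e x).val = x.val := fun x => rfl
    have einj : Function.Injective e := by
      intro x y h
      apply Subtype.ext
      rw [← hval x, ← hval y, h]
    have hfun : ((fun q : {q : ℕ × ℤ // 1 ≤ q.1 ∧ q.1 ≤ σ ∧ -(p q.1 : ℤ) ≤ q.2 ∧
        q.2 ≤ (p q.1 : ℤ) - 1} => (g ^ q.1.2) (v q.1.1)) ∘ e)
        = fun x : ↥((SW_blk p a b 0 : Finset (ℕ×ℤ)) : Set (ℕ×ℤ)) => F ↑x := by
      funext x
      rfl
    rw [← hfun]
    exact hv_li.comp e einj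
  have hrankWd : finrank k Wd = ∑ r ∈ Finset.Icc 1 d, 2 * p r := by
    rw [hWset, SW_spanrank _ F (hind 1 d le_rfl hdσ), SW_card_blk]
    exact Finset.sum_congr rfl fun r _ => by omega
  have hrankWd' : finrank k Wd' = ∑ r ∈ Finset.Icc (d+1) σ, 2 * p r := by
    rw [hW'set, SW_spanrank _ F (hind (d+1) σ (by omega) le_rfl), SW_card_blk]
    exact Finset.sum_congr rfl fun r _ => by omega
  have hsplit : ∑ r ∈ Finset.Icc 1 d, 2 * p r + ∑ r ∈ Finset.Icc (d+1) σ, 2 * p r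
      = ∑ r ∈ Finset.Icc 1 σ, 2 * p r := by
    rw [show Finset.Icc 1 d = Finset.Ioc 0 d from Finset.Icc_add_one_left_eq_Ioc 0 d,
      show Finset.Icc (d+1) σ = Finset.Ioc d σ from Finset.Icc_add_one_left_eq_Ioc d σ,
      show Finset.Icc 1 σ = Finset.Ioc 0 σ from Finset.Icc_add_one_left_eq_Ioc 0 σ]
    exact Finset.sum_Ioc_consecutive _ (Nat.zero_le d) hdσ
  have htotal : ∑ r ∈ Finset.Icc 1 σ, 2 * p r = 2 * n := by
    rw [← Finset.mul_sum, hpsum]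
  have hWW' : finrank k Wd + finrank k Wd' = 2 * n := by
    rw [hrankWd, hrankWd', hsplit, htotal]
  have hk0le2pr : ∀ r, 1 ≤ r → r ≤ d → k0 ≤ 2 * p r := by
    intro r h1 h2
    have := hmono r d h1 h2 hdσ
    omega
  have hp1d : ∀ r, 1 ≤ r → r ≤ d → 1 ≤ p r := by
    intro r h1 h2
    exact hp1 r (Finset.mem_Icc.2 ⟨h1, le_trans h2 hdσ⟩)
  -- the range of N^k0
  have hk01 : 1 ≤ k0 := hk0
  have hrank' : finrank k (LinearMap.range (N ^ k0)) = ∑ r ∈ Finset.Icc 1 d, (2 * p r - k0) :=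
    hrank
  have hindK : LinearIndependent k (fun x : ↥((SW_blk p 1 d k0 : Finset (ℕ×ℤ)) : Set (ℕ×ℤ)) =>
      (N ^ k0) (F ↑x)) := SW_KL p v B g hg halt hv1 hv2 hv3 hmono d hd1 hdσ k0 hk01
  have hZle : span k ((fun x => (N ^ k0) (F x)) '' ↑(SW_blk p 1 d k0))
      ≤ LinearMap.range (N ^ k0) := by
    rw [Submodule.span_le]
    rintro _ ⟨x, _, rfl⟩
    exact ⟨F x, rfl⟩
  have hZrank : finrank k (span k ((fun x => (N ^ k0) (F x)) '' ↑(SW_blk p 1 d k0)))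
      = ∑ r ∈ Finset.Icc 1 d, (2 * p r - k0) := by
    rw [SW_spanrank (SW_blk p 1 d k0) (fun x => (N ^ k0) (F x)) hindK, SW_card_blk]
  have hZ : span k ((fun x => (N ^ k0) (F x)) '' ↑(SW_blk p 1 d k0))
      = LinearMap.range (N ^ k0) := by
    apply Submodule.eq_of_le_of_finrank_le hZle
    rw [hZrank, hrank']
  have hRW : LinearMap.range (N ^ k0) ≤ Wd := by
    rw [← hZ, Submodule.span_le]
    rintro _ ⟨⟨r, j⟩, hm, rfl⟩
    obtain ⟨h1, h2, h3, h4⟩ := SW_mem_blk_mk.1 (Finset.mem_coe.1 hm)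
    show (N ^ k0) ((g ^ j) (v r)) ∈ Wd
    rw [SW_Nexp]
    apply Submodule.sum_mem
    intro l hl
    have hl2 : l ≤ k0 := Nat.lt_succ_iff.1 (Finset.mem_range.1 hl)
    apply zsmul_mem
    rw [SW_zpA]
    rw [hWset]
    apply Submodule.subset_span
    exact ⟨(r, (l:ℤ) + j), SW_mem_blk_mk.2 ⟨h1, h2, by omega, by omega⟩, rfl⟩
  -- first goal : g-stability of Wd
  have hmaple : Submodule.map g.toLinearMap Wd ≤ Wd := by
    conv_lhs => rw [hWset]
    rw [Submodule.map_span]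
    rw [Submodule.span_le]
    rintro _ ⟨_, ⟨⟨r, j⟩, hm, rfl⟩, rfl⟩
    obtain ⟨h1, h2, h3, h4⟩ := SW_mem_blk_mk.1 (Finset.mem_coe.1 hm)
    have hge : g.toLinearMap (F (r, j)) = (g ^ (j + 1)) (v r) := by
      show g ((g ^ j) (v r)) = _
      rw [show g ((g ^ j) (v r)) = (g ^ (1:ℤ)) ((g ^ j) (v r)) from by rw [zpow_one], SW_zpA]
      ring_nf
    rw [hge]
    by_cases hj : j + 1 ≤ (p r : ℤ) - 1
    · rw [hWset]
      apply Submodule.subset_span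
      exact ⟨(r, j + 1), SW_mem_blk_mk.2 ⟨h1, h2, by omega, by omega⟩, rfl⟩
    · have hj' : j + 1 = (p r : ℤ) := by omega
      rw [hj']
      -- g^{p r} v r ∈ Wd
      have hu : (N ^ k0) ((g ^ ((p r : ℤ) - k0)) (v r)) ∈ Wd :=
        hRW ⟨(g ^ ((p r : ℤ) - k0)) (v r), rfl⟩
      rw [SW_Nexp, Finset.sum_range_succ] at hu
      have hcoef : ((-1:ℤ) ^ (k0 - k0) * (k0.choose k0)) = 1 := by simp
      rw [hcoef, one_smul, SW_zpA] at hu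
      have hexp : ((k0:ℤ) + ((p r:ℤ) - k0)) = (p r : ℤ) := by ring
      rw [hexp] at hu
      have hsummem : ∑ l ∈ Finset.range k0,
          ((-1:ℤ) ^ (k0 - l) * (k0.choose l)) • (g ^ (l:ℤ)) ((g ^ ((p r:ℤ) - k0)) (v r)) ∈ Wd := by
        apply Submodule.sum_mem
        intro l hl
        have hl2 : l < k0 := Finset.mem_range.1 hl
        apply zsmul_mem
        rw [SW_zpA, hWset]
        apply Submodule.subset_span
        have hk2 : k0 ≤ 2 * p r := hk0le2pr r h1 h2
        exact ⟨(r, (l:ℤ) + ((p r:ℤ) - k0)), SW_mem_blk_mk.2 ⟨h1, h2, by omega, by omega⟩, rfl⟩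
      have := Submodule.sub_mem Wd hu hsummem
      simpa using this
  have hg1 : Submodule.map g.toLinearMap Wd = Wd := by
    apply Submodule.eq_of_le_of_finrank_le hmaple
    rw [LinearEquiv.finrank_map_eq g Wd]
  -- stability under all powers
  have hgmem : ∀ w ∈ Wd, g w ∈ Wd := by
    intro w hw
    have : g.toLinearMap w ∈ Submodule.map g.toLinearMap Wd := Submodule.mem_map_of_mem hw
    rwa [hg1] at this
  have hgmem' : ∀ w ∈ Wd, g.symm w ∈ Wd := by
    intro w hw
    rw [← hg1] at hw
    obtain ⟨u, hu, rfl⟩ := hw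
    simpa using hu
  have hstabZ : ∀ (a : ℤ), ∀ w ∈ Wd, (g ^ a) w ∈ Wd := by
    have hpos : ∀ (m : ℕ), ∀ w ∈ Wd, (g ^ (m:ℤ)) w ∈ Wd := by
      intro m
      induction m with
      | zero => intro w hw; simpa using hw
      | succ c ih =>
          intro w hw
          have e : (g ^ ((c+1:ℕ):ℤ)) w = (g ^ (c:ℤ)) (g w) := by
            rw [show g w = (g ^ (1:ℤ)) w from by rw [zpow_one], SW_zpA,
              show (c:ℤ) + 1 = ((c+1:ℕ):ℤ) from by push_cast; ring]
          rw [e]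
          exact ih _ (hgmem w hw)
    have hneg : ∀ (m : ℕ), ∀ w ∈ Wd, (g ^ (-(m:ℤ))) w ∈ Wd := by
      intro m
      induction m with
      | zero => intro w hw; simpa using hw
      | succ c ih =>
          intro w hw
          have e : (g ^ (-((c+1:ℕ):ℤ))) w = (g ^ (-(c:ℤ))) ((g ^ (-1:ℤ)) w) := by
            rw [SW_zpA, show (-(c:ℤ)) + (-1) = -((c+1:ℕ):ℤ) from by push_cast; ring]
          rw [e]
          have hsymm : (g ^ (-1:ℤ)) w = g.symm w := by
            rw [zpow_neg_one]
            rfl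
          rw [hsymm]
          exact ih _ (hgmem' w hw)
    intro a
    rcases le_or_gt 0 a with h | h
    · obtain ⟨m, rfl⟩ := Int.eq_ofNat_of_zero_le h
      exact hpos m
    · obtain ⟨m, rfl⟩ : ∃ m : ℕ, a = -(m:ℤ) := ⟨a.natAbs, by omega⟩
      exact hneg m
  -- W ⟂ v_r for r > d
  have hWperpvr : ∀ r, d + 1 ≤ r → r ≤ σ → ∀ w ∈ Wd, B w (v r) = 0 := by
    intro r hr1 hr2 w hw
    rw [hWset] at hw
    induction hw using Submodule.span_induction with
    | mem y hy =>
        obtain ⟨⟨t, i⟩, hm, rfl⟩ := hy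
        obtain ⟨h1, h2, h3, h4⟩ := SW_mem_blk_mk.1 (Finset.mem_coe.1 hm)
        exact hv1 r (Finset.mem_Icc.2 ⟨by omega, hr2⟩) t h1 (by omega) i h3 (by omega)
    | zero => simp
    | add y z _ _ hy hz => rw [map_add, LinearMap.add_apply, hy, hz, add_zero]
    | smul c y _ hy => rw [map_smul, LinearMap.smul_apply, hy, smul_zero]
  have hWperpall : ∀ w ∈ Wd, ∀ r, d + 1 ≤ r → r ≤ σ → ∀ j : ℤ, B w ((g ^ j) (v r)) = 0 := by
    intro w hw r hr1 hr2 j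
    rw [SW_shift' B g hg]
    exact hWperpvr r hr1 hr2 _ (hstabZ (-j) w hw)
  -- third goal : Wd' = perp of Wd
  have hleperp : Wd' ≤ perpSub B Wd := by
    rw [hW'set, Submodule.span_le]
    rintro _ ⟨⟨r, j⟩, hm, rfl⟩
    obtain ⟨h1, h2, h3, h4⟩ := SW_mem_blk_mk.1 (Finset.mem_coe.1 hm)
    intro x hx
    rw [SW_antisym B halt, hWperpall x hx r h1 h2 j, neg_zero]
  have hrefl : LinearMap.IsRefl B := LinearMap.IsAlt.isRefl halt
  have hperp_eq : perpSub B Wd = LinearMap.BilinForm.orthogonal B Wd := by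
    ext x
    constructor
    · intro hx y hy
      exact hrefl x y (hx y hy)
    · intro hx y hy
      exact hrefl y x (hx y hy)
  have hperprank : finrank k (perpSub B Wd) + finrank k Wd = 2 * n := by
    rw [hperp_eq, LinearMap.BilinForm.finrank_orthogonal (hrefl.nondegenerate_iff_separatingLeft.2 hnd) Wd, hdim]
    have : finrank k Wd ≤ finrank k V := Submodule.finrank_le Wd
    omega
  have hg3 : Wd' = perpSub B Wd := by
    apply Submodule.eq_of_le_of_finrank_le hleperp
    omega
  -- second goal
  have hg2 : Submodule.map g.toLinearMap Wd' = Wd' := by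
    have hle : Submodule.map g.toLinearMap Wd' ≤ Wd' := by
      rintro _ ⟨y, hy, rfl⟩
      rw [hg3] at hy ⊢
      intro x hx
      have e : B (g.toLinearMap y) x = B y (g.symm x) := by
        show B (g y) x = _
        conv_lhs => rw [show x = g (g.symm x) from (g.apply_symm_apply x).symm]
        rw [hg]
      rw [e]
      exact hy (g.symm x) (hgmem' x hx)
    apply Submodule.eq_of_le_of_finrank_le hle
    rw [LinearEquiv.finrank_map_eq g Wd']
  -- fourth goal
  have hkerr : ∀ r, d + 1 ≤ r → r ≤ σ → ∀ j : ℤ, (N ^ k0) ((g ^ j) (v r)) = 0 := by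
    intro r hr1 hr2 j
    apply SW_kerof B g hg hnd k0
    intro y
    rw [SW_zpA, SW_antisym B halt, hWperpall _ (hRW ⟨y, rfl⟩) r hr1 hr2, neg_zero]
  have hg4 : Submodule.map (N ^ k0) Wd' = ⊥ := by
    rw [hW'set, Submodule.map_span]
    rw [eq_bot_iff, Submodule.span_le]
    rintro _ ⟨_, ⟨⟨r, j⟩, hm, rfl⟩, rfl⟩
    obtain ⟨h1, h2, h3, h4⟩ := SW_mem_blk_mk.1 (Finset.mem_coe.1 hm)
    show (N ^ k0) (F (r, j)) ∈ (⊥ : Submodule k V)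
    rw [show F (r, j) = (g ^ j) (v r) from rfl, hkerr r h1 h2 j]
    exact Submodule.zero_mem ⊥
  have hW'ker : Wd' ≤ LinearMap.ker (N ^ k0) := by
    intro w hw
    have : (N ^ k0) w ∈ Submodule.map (N ^ k0) Wd' := Submodule.mem_map_of_mem hw
    rw [hg4] at this
    exact this
  -- sixth goal
  have hrankker : finrank k (LinearMap.range (N ^ k0)) + finrank k (LinearMap.ker (N ^ k0))
      = 2 * n := by
    rw [LinearMap.finrank_range_add_finrank_ker, hdim]
  have hkerdecomp : LinearMap.ker (N ^ k0) = Wd' ⊔ (Wd ⊓ LinearMap.ker (N ^ k0)) := by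
    have h2 := sup_inf_assoc_of_le Wd hW'ker
    have hsup : Wd' ⊔ Wd = ⊤ := by
      rw [hWset, hW'set, ← Submodule.span_union, ← Set.image_union]
      have hsets : (↑(SW_blk p (d+1) σ 0) : Set (ℕ×ℤ)) ∪ ↑(SW_blk p 1 d 0)
          = ↑(SW_blk p 1 σ 0) := by
        ext ⟨r, j⟩
        simp only [Set.mem_union, Finset.mem_coe, SW_mem_blk_mk]
        omega
      rw [hsets]
      rw [← hv_sp]
      congr 1
      ext y
      simp only [Set.mem_setOf_eq, Set.mem_image, Finset.mem_coe]
      constructor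
      · rintro ⟨⟨r, j⟩, hm, rfl⟩
        obtain ⟨h1, h2, h3, h4⟩ := SW_mem_blk_mk.1 hm
        exact ⟨r, h1, h2, j, h3, by omega, rfl⟩
      · rintro ⟨r, h1, h2, j, h3, h4, rfl⟩
        exact ⟨(r, j), SW_mem_blk_mk.2 ⟨h1, h2, h3, by omega⟩, rfl⟩
    rw [hsup, top_inf_eq] at h2
    exact h2
  have hinfWW' : Wd ⊓ Wd' = ⊥ := by
    have hdisj : Disjoint
        {q : {q : ℕ × ℤ // 1 ≤ q.1 ∧ q.1 ≤ σ ∧ -(p q.1 : ℤ) ≤ q.2 ∧ q.2 ≤ (p q.1 : ℤ) - 1} |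
          (q : ℕ × ℤ).1 ≤ d}
        {q : {q : ℕ × ℤ // 1 ≤ q.1 ∧ q.1 ≤ σ ∧ -(p q.1 : ℤ) ≤ q.2 ∧ q.2 ≤ (p q.1 : ℤ) - 1} |
          d + 1 ≤ (q : ℕ × ℤ).1} := by
      rw [Set.disjoint_left]
      rintro q hq1 hq2
      simp only [Set.mem_setOf_eq] at hq1 hq2
      omega
    have hd2 := hv_li.disjoint_span_image hdisj
    have he1 : (fun q : {q : ℕ × ℤ // 1 ≤ q.1 ∧ q.1 ≤ σ ∧ -(p q.1 : ℤ) ≤ q.2 ∧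
        q.2 ≤ (p q.1 : ℤ) - 1} => (g ^ q.1.2) (v q.1.1)) ''
        {q | (q : ℕ × ℤ).1 ≤ d} = F '' ↑(SW_blk p 1 d 0) := by
      ext y
      simp only [Set.mem_image, Set.mem_setOf_eq, Finset.mem_coe]
      constructor
      · rintro ⟨⟨⟨r, j⟩, hq⟩, hle, rfl⟩
        have hle' : r ≤ d := hle
        have hq4 : j ≤ (p r:ℤ) - 1 := hq.2.2.2
        exact ⟨(r, j), SW_mem_blk_mk.2 ⟨hq.1, hle', hq.2.2.1, by omega⟩, rfl⟩
      · rintro ⟨⟨r, j⟩, hm, rfl⟩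
        obtain ⟨h1, h2, h3, h4⟩ := SW_mem_blk_mk.1 hm
        exact ⟨⟨(r, j), h1, (show r ≤ σ by omega), h3, (show j ≤ (p r:ℤ) - 1 by omega)⟩,
          h2, rfl⟩
    have he2 : (fun q : {q : ℕ × ℤ // 1 ≤ q.1 ∧ q.1 ≤ σ ∧ -(p q.1 : ℤ) ≤ q.2 ∧
        q.2 ≤ (p q.1 : ℤ) - 1} => (g ^ q.1.2) (v q.1.1)) ''
        {q | d + 1 ≤ (q : ℕ × ℤ).1} = F '' ↑(SW_blk p (d+1) σ 0) := by
      ext y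
      simp only [Set.mem_image, Set.mem_setOf_eq, Finset.mem_coe]
      constructor
      · rintro ⟨⟨⟨r, j⟩, hq⟩, hle, rfl⟩
        have hle' : d + 1 ≤ r := hle
        have hq2 : r ≤ σ := hq.2.1
        have hq4 : j ≤ (p r:ℤ) - 1 := hq.2.2.2
        exact ⟨(r, j), SW_mem_blk_mk.2 ⟨hle', hq2, hq.2.2.1, by omega⟩, rfl⟩
      · rintro ⟨⟨r, j⟩, hm, rfl⟩
        obtain ⟨h1, h2, h3, h4⟩ := SW_mem_blk_mk.1 hm
        exact ⟨⟨(r, j), (show 1 ≤ r by omega), h2, h3, (show j ≤ (p r:ℤ) - 1 by omega)⟩,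
          h1, rfl⟩
    rw [he1, he2] at hd2
    rw [hWset, hW'set]
    exact disjoint_iff.1 hd2
  have hsum2 : ∑ r ∈ Finset.Icc 1 d, (2 * p r - k0) + d * k0 = ∑ r ∈ Finset.Icc 1 d, 2 * p r := by
    have : ∑ r ∈ Finset.Icc 1 d, (2 * p r - k0) + ∑ r ∈ Finset.Icc 1 d, k0
        = ∑ r ∈ Finset.Icc 1 d, 2 * p r := by
      rw [← Finset.sum_add_distrib]
      refine Finset.sum_congr rfl fun r hr => ?_
      obtain ⟨h1, h2⟩ := Finset.mem_Icc.1 hr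
      have := hk0le2pr r h1 h2
      omega
    rw [← this]
    congr 1
    rw [Finset.sum_const, Nat.card_Icc, smul_eq_mul, Nat.add_sub_cancel]
  have hg6 : finrank k ↥(LinearMap.ker (N ^ k0) ⊓ Wd) = k0 * d := by
    have h3 : finrank k ↥(Wd' ⊔ (Wd ⊓ LinearMap.ker (N ^ k0)))
        + finrank k ↥(Wd' ⊓ (Wd ⊓ LinearMap.ker (N ^ k0)))
        = finrank k Wd' + finrank k ↥(Wd ⊓ LinearMap.ker (N ^ k0)) :=
      Submodule.finrank_sup_add_finrank_inf_eq _ _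
    have h4 : Wd' ⊓ (Wd ⊓ LinearMap.ker (N ^ k0)) = ⊥ := by
      rw [eq_bot_iff]
      intro x hx
      simp only [Submodule.mem_inf] at hx
      have hx2 : x ∈ Wd ⊓ Wd' := Submodule.mem_inf.2 ⟨hx.2.1, hx.1⟩
      rw [hinfWW'] at hx2
      exact hx2
    rw [h4, finrank_bot, add_zero, ← hkerdecomp] at h3
    have h5 : finrank k ↥(LinearMap.ker (N ^ k0) ⊓ Wd)
        = finrank k ↥(Wd ⊓ LinearMap.ker (N ^ k0)) := by rw [inf_comm]
    rw [h5]
    have h6 : finrank k (LinearMap.range (N ^ k0)) + d * k0 = finrank k Wd := by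
      rw [hrank', hrankWd, hsum2]
    have h7 : k0 * d = d * k0 := Nat.mul_comm _ _
    omega
  -- fifth goal
  have hNW : ∀ x ∈ Wd, N x ∈ Wd := by
    intro x hx
    have : N x = g x - x := by
      show (g.toLinearMap - LinearMap.id : Module.End k V) x = _
      simp [LinearMap.sub_apply]
    rw [this]
    exact Submodule.sub_mem Wd (hgmem x hx) hx
  have hg5 : finrank k ↥(LinearMap.ker N ⊓ Wd) = d := by
    -- upper bound
    have hφ : finrank k (LinearMap.range (N.domRestrict Wd))
        + finrank k (LinearMap.ker (N.domRestrict Wd)) = finrank k Wd :=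
      LinearMap.finrank_range_add_finrank_ker _
    rw [LinearMap.range_domRestrict, LinearMap.ker_domRestrict, SW_comap_finrank] at hφ
    have hindY : LinearIndependent k (fun x : ↥((SW_blk p 1 d 1 : Finset (ℕ×ℤ)) : Set (ℕ×ℤ)) =>
      (N ^ 1) (F ↑x)) := SW_KL p v B g hg halt hv1 hv2 hv3 hmono d hd1 hdσ 1 le_rfl
    have hYrank : finrank k (span k ((fun x => (N ^ 1) (F x)) '' ↑(SW_blk p 1 d 1)))
        = ∑ r ∈ Finset.Icc 1 d, (2 * p r - 1) := by
      rw [SW_spanrank (SW_blk p 1 d 1) (fun x => (N ^ 1) (F x)) hindY, SW_card_blk]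
    have hYle : span k ((fun x => (N ^ 1) (F x)) '' ↑(SW_blk p 1 d 1)) ≤ Submodule.map N Wd := by
      rw [Submodule.span_le]
      rintro _ ⟨⟨r, j⟩, hm, rfl⟩
      obtain ⟨h1, h2, h3, h4⟩ := SW_mem_blk_mk.1 (Finset.mem_coe.1 hm)
      refine ⟨F (r, j), ?_, by rw [pow_one]⟩
      rw [hWset]
      apply Submodule.subset_span
      exact ⟨(r, j), SW_mem_blk_mk.2 ⟨h1, h2, h3, by omega⟩, rfl⟩
    have hYle2 : ∑ r ∈ Finset.Icc 1 d, (2 * p r - 1) ≤ finrank k (Submodule.map N Wd) := by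
      rw [← hYrank]
      exact Submodule.finrank_mono hYle
    have hsum3 : ∑ r ∈ Finset.Icc 1 d, (2 * p r - 1) + d = ∑ r ∈ Finset.Icc 1 d, 2 * p r := by
      have : ∑ r ∈ Finset.Icc 1 d, (2 * p r - 1) + ∑ r ∈ Finset.Icc 1 d, 1
          = ∑ r ∈ Finset.Icc 1 d, 2 * p r := by
        rw [← Finset.sum_add_distrib]
        refine Finset.sum_congr rfl fun r hr => ?_
        obtain ⟨h1, h2⟩ := Finset.mem_Icc.1 hr
        have := hp1d r h1 h2
        omega
      rw [← this]
      congr 1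
      rw [Finset.sum_const, Nat.card_Icc, smul_eq_mul]
      omega
    have hupper : finrank k ↥(LinearMap.ker N ⊓ Wd) ≤ d := by
      rw [hrankWd] at hφ
      omega
    -- lower bound
    have hM := SW_ker_pow_le (N.restrict hNW) k0
    have hrestrk : finrank k (LinearMap.ker ((N.restrict hNW) ^ k0))
        = finrank k ↥(LinearMap.ker (N ^ k0) ⊓ Wd) := by
      rw [Module.End.pow_restrict k0 hNW, LinearMap.ker_restrict, SW_comap_finrank]
    have hrestr1 : finrank k (LinearMap.ker (N.restrict hNW))
        = finrank k ↥(LinearMap.ker N ⊓ Wd) := by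
      rw [LinearMap.ker_restrict, SW_comap_finrank]
    rw [hrestrk, hrestr1, hg6] at hM
    have hlower : d ≤ finrank k ↥(LinearMap.ker N ⊓ Wd) := by
      by_contra hcon
      push_neg at hcon
      have : k0 * finrank k ↥(LinearMap.ker N ⊓ Wd) < k0 * d :=
        (Nat.mul_lt_mul_left hk0).2 hcon
      omega
    omega
  exact ⟨hg1, hg2, hg3, hg4, hg5, hg6⟩

end
end

section
/- Let k be a field and V a k-vector space of dimension 2n with a nondegenerate alternating bilinear form (,). Let p_* = (p_1 ≥ … ≥ p_σ) ∈ 𝒫_n, let g be a unipotent isometry of V, N := g − 1, and let v_1, …, v_σ ∈ V satisfy: (g^i v_t, v_r) = 0 for all 1 ≤ t < r ≤ σ and i ∈ [−p_t, p_t − 1]; (v_r, g^i v_r) = 0 for i ∈ [−p_r + 1, p_r − 1]; (v_r, g^{p_r} v_r) = 1; and the vectors g^j v_t (t ∈ [1,σ], j ∈ [−p_t, p_t − 1]) form a basis of V. Assume that dim N^{k}(V) = Σ_{r=1}^{σ} max(2p_r − k, 0) for every integer k ≥ 0. Then for every r ∈ [1,σ] the subspace X_r = span{g^j v_r : j ∈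 [−p_r, p_r − 1]} satisfies gX_r = X_r, and (X_r, X_{r'}) = 0 for all r ≠ r' in [1,σ]. -/
section

variable {k V : Type*} [Field k] [AddCommGroup V] [Module k V]

/-- 3.5(c): with notation as in 3.5, if
`dim N^K(V) = Σ_{r=1}^σ max(2p_r − K, 0)` for every `K ≥ 0`, then each subspace
`X_r = span{g^j v_r : j ∈ [−p_r, p_r−1]}` is `g`-stable, and `(X_r, X_{r'}) = 0` for `r ≠ r'`. -/
theorem stmt_12 [FiniteDimensional k V] (n σ : ℕ) (p : ℕ → ℕ)
    (hp : IsPartitionOf n σ p)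
    (B : V →ₗ[k] V →ₗ[k] k)
    (halt : ∀ x : V, B x x = 0)
    (hnd : ∀ x : V, (∀ y : V, B x y = 0) → x = 0)
    (hdim : Module.finrank k V = 2 * n)
    (g : V ≃ₗ[k] V)
    (hg : ∀ x y : V, B (g x) (g y) = B x y)
    (hgu : IsNilpotent (g.toLinearMap - LinearMap.id : Module.End k V))
    (v : ℕ → V)
    (hv1 : ∀ r ∈ Finset.Icc 1 σ, ∀ t, 1 ≤ t → t < r →
      ∀ i : ℤ, -(p t : ℤ) ≤ i → i ≤ (p t : ℤ) - 1 → B ((g ^ i) (v t)) (v r) = 0)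
    (hv2 : ∀ r ∈ Finset.Icc 1 σ,
      ∀ i : ℤ, -(p r : ℤ) + 1 ≤ i → i ≤ (p r : ℤ) - 1 → B (v r) ((g ^ i) (v r)) = 0)
    (hv3 : ∀ r ∈ Finset.Icc 1 σ, B (v r) ((g ^ (p r : ℤ)) (v r)) = 1)
    (hv_li : LinearIndependent k
      (fun q : {q : ℕ × ℤ // 1 ≤ q.1 ∧ q.1 ≤ σ ∧ -(p q.1 : ℤ) ≤ q.2 ∧ q.2 ≤ (p q.1 : ℤ) - 1} =>
        (g ^ q.1.2) (v q.1.1)))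
    (hv_sp : Submodule.span k
      {y | ∃ t, 1 ≤ t ∧ t ≤ σ ∧ ∃ j : ℤ, -(p t : ℤ) ≤ j ∧ j ≤ (p t : ℤ) - 1 ∧ y = (g ^ j) (v t)}
      = ⊤)
    (hrank : ∀ K : ℕ, Module.finrank k
        (LinearMap.range ((g.toLinearMap - LinearMap.id : Module.End k V) ^ K))
      = ∑ r ∈ Finset.Icc 1 σ, (2 * p r - K)) :
    let X : ℕ → Submodule k V := fun r => Submodule.span k
      {y | ∃ j : ℤ, -(p r : ℤ) ≤ j ∧ j ≤ (p r : ℤ) - 1 ∧ y = (g ^ j) (v r)}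
    (∀ r ∈ Finset.Icc 1 σ, Submodule.map g.toLinearMap (X r) = X r) ∧
    (∀ r ∈ Finset.Icc 1 σ, ∀ r' ∈ Finset.Icc 1 σ, r ≠ r' →
      ∀ x ∈ X r, ∀ y ∈ X r', B x y = 0) := by
  classical
  intro X
  obtain ⟨hσ1, hp1, hpmono, hpsum⟩ := hp
  set N : Module.End k V := g.toLinearMap - LinearMap.id with hN
  have hXs : ∀ r, X r = Submodule.span k
      {y | ∃ j : ℤ, -(p r : ℤ) ≤ j ∧ j ≤ (p r : ℤ) - 1 ∧ y = (g ^ j) (v r)} := fun _ => rfl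
  -- ## basic group/power manipulation facts
  have mulappE : ∀ (a b : V ≃ₗ[k] V) (x : V), (a * b) x = a (b x) := fun _ _ _ => rfl
  have mul_app : ∀ (a b : ℤ) (x : V), (g ^ a) ((g ^ b) x) = (g ^ (a + b)) x := by
    intro a b x; rw [zpow_add]; rfl
  have inv_app : ∀ x : V, (g⁻¹ : V ≃ₗ[k] V) (g x) = x := by
    intro x; rw [show (g⁻¹ : V ≃ₗ[k] V) (g x) = (g⁻¹ * g) x from rfl, inv_mul_cancel]; rfl
  have inv_app' : ∀ x : V, g ((g⁻¹ : V ≃ₗ[k] V) x) = x := by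
    intro x; rw [show g ((g⁻¹ : V ≃ₗ[k] V) x) = (g * g⁻¹) x from rfl, mul_inv_cancel]; rfl
  have hgz : ∀ (i : ℤ) (x y : V), B ((g ^ i) x) ((g ^ i) y) = B x y := by
    intro i
    induction i using Int.induction_on with
    | zero => intro x y; simp
    | succ n ih =>
      intro x y
      rw [zpow_add_one, mulappE, mulappE, ih, hg]
    | pred n ih =>
      intro x y
      rw [zpow_sub_one, mulappE, mulappE, ih,
        ← hg ((g⁻¹ : V ≃ₗ[k] V) x) ((g⁻¹ : V ≃ₗ[k] V) y), inv_app', inv_app']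
  have hshiftL : ∀ (i : ℤ) (x y : V), B ((g ^ i) x) y = B x ((g ^ (-i)) y) := by
    intro i x y
    have h := hgz (-i) ((g ^ i) x) y
    rw [mul_app] at h
    simp only [neg_add_cancel, zpow_zero] at h
    rw [show ((1 : V ≃ₗ[k] V)) x = x from rfl] at h
    exact h.symm
  have hshiftR : ∀ (i : ℤ) (x y : V), B x ((g ^ i) y) = B ((g ^ (-i)) x) y := by
    intro i x y
    have h := hshiftL (-i) x y
    rw [neg_neg] at h
    exact h.symm
  have skew : ∀ x y : V, B x y = -B y x := by
    intro x y
    have h := halt (x + y)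
    simp only [map_add, LinearMap.add_apply] at h
    rw [halt x, halt y] at h
    linear_combination h
  have zn : ∀ (m : ℕ) (x : V), (g ^ (m : ℤ)) x = (g.toLinearMap ^ m) x := by
    intro m
    induction m with
    | zero => intro x; simp
    | succ m ih =>
      intro x
      rw [show ((m + 1 : ℕ) : ℤ) = (m : ℤ) + 1 by push_cast; ring,
        zpow_add_one, mulappE, pow_succ, Module.End.mul_apply]
      exact ih (g x)
  have Napp : ∀ x : V, N x = g x - x := by
    intro x; rw [hN, LinearMap.sub_apply]; rfl
  have Ncomm : ∀ (i : ℤ) (x : V), N ((g ^ i) x) = (g ^ i) (N x) := by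
    intro i x
    rw [Napp, Napp, map_sub]
    congr 1
    rw [show g ((g ^ i) x) = (g ^ (1 : ℤ)) ((g ^ i) x) by rw [zpow_one],
      show (g ^ i) (g x) = (g ^ i) ((g ^ (1 : ℤ)) x) by rw [zpow_one], mul_app, mul_app,
      add_comm]
  have NKcomm : ∀ (Kn : ℕ) (i : ℤ) (x : V), (N ^ Kn) ((g ^ i) x) = (g ^ i) ((N ^ Kn) x) := by
    intro Kn
    induction Kn with
    | zero => intro i x; simp
    | succ m ih =>
      intro i x
      rw [pow_succ, Module.End.mul_apply, Module.End.mul_apply, Ncomm, ih]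
  have hcastE : ∀ m : ℕ, ((m : ℕ) : Module.End k V) = ((m : k)) • (1 : Module.End k V) := by
    intro m; rw [← Algebra.algebraMap_eq_smul_one, map_natCast]
  have EXPN : ∀ (Kn : ℕ) (x : V), (N ^ Kn) x
      = ∑ m ∈ Finset.range (Kn + 1),
        ((-1 : k) ^ (Kn - m) * (Kn.choose m : k)) • ((g ^ (m : ℤ)) x) := by
    intro Kn x
    have hone : (-1 : Module.End k V) = (-1 : k) • (1 : Module.End k V) := by
      rw [neg_smul, one_smul]
    have hcomm : Commute (g.toLinearMap : Module.End k V) (-1 : Module.End k V) :=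
      (Commute.one_right _).neg_right
    have hNg : (N : Module.End k V) = g.toLinearMap + (-1) := by
      rw [hN, sub_eq_add_neg]; rfl
    have hexp : (N : Module.End k V) ^ Kn = ∑ m ∈ Finset.range (Kn + 1),
        ((-1 : k) ^ (Kn - m) * (Kn.choose m : k)) • (g.toLinearMap ^ m) := by
      rw [hNg, hcomm.add_pow]
      refine Finset.sum_congr rfl (fun m _ => ?_)
      rw [hone, smul_pow, one_pow, hcastE, mul_smul_comm, mul_smul_comm, mul_one, mul_one,
        smul_smul]
      congr 1
      ring
    rw [hexp, LinearMap.sum_apply]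
    refine Finset.sum_congr rfl (fun m _ => ?_)
    rw [LinearMap.smul_apply, zn m x]
  have EXPG : ∀ (Kn : ℕ) (x : V), (g ^ ((Kn : ℕ) : ℤ)) x
      = ∑ m ∈ Finset.range (Kn + 1), ((Kn.choose m : k)) • ((N ^ m) x) := by
    intro Kn x
    have hcomm : Commute (N : Module.End k V) (1 : Module.End k V) := Commute.one_right _
    have hgN : (g.toLinearMap : Module.End k V) = N + 1 := by
      rw [hN, show (1 : Module.End k V) = LinearMap.id from rfl]
      abel
    have hexp : (g.toLinearMap : Module.End k V) ^ Kn = ∑ m ∈ Finset.range (Kn + 1),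
        ((Kn.choose m : k)) • (N ^ m) := by
      rw [hgN, hcomm.add_pow]
      refine Finset.sum_congr rfl (fun m _ => ?_)
      rw [one_pow, mul_one, hcastE, mul_smul_comm, mul_one]
    rw [zn, hexp, LinearMap.sum_apply]
    refine Finset.sum_congr rfl (fun m _ => ?_)
    rw [LinearMap.smul_apply]
  -- ## membership helpers
  have memX : ∀ (r : ℕ) (j : ℤ), -(p r : ℤ) ≤ j → j ≤ (p r : ℤ) - 1 → (g ^ j) (v r) ∈ X r := by
    intro r j h1 h2
    rw [hXs r]
    exact Submodule.subset_span ⟨j, h1, h2, rfl⟩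
  have vmemX : ∀ r, 1 ≤ r → r ≤ σ → v r ∈ X r := by
    intro r h1 h2
    have hpr : 1 ≤ p r := hp1 r (Finset.mem_Icc.mpr ⟨h1, h2⟩)
    have hpr' : (1 : ℤ) ≤ (p r : ℤ) := by exact_mod_cast hpr
    have := memX r 0 (by omega) (by omega)
    simpa using this
  have lin_vanish : ∀ (f : V →ₗ[k] k) (S : Set V), (∀ x ∈ S, f x = 0) →
      ∀ x ∈ Submodule.span k S, f x = 0 := by
    intro f S hS x hx
    have hle : Submodule.span k S ≤ LinearMap.ker f :=
      Submodule.span_le.mpr (fun y hy => LinearMap.mem_ker.mpr (hS y hy))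
    exact LinearMap.mem_ker.mp (hle hx)
  have stabZpow : ∀ (Xs : Submodule k V), (∀ x ∈ Xs, g x ∈ Xs) →
      ∀ (i : ℤ), ∀ x ∈ Xs, (g ^ i) x ∈ Xs := by
    intro Xs hst
    have hinv : ∀ x ∈ Xs, (g⁻¹ : V ≃ₗ[k] V) x ∈ Xs := by
      have hle : Submodule.map g.toLinearMap Xs ≤ Xs := by
        rintro _ ⟨y, hy, rfl⟩; exact hst y hy
      have heq : Submodule.map g.toLinearMap Xs = Xs :=
        Submodule.eq_of_le_of_finrank_le hle (le_of_eq (LinearEquiv.finrank_map_eq g Xs).symm)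
      intro x hx
      rw [← heq] at hx
      obtain ⟨y, hy, rfl⟩ := hx
      rw [show (g.toLinearMap y : V) = g y from rfl, inv_app]
      exact hy
    intro i
    induction i using Int.induction_on with
    | zero => intro x hx; simpa using hx
    | succ n ih =>
      intro x hx
      rw [zpow_add_one, mulappE]
      exact ih _ (hst x hx)
    | pred n ih =>
      intro x hx
      rw [zpow_sub_one, mulappE]
      exact ih _ (hinv x hx)
  have stabN : ∀ (Xs : Submodule k V), (∀ x ∈ Xs, g x ∈ Xs) →
      ∀ (m : ℕ), ∀ x ∈ Xs, (N ^ m) x ∈ Xs := by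
    intro Xs hst m
    induction m with
    | zero => intro x hx; simpa using hx
    | succ m ih =>
      intro x hx
      rw [pow_succ, Module.End.mul_apply]
      refine ih _ ?_
      rw [Napp]
      exact sub_mem (hst x hx) hx
  -- ## values of the form on a single block
  have hvals : ∀ t, 1 ≤ t → t ≤ σ → ∀ c : ℤ, -(p t : ℤ) + 1 ≤ c → c ≤ (p t : ℤ) →
      B ((g ^ c) (v t)) (v t) = if c = (p t : ℤ) then (-1 : k) else 0 := by
    intro t h1 h2 c hc1 hc2
    by_cases hc : c = (p t : ℤ)
    · rw [if_pos hc, skew, hc, hv3 t (Finset.mem_Icc.mpr ⟨h1, h2⟩)]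
    · rw [if_neg hc, skew, hv2 t (Finset.mem_Icc.mpr ⟨h1, h2⟩) c hc1 (by omega), neg_zero]
  have entry : ∀ t, 1 ≤ t → t ≤ σ → ∀ (Kn : ℕ) (a b : ℤ), -(p t : ℤ) + 1 ≤ a - b →
      a - b + Kn ≤ (p t : ℤ) →
      B ((N ^ Kn) ((g ^ a) (v t))) ((g ^ b) (v t))
        = if a - b + Kn = (p t : ℤ) then (-1 : k) else 0 := by
    intro t ht1 htσ Kn a b h1 h2
    have e1 : B ((N ^ Kn) ((g ^ a) (v t))) ((g ^ b) (v t))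
        = B ((N ^ Kn) ((g ^ (a - b)) (v t))) (v t) := by
      rw [hshiftR, ← NKcomm, mul_app, show -b + a = a - b by ring]
    rw [e1, EXPN Kn, map_sum, LinearMap.sum_apply]
    have hterm : ∀ m ∈ Finset.range (Kn + 1),
        (B (((-1 : k) ^ (Kn - m) * (Kn.choose m : k)) • ((g ^ (m : ℤ)) ((g ^ (a - b)) (v t)))))
          (v t)
        = ((-1 : k) ^ (Kn - m) * (Kn.choose m : k)) *
            B ((g ^ ((m : ℤ) + (a - b))) (v t)) (v t) := by
      intro m _
      rw [map_smul, LinearMap.smul_apply, smul_eq_mul, mul_app]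
    rw [Finset.sum_congr rfl hterm]
    by_cases hc : a - b + (Kn : ℤ) = (p t : ℤ)
    · rw [if_pos hc]
      rw [Finset.sum_eq_single_of_mem Kn (Finset.self_mem_range_succ Kn)]
      · rw [show ((Kn : ℤ) + (a - b)) = (p t : ℤ) by omega,
          hvals t ht1 htσ _ (by omega) (by omega), if_pos rfl]
        simp
      · intro m hm hmne
        have hm' : (m : ℤ) ≤ (Kn : ℤ) := by
          exact_mod_cast Nat.lt_succ_iff.mp (Finset.mem_range.mp hm)
        have hm'' : (m : ℤ) ≠ (Kn : ℤ) := by exact_mod_cast hmne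
        rw [hvals t ht1 htσ _ (by omega) (by omega), if_neg (by omega), mul_zero]
    · rw [if_neg hc]
      refine Finset.sum_eq_zero (fun m hm => ?_)
      have hm' : (m : ℤ) ≤ (Kn : ℤ) := by
        exact_mod_cast Nat.lt_succ_iff.mp (Finset.mem_range.mp hm)
      rw [hvals t ht1 htσ _ (by omega) (by omega), if_neg (by omega), mul_zero]
  -- ## main induction
  have main : ∀ r, 1 ≤ r → r ≤ σ →
      (∀ x ∈ X r, g x ∈ X r) ∧
      (∀ t', r < t' → t' ≤ σ → ∀ x ∈ X r, ∀ y ∈ X t', B x y = 0) := by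
    intro r
    induction r using Nat.strong_induction_on with
    | _ r IH =>
    intro hr1 hrσ
    have IHst : ∀ t, 1 ≤ t → t < r → ∀ (i : ℤ), ∀ x ∈ X t, (g ^ i) x ∈ X t := by
      intro t h1 h2
      exact stabZpow (X t) (IH t h2 h1 (by omega)).1
    have IHN : ∀ t, 1 ≤ t → t < r → ∀ (m : ℕ), ∀ x ∈ X t, (N ^ m) x ∈ X t := by
      intro t h1 h2
      exact stabN (X t) (IH t h2 h1 (by omega)).1
    have IHorth : ∀ t t', 1 ≤ t → t < r → 1 ≤ t' → t' ≤ σ → t ≠ t' →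
        ∀ x ∈ X t, ∀ y ∈ X t', B x y = 0 := by
      intro t t' ht1 htr ht'1 ht'σ hne x hx y hy
      rcases Nat.lt_or_ge t t' with h | h
      · exact (IH t htr ht1 (by omega)).2 t' h ht'σ x hx y hy
      · have ht't : t' < t := by omega
        rw [skew, (IH t' (by omega) ht'1 (by omega)).2 t ht't (by omega) y hy x hx, neg_zero]
    set K : ℕ := 2 * p r with hK
    have hprK : 1 ≤ p r := hp1 r (Finset.mem_Icc.mpr ⟨hr1, hrσ⟩)
    set Z : Submodule k V := Submodule.span k {y : V | ∃ t, 1 ≤ t ∧ t < r ∧ y ∈ X t} with hZ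
    have XleZ : ∀ t, 1 ≤ t → t < r → X t ≤ Z := by
      intro t h1 h2 y hy
      exact Submodule.subset_span ⟨t, h1, h2, hy⟩
    have Zorth : ∀ t', 1 ≤ t' → t' ≤ σ → r ≤ t' → ∀ y ∈ X t', ∀ z ∈ Z, B z y = 0 := by
      intro t' h1 h2 h3 y hy z hz
      refine lin_vanish (B.flip y) _ ?_ z hz
      rintro x ⟨t, ht1, htr, hx⟩
      exact IHorth t t' ht1 htr h1 h2 (by omega) x hx y hy
    -- the key rank claim: range (N ^ K) ≤ Z
    have key : LinearMap.range (N ^ K) ≤ Z := by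
      set T : Finset ((_ : ℕ) × ℕ) :=
        (Finset.Ico 1 r).sigma (fun t => Finset.range (2 * p t - K)) with hT
      set u : ((_ : ℕ) × ℕ) → V :=
        fun q => (N ^ K) ((g ^ ((p q.1 : ℤ) - (K : ℤ) + (q.2 : ℤ))) (v q.1)) with hu
      have humem : ∀ t j, 1 ≤ t → t < r → u ⟨t, j⟩ ∈ X t := by
        intro t j h1 h2
        simp only [hu]
        exact IHN t h1 h2 K _ (IHst t h1 h2 _ _ (vmemX t h1 (by omega)))
      have uli : LinearIndependent k (fun q : ↥T => u ↑q) := by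
        rw [Fintype.linearIndependent_iff]
        intro c hc
        have hzero : ∀ m : ℕ, ∀ t j, ∀ ht : (⟨t, j⟩ : (_ : ℕ) × ℕ) ∈ T,
            2 * p t - K - j ≤ m → c ⟨⟨t, j⟩, ht⟩ = 0 := by
          intro m
          induction m with
          | zero =>
            intro t j ht hle
            exfalso
            have h2 : j < 2 * p t - K := by simpa using (Finset.mem_sigma.mp ht).2
            omega
          | succ m ihm =>
            intro t j ht hle
            have htI : t ∈ Finset.Ico 1 r := by simpa using (Finset.mem_sigma.mp ht).1
            obtain ⟨ht1, htr⟩ := Finset.mem_Ico.mp htI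
            have hjlt : j < 2 * p t - K := by simpa using (Finset.mem_sigma.mp ht).2
            have htσ : t ≤ σ := by omega
            have hymem : (g ^ (j : ℤ)) (v t) ∈ X t :=
              IHst t ht1 htr _ _ (vmemX t ht1 htσ)
            have hs : ∑ q : ↥T, c q * (B (u ↑q)) ((g ^ (j : ℤ)) (v t)) = 0 := by
              have h0 := congrArg (fun w : V => B w ((g ^ (j : ℤ)) (v t))) hc
              simpa only [map_sum, map_smul, LinearMap.sum_apply, LinearMap.smul_apply,
                smul_eq_mul, map_zero, LinearMap.zero_apply] using h0
            have hone : ∑ q : ↥T, c q * (B (u ↑q)) ((g ^ (j : ℤ)) (v t))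
                = c ⟨⟨t, j⟩, ht⟩ * (B (u ⟨t, j⟩)) ((g ^ (j : ℤ)) (v t)) := by
              refine Finset.sum_eq_single_of_mem (⟨⟨t, j⟩, ht⟩ : ↥T) (Finset.mem_univ _) ?_
              rintro ⟨⟨t', j'⟩, hb⟩ - hne
              have hbI : t' ∈ Finset.Ico 1 r := by simpa using (Finset.mem_sigma.mp hb).1
              obtain ⟨hb1, hbr⟩ := Finset.mem_Ico.mp hbI
              have hbj : j' < 2 * p t' - K := by simpa using (Finset.mem_sigma.mp hb).2
              by_cases het : t' = t
              · subst het
                by_cases hej : j' = j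
                · subst hej
                  exact absurd (Subtype.ext rfl) hne
                · rcases Nat.lt_or_ge j' j with hlt | hge
                  · have he := entry t' hb1 htσ K ((p t' : ℤ) - (K : ℤ) + (j' : ℤ))
                      (j : ℤ) (by omega) (by omega)
                    simp only [hu]
                    rw [he, if_neg (by omega), mul_zero]
                  · have hj'j : j < j' := by omega
                    rw [ihm t' j' hb (by omega), zero_mul]
              · rw [IHorth t' t hb1 hbr ht1 htσ het _ (humem t' j' hb1 hbr) _ hymem, mul_zero]
            rw [hone] at hs
            have hev : (B (u ⟨t, j⟩)) ((g ^ (j : ℤ)) (v t)) = -1 := by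
              have he := entry t ht1 htσ K ((p t : ℤ) - (K : ℤ) + (j : ℤ)) (j : ℤ)
                (by omega) (by omega)
              simp only [hu]
              rw [he, if_pos (by omega)]
            rw [hev, mul_neg_one, neg_eq_zero] at hs
            exact hs
        rintro ⟨⟨t, j⟩, ht⟩
        exact hzero (2 * p t - K - j) t j ht le_rfl
      have hW : Module.finrank k (Submodule.span k (Set.range (fun q : ↥T => u ↑q)))
          = T.card := by
        rw [finrank_span_eq_card uli]
        exact Fintype.card_coe T
      have hWle : Submodule.span k (Set.range fun q : ↥T => u ↑q)
          ≤ LinearMap.range (N ^ K) ⊓ Z := by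
        rw [Submodule.span_le]
        rintro _ ⟨⟨⟨t, j⟩, hq⟩, rfl⟩
        have hqI : t ∈ Finset.Ico 1 r := by simpa using (Finset.mem_sigma.mp hq).1
        obtain ⟨h1, h2⟩ := Finset.mem_Ico.mp hqI
        refine ⟨?_, XleZ t h1 h2 (humem t j h1 h2)⟩
        simp only [hu]
        exact ⟨_, rfl⟩
      have hTcard : T.card = ∑ t ∈ Finset.Ico 1 r, (2 * p t - K) := by
        rw [hT, Finset.card_sigma]
        simp
      have hDeq : ∑ t ∈ Finset.Icc 1 σ, (2 * p t - K)
          = ∑ t ∈ Finset.Ico 1 r, (2 * p t - K) := by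
        refine (Finset.sum_subset ?_ ?_).symm
        · intro t htm
          rw [Finset.mem_Ico] at htm
          rw [Finset.mem_Icc]
          omega
        · intro t htm hnm
          rw [Finset.mem_Icc] at htm
          rw [Finset.mem_Ico] at hnm
          have hrt : r ≤ t := by omega
          have := hpmono r t hr1 hrt htm.2
          omega
      have h1 : Module.finrank k (LinearMap.range (N ^ K))
          ≤ Module.finrank k ((LinearMap.range (N ^ K) ⊓ Z : Submodule k V)) := by
        rw [hrank K, hDeq, ← hTcard, ← hW]
        exact Submodule.finrank_mono hWle
      have h2 : LinearMap.range (N ^ K) ⊓ Z = LinearMap.range (N ^ K) :=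
        Submodule.eq_of_le_of_finrank_le inf_le_left h1
      rw [← h2]
      exact inf_le_right
    -- stability of X r
    set w : V := (g ^ (-(p r : ℤ))) (v r) with hw
    have hKz : (K : ℤ) = 2 * (p r : ℤ) := by rw [hK]; push_cast; ring
    have hxpart : ∑ m ∈ Finset.range K, ((K.choose m : k)) • ((N ^ m) w) ∈ X r := by
      refine Submodule.sum_mem _ (fun m hm => Submodule.smul_mem _ _ ?_)
      have hmK : m < K := Finset.mem_range.mp hm
      rw [EXPN m w]
      refine Submodule.sum_mem _ (fun l hl => Submodule.smul_mem _ _ ?_)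
      have hlm : l < m + 1 := Finset.mem_range.mp hl
      rw [hw, mul_app]
      have hl2 : (l : ℤ) ≤ (m : ℤ) := by exact_mod_cast Nat.lt_succ_iff.mp hlm
      have hm2 : (m : ℤ) ≤ (K : ℤ) - 1 := by
        have : (m : ℤ) < (K : ℤ) := by exact_mod_cast hmK
        omega
      exact memX r _ (by omega) (by omega)
    have hdecomp : (g ^ ((p r : ℤ))) (v r)
        = (∑ m ∈ Finset.range K, ((K.choose m : k)) • ((N ^ m) w)) + (N ^ K) w := by
      have hw1 : (g ^ ((K : ℕ) : ℤ)) w = (g ^ ((p r : ℤ))) (v r) := by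
        rw [hw, mul_app, show (K : ℤ) + -(p r : ℤ) = (p r : ℤ) by omega]
      rw [← hw1, EXPG K w, Finset.sum_range_succ, Nat.choose_self]
      simp
    have hzZ : (N ^ K) w ∈ Z := key (LinearMap.mem_range_self _ w)
    have hz0 : (N ^ K) w = 0 := by
      refine hnd _ (fun y => ?_)
      have hsp : ∀ y ∈ Submodule.span k {y | ∃ t, 1 ≤ t ∧ t ≤ σ ∧ ∃ j : ℤ,
          -(p t : ℤ) ≤ j ∧ j ≤ (p t : ℤ) - 1 ∧ y = (g ^ j) (v t)}, B ((N ^ K) w) y = 0 := by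
        refine lin_vanish (B ((N ^ K) w)) _ ?_
        rintro x ⟨t', ht'1, ht'σ, j, hj1, hj2, rfl⟩
        rcases Nat.lt_or_ge t' r with hlt | hge
        · have hzeq : (N ^ K) w = (g ^ ((p r : ℤ))) (v r)
              - ∑ m ∈ Finset.range K, ((K.choose m : k)) • ((N ^ m) w) := by
            rw [hdecomp]; abel
          rw [hzeq, map_sub, LinearMap.sub_apply]
          have hterm1 : B ((g ^ ((p r : ℤ))) (v r)) ((g ^ j) (v t')) = 0 := by
            rw [hshiftL]
            have hmem : (g ^ (-(p r : ℤ))) ((g ^ j) (v t')) ∈ X t' :=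
              IHst t' ht'1 hlt _ _ (memX t' j hj1 hj2)
            rw [hXs t'] at hmem
            refine lin_vanish (B (v r)) _ ?_ _ hmem
            rintro x' ⟨i, hi1, hi2, rfl⟩
            rw [skew, hv1 r (Finset.mem_Icc.mpr ⟨hr1, hrσ⟩) t' ht'1 hlt i hi1 hi2, neg_zero]
          have hterm2 : B (∑ m ∈ Finset.range K, ((K.choose m : k)) • ((N ^ m) w))
              ((g ^ j) (v t')) = 0 := by
            rw [skew, IHorth t' r ht'1 hlt hr1 hrσ (by omega) _ (memX t' j hj1 hj2) _ hxpart,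
              neg_zero]
          rw [hterm1, hterm2, sub_zero]
        · exact Zorth t' ht'1 ht'σ hge _ (memX t' j hj1 hj2) _ hzZ
      refine hsp y ?_
      rw [hv_sp]
      exact Submodule.mem_top
    have hgpmem : (g ^ ((p r : ℤ))) (v r) ∈ X r := by
      rw [hdecomp, hz0, add_zero]
      exact hxpart
    have stR : ∀ x ∈ X r, g x ∈ X r := by
      intro x hx
      rw [hXs r] at hx
      induction hx using Submodule.span_induction with
      | mem y hy =>
        obtain ⟨j, hj1, hj2, rfl⟩ := hy
        rw [show g ((g ^ j) (v r)) = (g ^ (1 : ℤ)) ((g ^ j) (v r)) by rw [zpow_one], mul_app]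
        by_cases hcc : 1 + j = (p r : ℤ)
        · rw [hcc]
          exact hgpmem
        · exact memX r _ (by omega) (by omega)
      | zero =>
        rw [map_zero]
        exact Submodule.zero_mem _
      | add x y hx hy ihx ihy =>
        rw [map_add]
        exact Submodule.add_mem _ ihx ihy
      | smul c x hx ihx =>
        rw [map_smul]
        exact Submodule.smul_mem _ _ ihx
    refine ⟨stR, ?_⟩
    intro t' hrt' ht'σ x hx y hy
    have hstz := stabZpow (X r) stR
    rw [hXs t'] at hy
    refine lin_vanish (B x) _ ?_ y hy
    rintro y' ⟨j, hj1, hj2, rfl⟩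
    rw [hshiftR]
    have hmem : (g ^ (-j)) x ∈ X r := hstz (-j) x hx
    rw [hXs r] at hmem
    refine lin_vanish (B.flip (v t')) _ ?_ _ hmem
    rintro x' ⟨i, hi1, hi2, rfl⟩
    exact hv1 t' (Finset.mem_Icc.mpr ⟨by omega, ht'σ⟩) r hr1 hrt' i hi1 hi2
  -- ## conclusion
  constructor
  · intro r hr
    rw [Finset.mem_Icc] at hr
    have hmain := (main r hr.1 hr.2).1
    have hle : Submodule.map g.toLinearMap (X r) ≤ X r := by
      rintro _ ⟨y, hy, rfl⟩
      exact hmain y hy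
    exact Submodule.eq_of_le_of_finrank_le hle
      (le_of_eq (LinearEquiv.finrank_map_eq g (X r)).symm)
  · intro r hr r' hr' hne x hx y hy
    rw [Finset.mem_Icc] at hr hr'
    rcases Nat.lt_or_ge r r' with h | h
    · exact (main r hr.1 hr.2).2 r' h hr'.2 x hx y hy
    · have hlt : r' < r := by omega
      rw [skew, (main r' hr'.1 hr'.2).2 r hlt hr.2 y hy x hx, neg_zero]

end
end

section
/- Let k be a field and V a k-vector space with basis e_1, …, e_n, e'_1, …, e'_n, equipped with the alternating bilinear form determined by (e_i, e'_j) = δ_{ij}, (e_i, e_j) = 0, (e'_i, e'_j) = 0. Let p_* = (p_1 ≥ … ≥ p_σ) ∈ 𝒫_n and set P_r = p_1 + … + p_r (P_0 = 0). For each h ∈ [1,σ] let g_h ∈ GL(V) be the linear map fixing e_i and e'_i for all i ∉ [P_{h−1}+1, P_h] and given on the remaining basis vectors by: g_h(e_i) = e_i + e_{i+1} for i ∈ [P_{h−1}+1, P_h − 1]; g_h(e_{P_h}) = e_{P_h} + Σ_{v=1}^{p_h} (−1)^v e'_{P_h − v + 1}; and g_h(e'_{P_h − j}) = Σ_{v=0}^{p_h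 − j − 1} (−1)^v e'_{P_h − j − v} for j ∈ [0, p_h − 1]. Then each g_h is an isometry of the form, the g_h pairwise commute, and g := g_1 g_2 ⋯ g_σ is a unipotent isometry whose Jordan blocks have sizes 2p_1, 2p_2, …, 2p_σ; that is, V has a basis {w_{t,j} : t ∈ [1,σ], j ∈ [1, 2p_t]} with (g − 1)w_{t,j} = w_{t,j+1} for j ∈ [1, 2p_t − 1] and (g − 1)w_{t,2p_t} = 0. -/
section

variable {k V : Type*} [Field k] [AddCommGroup V] [Module k V]

section
variable {k M : Type*} [Field k] [AddCommGroup M] [Module k M]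

lemma aux_hockey (q m : ℕ) : ∑ s ∈ Finset.range q, s.choose m = q.choose (m+1) := by
  induction q with
  | zero => simp
  | succ q ih => rw [Finset.sum_range_succ, ih, Nat.choose_succ_succ q m, Nat.add_comm]

lemma aux_delta (A D i : ℕ) (hAD : A ≤ D) :
    ∑ w ∈ Finset.range A, ((-1:k)^w) * (if i = D - w then 1 else 0)
    = if D - A < i ∧ i ≤ D then (-1:k)^(D - i) else 0 := by
  by_cases hi : D - A < i ∧ i ≤ D
  · rw [if_pos hi, Finset.sum_eq_single (D - i)]
    · rw [if_pos (by omega), mul_one]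
    · intro b hb hne
      rw [Finset.mem_range] at hb
      rw [if_neg (by omega), mul_zero]
    · intro hnot
      rw [Finset.mem_range] at hnot
      omega
  · rw [if_neg hi, Finset.sum_eq_zero]
    intro w hw
    rw [Finset.mem_range] at hw
    rw [if_neg (by omega), mul_zero]

lemma aux_Icc1 (q : ℕ) (f : ℕ → M) :
    ∑ v ∈ Finset.Icc 1 q, f v = ∑ w ∈ Finset.range q, f (w+1) := by
  induction q with
  | zero => simp
  | succ q ih => rw [Finset.sum_Icc_succ_top (by omega), ih, Finset.sum_range_succ]

lemma aux_sumA (q m : ℕ) (x : ℕ → M) :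
    ∑ s ∈ Finset.range q, (((-1:k)^(s+1) * (s.choose m : k)) •
      (∑ i ∈ Finset.range (q - 1 - s), ((-1:k)^(i+1)) • x (s + 1 + i)))
    = ∑ s ∈ Finset.range q, (((-1:k)^(s+1) * (s.choose (m+1) : k)) • x s) := by
  induction q with
  | zero => simp
  | succ q ih =>
    rw [Finset.sum_range_succ, Finset.sum_range_succ (f := fun s => ((-1:k)^(s+1) * (s.choose (m+1) : k)) • x s)]
    have hstep : ∀ s ∈ Finset.range q,
        (((-1:k)^(s+1) * (s.choose m : k)) •
          (∑ i ∈ Finset.range (q + 1 - 1 - s), ((-1:k)^(i+1)) • x (s + 1 + i)))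
        = (((-1:k)^(s+1) * (s.choose m : k)) •
          (∑ i ∈ Finset.range (q - 1 - s), ((-1:k)^(i+1)) • x (s + 1 + i)))
          + (((-1:k)^(s+1) * (s.choose m : k)) * ((-1:k)^(q - s))) • x q := by
      intro s hs
      rw [Finset.mem_range] at hs
      rw [show q + 1 - 1 - s = (q - 1 - s) + 1 by omega, Finset.sum_range_succ,
        show s + 1 + (q - 1 - s) = q by omega, show (q - 1 - s) + 1 = q - s by omega,
        smul_add, smul_smul]
    rw [Finset.sum_congr rfl hstep, Finset.sum_add_distrib, ih]
    rw [show q + 1 - 1 - q = 0 by omega]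
    simp only [Finset.range_zero, Finset.sum_empty, smul_zero, add_zero]
    congr 1
    rw [← Finset.sum_smul]
    congr 1
    have : ∀ s ∈ Finset.range q, ((-1:k)^(s+1) * (s.choose m : k)) * ((-1:k)^(q - s))
        = ((-1:k)^(q+1)) * (s.choose m : k) := by
      intro s hs
      rw [Finset.mem_range] at hs
      rw [mul_right_comm, ← pow_add, show s + 1 + (q - s) = q + 1 by omega]
    rw [Finset.sum_congr rfl this, ← Finset.mul_sum]
    push_cast [← aux_hockey q m]
    ring
end

/-- 2.5, 2.6: let `V` have basis `e_1, …, e_n, e'_1, …, e'_n` and the alternating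
bilinear form with `(e_i, e'_j) = δ_{ij}`, `(e_i, e_j) = (e'_i, e'_j) = 0`. For `p_* ∈ 𝒫_n` and
`P_r = p_1 + … + p_r`, let `g_h ∈ GL(V)` (`h ∈ [1,σ]`) act as specified on the basis vectors with
indices in `[P_{h−1}+1, P_h]` and fix the others. Then each `g_h` is an isometry, the `g_h`
pairwise commute, and `g = g_1 g_2 ⋯ g_σ` is a unipotent isometry whose Jordan blocks have sizes
`2p_1, …, 2p_σ`: there is a basis `w_{t,j}` (`t ∈ [1,σ]`, `j ∈ [1, 2p_t]`) with
`(g−1) w_{t,j} = w_{t,j+1}` for `j < 2p_t` and `(g−1) w_{t,2p_t} = 0`. -/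
theorem stmt_14 [FiniteDimensional k V] (n σ : ℕ) (p : ℕ → ℕ)
    (hp : IsPartitionOf n σ p)
    (e e' : ℕ → V)
    (hbasis_li : LinearIndependent k
      (Sum.elim (fun i : {i : ℕ // 1 ≤ i ∧ i ≤ n} => e i.1)
                (fun i : {i : ℕ // 1 ≤ i ∧ i ≤ n} => e' i.1)))
    (hbasis_sp : Submodule.span k
      (Set.range (Sum.elim (fun i : {i : ℕ // 1 ≤ i ∧ i ≤ n} => e i.1)
                           (fun i : {i : ℕ // 1 ≤ i ∧ i ≤ n} => e' i.1))) = ⊤)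
    (B : V →ₗ[k] V →ₗ[k] k)
    (halt : ∀ x : V, B x x = 0)
    (hBee' : ∀ i ∈ Finset.Icc 1 n, ∀ j ∈ Finset.Icc 1 n,
      B (e i) (e' j) = if i = j then 1 else 0)
    (hBee : ∀ i ∈ Finset.Icc 1 n, ∀ j ∈ Finset.Icc 1 n, B (e i) (e j) = 0)
    (hBe'e' : ∀ i ∈ Finset.Icc 1 n, ∀ j ∈ Finset.Icc 1 n, B (e' i) (e' j) = 0)
    (G : ℕ → (V ≃ₗ[k] V))
    (hGfix : ∀ h ∈ Finset.Icc 1 σ, ∀ i ∈ Finset.Icc 1 n,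
      (i < partialSum p (h - 1) + 1 ∨ partialSum p h < i) →
      G h (e i) = e i ∧ G h (e' i) = e' i)
    (hGstep : ∀ h ∈ Finset.Icc 1 σ, ∀ i,
      partialSum p (h - 1) + 1 ≤ i → i ≤ partialSum p h - 1 →
      G h (e i) = e i + e (i + 1))
    (hGlast : ∀ h ∈ Finset.Icc 1 σ,
      G h (e (partialSum p h)) = e (partialSum p h)
        + ∑ w ∈ Finset.Icc 1 (p h), ((-1 : k) ^ w) • e' (partialSum p h - w + 1))
    (hGdual : ∀ h ∈ Finset.Icc 1 σ, ∀ j, j ≤ p h - 1 →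
      G h (e' (partialSum p h - j)) =
        ∑ w ∈ Finset.range (p h - j), ((-1 : k) ^ w) • e' (partialSum p h - j - w)) :
    (∀ h ∈ Finset.Icc 1 σ, ∀ x y : V, B (G h x) (G h y) = B x y) ∧
    (∀ h ∈ Finset.Icc 1 σ, ∀ h' ∈ Finset.Icc 1 σ, G h * G h' = G h' * G h) ∧
    (let g : V ≃ₗ[k] V := ((List.range σ).map (fun t => G (t + 1))).prod
     (∀ x y : V, B (g x) (g y) = B x y) ∧
     IsNilpotent (g.toLinearMap - LinearMap.id : Module.End k V) ∧
     ∃ w : ℕ → ℕ → V,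
       LinearIndependent k
         (fun q : {q : ℕ × ℕ // 1 ≤ q.1 ∧ q.1 ≤ σ ∧ 1 ≤ q.2 ∧ q.2 ≤ 2 * p q.1} =>
           w q.1.1 q.1.2) ∧
       Submodule.span k
         (Set.range fun q : {q : ℕ × ℕ // 1 ≤ q.1 ∧ q.1 ≤ σ ∧ 1 ≤ q.2 ∧ q.2 ≤ 2 * p q.1} =>
           w q.1.1 q.1.2) = ⊤ ∧
       (∀ t ∈ Finset.Icc 1 σ, ∀ j, 1 ≤ j → j + 1 ≤ 2 * p t →
         g (w t j) - w t j = w t (j + 1)) ∧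
       (∀ t ∈ Finset.Icc 1 σ, g (w t (2 * p t)) - w t (2 * p t) = 0)) := by
  obtain ⟨hσ, hp1, hmono, hsum⟩ := hp
  -- basic facts about partial sums
  have pS0 : partialSum p 0 = 0 := by simp [partialSum]
  have pSsucc : ∀ h, 1 ≤ h → partialSum p h = partialSum p (h-1) + p h := by
    intro h h1
    obtain ⟨h', rfl⟩ : ∃ h', h = h' + 1 := ⟨h - 1, by omega⟩
    rw [partialSum, Finset.sum_Icc_succ_top (by omega), ← partialSum]
    simp
  have pSmono : ∀ h h', h ≤ h' → partialSum p h ≤ partialSum p h' := by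
    intro h h' hh
    exact Finset.sum_le_sum_of_subset (Finset.Icc_subset_Icc_right hh)
  have pS_le_n : ∀ h, h ≤ σ → partialSum p h ≤ n := by
    intro h hh; rw [← hsum]; exact pSmono h σ hh
  have hP : ∀ h, 1 ≤ h → h ≤ σ → partialSum p (h-1) + p h = partialSum p h := by
    intro h h1 h2; rw [pSsucc h h1]
  have hp1' : ∀ h, 1 ≤ h → h ≤ σ → 1 ≤ p h := by
    intro h h1 h2; exact hp1 h (Finset.mem_Icc.2 ⟨h1, h2⟩)
  -- skew symmetry
  have hskew : ∀ x y : V, B x y = - B y x := by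
    intro x y
    have h2 := halt (x + y)
    simp only [map_add, LinearMap.add_apply, halt] at h2
    linear_combination h2
  -- the spanning set
  set S : Set V := Set.range (Sum.elim (fun i : {i : ℕ // 1 ≤ i ∧ i ≤ n} => e i.1)
                           (fun i : {i : ℕ // 1 ≤ i ∧ i ≤ n} => e' i.1)) with hSdef
  have hScases : ∀ x ∈ S, ∃ i, 1 ≤ i ∧ i ≤ n ∧ (x = e i ∨ x = e' i) := by
    rintro x ⟨(⟨i, h1, h2⟩ | ⟨i, h1, h2⟩), rfl⟩
    · exact ⟨i, h1, h2, Or.inl rfl⟩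
    · exact ⟨i, h1, h2, Or.inr rfl⟩
  have hSmem : ∀ i, 1 ≤ i → i ≤ n → e i ∈ S ∧ e' i ∈ S := by
    intro i h1 h2
    exact ⟨⟨Sum.inl ⟨i, h1, h2⟩, rfl⟩, ⟨Sum.inr ⟨i, h1, h2⟩, rfl⟩⟩
  -- ISOMETRY OF EACH G h
  have hiso : ∀ h ∈ Finset.Icc 1 σ, ∀ x y : V, B (G h x) (G h y) = B x y := by
    intro h hh
    have hh' := Finset.mem_Icc.1 hh
    obtain ⟨h1, h2⟩ := hh'
    have hPh : partialSum p (h-1) + p h = partialSum p h := hP h h1 h2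
    have hPn : partialSum p h ≤ n := pS_le_n h h2
    have hq1 : 1 ≤ p h := hp1' h h1 h2
    set a := partialSum p (h-1) with ha
    set P := partialSum p h with hPdef
    set q := p h with hqdef
    -- local expansions
    have hout : ∀ i, 1 ≤ i → i ≤ n → (i ≤ a ∨ P < i) →
        G h (e i) = e i ∧ G h (e' i) = e' i := by
      intro i hi1 hi2 hio
      exact hGfix h hh i (Finset.mem_Icc.2 ⟨hi1, hi2⟩) (by omega)
    have hstep' : ∀ i, a + 1 ≤ i → i ≤ P - 1 → G h (e i) = e i + e (i+1) :=
      fun i u v => hGstep h hh i u v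
    have hlast' : G h (e P) = e P + ∑ w ∈ Finset.Icc 1 q, ((-1:k)^w) • e' (P - w + 1) :=
      hGlast h hh
    have hdual' : ∀ j, j ≤ q - 1 → G h (e' (P - j)) =
        ∑ w ∈ Finset.range (q - j), ((-1:k)^w) • e' (P - j - w) :=
      fun j u => hGdual h hh j u
    -- symmetric transfer
    have sym : ∀ x y : V, B (G h x) (G h y) = B x y → B (G h y) (G h x) = B y x := by
      intro x y hxy
      rw [hskew (G h y) (G h x), hxy, ← hskew]
    -- tail sums
    have htail : ∀ i, 1 ≤ i → i ≤ n →
        ∑ v ∈ Finset.Icc 1 q, ((-1:k)^v) * (B (e i) (e' (P - v + 1)))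
        = if a < i ∧ i ≤ P then -(-1:k)^(P - i) else 0 := by
      intro i hi1 hi2
      rw [aux_Icc1 q (fun v => ((-1:k)^v) * (B (e i) (e' (P - v + 1))))]
      have step : ∀ w ∈ Finset.range q, ((-1:k)^(w+1)) * (B (e i) (e' (P - (w+1) + 1)))
          = -(((-1:k)^w) * (if i = P - w then 1 else 0)) := by
        intro w hw
        rw [Finset.mem_range] at hw
        rw [show P - (w+1) + 1 = P - w by omega,
          hBee' i (Finset.mem_Icc.2 ⟨hi1, hi2⟩) (P - w) (Finset.mem_Icc.2 ⟨by omega, by omega⟩),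
          pow_succ]
        ring
      rw [Finset.sum_congr rfl step, Finset.sum_neg_distrib,
        aux_delta q P i (by omega), show P - q = a by omega]
      split_ifs <;> simp
    have hdtail : ∀ i, 1 ≤ i → i ≤ n → ∀ j, j ≤ q - 1 →
        ∑ w ∈ Finset.range (q - j), ((-1:k)^w) * (B (e i) (e' (P - j - w)))
        = if a < i ∧ i ≤ P - j then (-1:k)^(P - j - i) else 0 := by
      intro i hi1 hi2 j hj
      have step : ∀ w ∈ Finset.range (q - j), ((-1:k)^w) * (B (e i) (e' (P - j - w)))
          = ((-1:k)^w) * (if i = P - j - w then 1 else 0) := by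
        intro w hw
        rw [Finset.mem_range] at hw
        rw [hBee' i (Finset.mem_Icc.2 ⟨hi1, hi2⟩) (P - j - w)
          (Finset.mem_Icc.2 ⟨by omega, by omega⟩)]
      rw [Finset.sum_congr rfl step, aux_delta (q - j) (P - j) i (by omega),
        show P - j - (q - j) = a by omega]
    -- normalization simp set
    have mee : ∀ i, 1 ≤ i → i ≤ n → ∀ m, 1 ≤ m → m ≤ n →
        B (G h (e i)) (G h (e m)) = B (e i) (e m) := by
      have mee_aux : ∀ i, 1 ≤ i → i ≤ n → ¬(a < i ∧ i = P) → ∀ m, 1 ≤ m → m ≤ n →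
          B (G h (e i)) (G h (e m)) = B (e i) (e m) := by
        intro i hi1 hi2 hitop m hm1 hm2
        by_cases him : i ≤ a ∨ P < i
        · -- i out
          rw [(hout i hi1 hi2 him).1]
          by_cases hmm : m ≤ a ∨ P < m
          · rw [(hout m hm1 hm2 hmm).1]
          · by_cases hmP : m = P
            · subst hmP
              rw [hlast', map_add, map_sum]
              simp only [map_smul, smul_eq_mul]
              rw [htail i hi1 hi2, if_neg (by omega),
                hBee i (Finset.mem_Icc.2 ⟨hi1, hi2⟩) P (Finset.mem_Icc.2 ⟨by omega, by omega⟩)]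
              ring
            · rw [hstep' m (by omega) (by omega), map_add,
                hBee i (Finset.mem_Icc.2 ⟨hi1, hi2⟩) m (Finset.mem_Icc.2 ⟨hm1, hm2⟩),
                hBee i (Finset.mem_Icc.2 ⟨hi1, hi2⟩) (m+1) (Finset.mem_Icc.2 ⟨by omega, by omega⟩)]
              ring
        · -- i low
          have hilow : a + 1 ≤ i ∧ i ≤ P - 1 := by omega
          rw [hstep' i hilow.1 hilow.2, map_add, LinearMap.add_apply]
          by_cases hmm : m ≤ a ∨ P < m
          · rw [(hout m hm1 hm2 hmm).1,
              hBee i (Finset.mem_Icc.2 ⟨hi1, hi2⟩) m (Finset.mem_Icc.2 ⟨hm1, hm2⟩),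
              hBee (i+1) (Finset.mem_Icc.2 ⟨by omega, by omega⟩) m (Finset.mem_Icc.2 ⟨hm1, hm2⟩)]
            ring
          · by_cases hmP : m = P
            · subst hmP
              rw [hlast']
              simp only [map_add, map_sum, map_smul, LinearMap.add_apply, smul_eq_mul]
              rw [htail i hi1 hi2, htail (i+1) (by omega) (by omega),
                if_pos (by omega), if_pos (by omega),
                hBee i (Finset.mem_Icc.2 ⟨hi1, hi2⟩) P (Finset.mem_Icc.2 ⟨by omega, by omega⟩),
                hBee (i+1) (Finset.mem_Icc.2 ⟨by omega, by omega⟩) P (Finset.mem_Icc.2 ⟨by omega, by omega⟩),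
                show P - i = (P - (i+1)) + 1 by omega, pow_succ]
              ring
            · rw [hstep' m (by omega) (by omega)]
              simp only [map_add, LinearMap.add_apply]
              rw [hBee i (Finset.mem_Icc.2 ⟨hi1, hi2⟩) m (Finset.mem_Icc.2 ⟨hm1, hm2⟩),
                hBee i (Finset.mem_Icc.2 ⟨hi1, hi2⟩) (m+1) (Finset.mem_Icc.2 ⟨by omega, by omega⟩),
                hBee (i+1) (Finset.mem_Icc.2 ⟨by omega, by omega⟩) m (Finset.mem_Icc.2 ⟨hm1, hm2⟩),
                hBee (i+1) (Finset.mem_Icc.2 ⟨by omega, by omega⟩) (m+1) (Finset.mem_Icc.2 ⟨by omega, by omega⟩)]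
              ring
      intro i hi1 hi2 m hm1 hm2
      by_cases hit : a < i ∧ i = P
      · by_cases hmt : a < m ∧ m = P
        · rw [hit.2, hmt.2, halt, halt]
        · exact sym (e m) (e i) (mee_aux m hm1 hm2 hmt i hi1 hi2)
      · exact mee_aux i hi1 hi2 hit m hm1 hm2
    have he'e'zero : ∀ (s2 : Finset ℕ) (c2 : ℕ → k) (φ2 : ℕ → ℕ), ∀ u, 1 ≤ u → u ≤ n →
        (∀ b ∈ s2, 1 ≤ φ2 b ∧ φ2 b ≤ n) →
        B (e' u) (∑ b ∈ s2, c2 b • e' (φ2 b)) = 0 := by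
      intro s2 c2 φ2 u hu1 hu2 hb
      rw [map_sum]
      apply Finset.sum_eq_zero
      intro b hbmem
      rw [map_smul, smul_eq_mul,
        hBe'e' u (Finset.mem_Icc.2 ⟨hu1, hu2⟩) (φ2 b) (Finset.mem_Icc.2 (hb b hbmem)), mul_zero]
    have mee' : ∀ i, 1 ≤ i → i ≤ n → ∀ m, 1 ≤ m → m ≤ n →
        B (G h (e i)) (G h (e' m)) = B (e i) (e' m) := by
      intro i hi1 hi2 m hm1 hm2
      by_cases hmm : m ≤ a ∨ P < m
      · -- m out
        rw [(hout m hm1 hm2 hmm).2]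
        by_cases him : i ≤ a ∨ P < i
        · rw [(hout i hi1 hi2 him).1]
        · by_cases hiP : i = P
          · subst hiP
            rw [hlast']
            simp only [map_add, map_sum, map_smul, LinearMap.add_apply,
              LinearMap.sum_apply, LinearMap.smul_apply, smul_eq_mul]
            rw [Finset.sum_eq_zero, add_zero]
            intro v hv
            rw [Finset.mem_Icc] at hv
            rw [hBe'e' (P - v + 1) (Finset.mem_Icc.2 ⟨by omega, by omega⟩) m
              (Finset.mem_Icc.2 ⟨hm1, hm2⟩), mul_zero]
          · rw [hstep' i (by omega) (by omega), map_add, LinearMap.add_apply,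
              hBee' (i+1) (Finset.mem_Icc.2 ⟨by omega, by omega⟩) m (Finset.mem_Icc.2 ⟨hm1, hm2⟩),
              if_neg (by omega), add_zero]
      · -- m in block : m = P - j
        obtain ⟨j, hj, rfl⟩ : ∃ j, j ≤ q - 1 ∧ m = P - j := ⟨P - m, by omega, by omega⟩
        rw [hdual' j hj]
        by_cases him : i ≤ a ∨ P < i
        · rw [(hout i hi1 hi2 him).1]
          simp only [map_sum, map_smul, smul_eq_mul]
          rw [hdtail i hi1 hi2 j hj, if_neg (by omega),
            hBee' i (Finset.mem_Icc.2 ⟨hi1, hi2⟩) (P - j) (Finset.mem_Icc.2 ⟨by omega, by omega⟩),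
            if_neg (by omega)]
        · by_cases hiP : i = P
          · subst hiP
            rw [hlast']
            simp only [map_add, map_sum, map_smul, LinearMap.add_apply,
              LinearMap.sum_apply, LinearMap.smul_apply, smul_eq_mul]
            have split : ∀ x ∈ Finset.range (q - j),
                ((-1:k)^x) * ((B (e P)) (e' (P - j - x))
                  + ∑ v ∈ Finset.Icc 1 q, ((-1:k)^v) * (B (e' (P - v + 1))) (e' (P - j - x)))
                = ((-1:k)^x) * (B (e P)) (e' (P - j - x)) := by
              intro x hx
              rw [Finset.mem_range] at hx
              rw [Finset.sum_eq_zero (fun v hv => ?_), add_zero]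
              rw [Finset.mem_Icc] at hv
              rw [hBe'e' (P - v + 1) (Finset.mem_Icc.2 ⟨by omega, by omega⟩) (P - j - x)
                (Finset.mem_Icc.2 ⟨by omega, by omega⟩), mul_zero]
            rw [Finset.sum_congr rfl split, hdtail P (by omega) (by omega) j hj]
            rw [hBee' P (Finset.mem_Icc.2 ⟨by omega, by omega⟩) (P - j)
              (Finset.mem_Icc.2 ⟨by omega, by omega⟩)]
            by_cases hj0 : j = 0
            · subst hj0
              rw [if_pos (by omega), if_pos (by omega), show P - 0 - P = 0 by omega, pow_zero]
            · rw [if_neg (by omega), if_neg (by omega)]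
          · -- i low
            rw [hstep' i (by omega) (by omega)]
            simp only [map_add, map_sum, map_smul, LinearMap.add_apply,
              LinearMap.sum_apply, LinearMap.smul_apply, smul_eq_mul]
            have expand : ∀ w ∈ Finset.range (q - j),
                ((-1:k)^w) * (B (e i) (e' (P - j - w)) + B (e (i+1)) (e' (P - j - w)))
                = ((-1:k)^w) * (B (e i) (e' (P - j - w)))
                  + ((-1:k)^w) * (B (e (i+1)) (e' (P - j - w))) := by
              intro w hw; ring
            rw [show (∑ w ∈ Finset.range (q - j), ((-1:k)^w) *
                ((B (e i)) (e' (P - j - w)) + (B (e (i+1))) (e' (P - j - w))))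
              = (∑ w ∈ Finset.range (q - j), ((-1:k)^w) * (B (e i)) (e' (P - j - w)))
              + ∑ w ∈ Finset.range (q - j), ((-1:k)^w) * (B (e (i+1))) (e' (P - j - w)) by
                rw [← Finset.sum_add_distrib]; exact Finset.sum_congr rfl expand]
            rw [hdtail i hi1 hi2 j hj, hdtail (i+1) (by omega) (by omega) j hj,
              hBee' i (Finset.mem_Icc.2 ⟨hi1, hi2⟩) (P - j)
                (Finset.mem_Icc.2 ⟨by omega, by omega⟩)]
            rcases lt_trichotomy i (P - j) with hlt | heq | hgt
            · rw [if_pos (by omega), if_pos (by omega), if_neg (by omega),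
                show P - j - i = (P - j - (i+1)) + 1 by omega, pow_succ]
              ring
            · rw [if_pos (by omega), if_neg (by omega), if_pos (by omega),
                show P - j - i = 0 by omega, pow_zero]
              ring
            · rw [if_neg (by omega), if_neg (by omega), if_neg (by omega)]
              ring
    have me'e' : ∀ i, 1 ≤ i → i ≤ n → ∀ m, 1 ≤ m → m ≤ n →
        B (G h (e' i)) (G h (e' m)) = B (e' i) (e' m) := by
      intro i hi1 hi2 m hm1 hm2
      rw [hBe'e' i (Finset.mem_Icc.2 ⟨hi1, hi2⟩) m (Finset.mem_Icc.2 ⟨hm1, hm2⟩)]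
      have hright : ∀ u, 1 ≤ u → u ≤ n → B (e' u) (G h (e' m)) = 0 := by
        intro u hu1 hu2
        by_cases hmm : m ≤ a ∨ P < m
        · rw [(hout m hm1 hm2 hmm).2,
            hBe'e' u (Finset.mem_Icc.2 ⟨hu1, hu2⟩) m (Finset.mem_Icc.2 ⟨hm1, hm2⟩)]
        · obtain ⟨j, hj, rfl⟩ : ∃ j, j ≤ q - 1 ∧ m = P - j := ⟨P - m, by omega, by omega⟩
          rw [hdual' j hj]
          exact he'e'zero _ _ _ u hu1 hu2 (fun b hb => by
            rw [Finset.mem_range] at hb; exact ⟨by omega, by omega⟩)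
      by_cases him : i ≤ a ∨ P < i
      · rw [(hout i hi1 hi2 him).2]
        exact hright i hi1 hi2
      · obtain ⟨j', hj', rfl⟩ : ∃ j', j' ≤ q - 1 ∧ i = P - j' := ⟨P - i, by omega, by omega⟩
        rw [hdual' j' hj', map_sum, LinearMap.sum_apply]
        apply Finset.sum_eq_zero
        intro w hw
        rw [Finset.mem_range] at hw
        rw [map_smul, LinearMap.smul_apply, smul_eq_mul,
          hright (P - j' - w) (by omega) (by omega), mul_zero]
    -- assemble
    have key : ∀ x ∈ S, ∀ y ∈ S, B (G h x) (G h y) = B x y := by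
      intro x hx y hy
      obtain ⟨i, hi1, hi2, hxe⟩ := hScases x hx
      obtain ⟨m, hm1, hm2, hye⟩ := hScases y hy
      rcases hxe with rfl | rfl <;> rcases hye with rfl | rfl
      · exact mee i hi1 hi2 m hm1 hm2
      · exact mee' i hi1 hi2 m hm1 hm2
      · exact sym (e m) (e' i) (mee' m hm1 hm2 i hi1 hi2)
      · exact me'e' i hi1 hi2 m hm1 hm2
    intro x y
    have hBB : B.compl₁₂ (G h).toLinearMap (G h).toLinearMap = B := by
      apply LinearMap.ext_on hbasis_sp
      intro x hx
      apply LinearMap.ext_on hbasis_sp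
      intro y hy
      simpa using key x hx y hy
    have := LinearMap.congr_fun (LinearMap.congr_fun hBB x) y
    simpa using this
  -- G h fixes vectors of other blocks
  have hfixblock : ∀ h ∈ Finset.Icc 1 σ, ∀ h' ∈ Finset.Icc 1 σ, h ≠ h' →
      ∀ m, partialSum p (h'-1) + 1 ≤ m → m ≤ partialSum p h' →
      G h (e m) = e m ∧ G h (e' m) = e' m := by
    intro h hh h' hh' hne m hm1 hm2
    rw [Finset.mem_Icc] at hh hh'
    have hmn : m ≤ n := le_trans hm2 (pS_le_n h' hh'.2)
    apply hGfix h (Finset.mem_Icc.2 hh) m (Finset.mem_Icc.2 ⟨by omega, hmn⟩)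
    rcases lt_or_gt_of_ne hne with hlt | hgt
    · right
      have : partialSum p h ≤ partialSum p (h'-1) := pSmono _ _ (by omega)
      omega
    · left
      have : partialSum p h' ≤ partialSum p (h-1) := pSmono _ _ (by omega)
      omega
  have hGmapfix : ∀ h ∈ Finset.Icc 1 σ, ∀ h' ∈ Finset.Icc 1 σ, h' ≠ h →
      ∀ m, partialSum p (h-1) + 1 ≤ m → m ≤ partialSum p h →
      G h' (G h (e m)) = G h (e m) ∧ G h' (G h (e' m)) = G h (e' m) := by
    intro h hh h' hh' hne m hm1 hm2
    have h12 := Finset.mem_Icc.1 hh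
    have hPh := hP h h12.1 h12.2
    have hPn := pS_le_n h h12.2
    have hq1 := hp1' h h12.1 h12.2
    have fixm : ∀ u, partialSum p (h-1) + 1 ≤ u → u ≤ partialSum p h →
        G h' (e u) = e u ∧ G h' (e' u) = e' u :=
      fun u hu1 hu2 => hfixblock h' hh' h hh hne u hu1 hu2
    constructor
    · by_cases hmP : m = partialSum p h
      · subst hmP
        rw [hGlast h hh, map_add, map_sum, (fixm _ hm1 hm2).1]
        congr 1
        apply Finset.sum_congr rfl
        intro v hv
        rw [Finset.mem_Icc] at hv
        rw [map_smul, (fixm (partialSum p h - v + 1) (by omega) (by omega)).2]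
      · rw [hGstep h hh m hm1 (by omega), map_add, (fixm m hm1 hm2).1,
          (fixm (m+1) (by omega) (by omega)).1]
    · obtain ⟨j, hj, rfl⟩ : ∃ j, j ≤ p h - 1 ∧ m = partialSum p h - j :=
        ⟨partialSum p h - m, by omega, by omega⟩
      rw [hGdual h hh j hj, map_sum]
      apply Finset.sum_congr rfl
      intro w hw
      rw [Finset.mem_range] at hw
      rw [map_smul, (fixm (partialSum p h - j - w) (by omega) (by omega)).2]
  -- COMMUTATION
  have hcomm : ∀ h ∈ Finset.Icc 1 σ, ∀ h' ∈ Finset.Icc 1 σ, G h * G h' = G h' * G h := by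
    intro h hh h' hh'
    by_cases hne : h = h'
    · rw [hne]
    · apply LinearEquiv.toLinearMap_injective
      apply LinearMap.ext_on hbasis_sp
      intro x hx
      obtain ⟨i, hi1, hi2, hxe⟩ := hScases x hx
      have h12 := Finset.mem_Icc.1 hh
      have h12' := Finset.mem_Icc.1 hh'
      show (G h) ((G h') x) = (G h') ((G h) x)
      by_cases hbi : partialSum p (h-1) + 1 ≤ i ∧ i ≤ partialSum p h
      · rcases hxe with rfl | rfl
        · rw [(hfixblock h' hh' h hh (Ne.symm hne) i hbi.1 hbi.2).1,
            (hGmapfix h hh h' hh' (Ne.symm hne) i hbi.1 hbi.2).1]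
        · rw [(hfixblock h' hh' h hh (Ne.symm hne) i hbi.1 hbi.2).2,
            (hGmapfix h hh h' hh' (Ne.symm hne) i hbi.1 hbi.2).2]
      · by_cases hbi' : partialSum p (h'-1) + 1 ≤ i ∧ i ≤ partialSum p h'
        · rcases hxe with rfl | rfl
          · rw [(hfixblock h hh h' hh' hne i hbi'.1 hbi'.2).1,
              (hGmapfix h' hh' h hh hne i hbi'.1 hbi'.2).1]
          · rw [(hfixblock h hh h' hh' hne i hbi'.1 hbi'.2).2,
              (hGmapfix h' hh' h hh hne i hbi'.1 hbi'.2).2]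
        · have fh := hGfix h hh i (Finset.mem_Icc.2 ⟨hi1, hi2⟩) (by omega)
          have fh' := hGfix h' hh' i (Finset.mem_Icc.2 ⟨hi1, hi2⟩) (by omega)
          rcases hxe with rfl | rfl
          · rw [fh'.1, fh.1, fh'.1]
          · rw [fh'.2, fh.2, fh'.2]
  -- PART 3 : the product g and the Jordan basis
  set gl : V ≃ₗ[k] V := ((List.range σ).map (fun t => G (t + 1))).prod with hgl
  -- block submodules
  set W : ℕ → Submodule k V := fun t => Submodule.span k
      ((e '' Set.Icc (partialSum p (t-1) + 1) (partialSum p t)) ∪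
       (e' '' Set.Icc (partialSum p (t-1) + 1) (partialSum p t))) with hW
  have hWmem : ∀ t m, partialSum p (t-1) + 1 ≤ m → m ≤ partialSum p t →
      e m ∈ W t ∧ e' m ∈ W t := by
    intro t m hm1 hm2
    constructor
    · exact Submodule.subset_span (Or.inl ⟨m, Set.mem_Icc.2 ⟨hm1, hm2⟩, rfl⟩)
    · exact Submodule.subset_span (Or.inr ⟨m, Set.mem_Icc.2 ⟨hm1, hm2⟩, rfl⟩)
  have hWfix : ∀ t ∈ Finset.Icc 1 σ, ∀ h' ∈ Finset.Icc 1 σ, h' ≠ t →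
      ∀ x ∈ W t, G h' x = x := by
    intro t ht h' hh' hne x hx
    have hle : W t ≤ LinearMap.eqLocus (G h').toLinearMap (LinearMap.id) := by
      apply Submodule.span_le.2
      rintro y (⟨m, hm, rfl⟩ | ⟨m, hm, rfl⟩) <;> rw [Set.mem_Icc] at hm
      · exact (hfixblock h' hh' t ht hne m hm.1 hm.2).1
      · exact (hfixblock h' hh' t ht hne m hm.1 hm.2).2
    exact hle hx
  have hWmap : ∀ t ∈ Finset.Icc 1 σ, ∀ x ∈ W t, G t x ∈ W t := by
    intro t ht x hx
    have h12 := Finset.mem_Icc.1 ht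
    have hPh := hP t h12.1 h12.2
    have hq1 := hp1' t h12.1 h12.2
    have hle : W t ≤ (W t).comap (G t).toLinearMap := by
      apply Submodule.span_le.2
      rintro y (⟨m, hm, rfl⟩ | ⟨m, hm, rfl⟩) <;> rw [Set.mem_Icc] at hm <;>
        simp only [SetLike.mem_coe, Submodule.mem_comap, LinearEquiv.coe_toLinearMap]
      · by_cases hmP : m = partialSum p t
        · subst hmP
          rw [hGlast t ht]
          apply Submodule.add_mem _ (hWmem t _ hm.1 hm.2).1
          apply Submodule.sum_mem
          intro v hv
          rw [Finset.mem_Icc] at hv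
          exact Submodule.smul_mem _ _ (hWmem t _ (by omega) (by omega)).2
        · rw [hGstep t ht m hm.1 (by omega)]
          exact Submodule.add_mem _ (hWmem t _ hm.1 hm.2).1
            (hWmem t _ (by omega) (by omega)).1
      · obtain ⟨j, hj, rfl⟩ : ∃ j, j ≤ p t - 1 ∧ m = partialSum p t - j :=
          ⟨partialSum p t - m, by omega, by omega⟩
        rw [hGdual t ht j hj]
        apply Submodule.sum_mem
        intro w hw
        rw [Finset.mem_range] at hw
        exact Submodule.smul_mem _ _ (hWmem t _ (by omega) (by omega)).2
    exact hle hx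
  have hprodfix : ∀ t, 1 ≤ t → t ≤ σ → ∀ m, m ≤ σ → ∀ x ∈ W t,
      (((List.range m).map (fun s => G (s + 1))).prod) x = if t ≤ m then G t x else x := by
    intro t ht1 ht2 m
    induction m with
    | zero => intro _ x hx; rw [if_neg (by omega)]; rfl
    | succ m ih =>
      intro hm x hx
      rw [List.range_succ, List.map_append, List.prod_append, List.map_cons, List.prod_cons,
        List.map_nil, List.prod_nil, mul_one]
      have happ : ∀ (u v : V ≃ₗ[k] V) (y : V), (u * v) y = u (v y) := fun _ _ _ => rfl
      rw [happ]
      by_cases htm : t = m + 1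
      · subst htm
        rw [if_pos le_rfl]
        have hGx : G (m+1) x ∈ W (m+1) := hWmap (m+1) (Finset.mem_Icc.2 ⟨by omega, by omega⟩) x hx
        rw [ih (by omega) _ hGx, if_neg (by omega)]
      · rw [hWfix t (Finset.mem_Icc.2 ⟨ht1, ht2⟩) (m+1) (Finset.mem_Icc.2 ⟨by omega, by omega⟩)
          (by omega) x hx, ih (by omega) x hx]
        by_cases htm' : t ≤ m
        · rw [if_pos htm', if_pos (by omega)]
        · rw [if_neg htm', if_neg (by omega)]
  have hgblock : ∀ t, 1 ≤ t → t ≤ σ → ∀ x ∈ W t, gl x = G t x := by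
    intro t ht1 ht2 x hx
    rw [hgl, hprodfix t ht1 ht2 σ le_rfl x hx, if_pos ht2]
  -- the Jordan chain vectors
  set wv : ℕ → ℕ → V := fun t j =>
    if j ≤ p t then e (partialSum p (t-1) + j)
    else ∑ s ∈ Finset.range (p t),
      (((-1:k)^(s+1)) * ((s.choose (j - p t - 1) : ℕ) : k)) • e' (partialSum p t - s)
    with hwv
  have hwlow : ∀ t j, j ≤ p t → wv t j = e (partialSum p (t-1) + j) := by
    intro t j hj; rw [hwv]; simp only [if_pos hj]
  have hwhigh : ∀ t j, p t < j → wv t j = ∑ s ∈ Finset.range (p t),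
      (((-1:k)^(s+1)) * ((s.choose (j - p t - 1) : ℕ) : k)) • e' (partialSum p t - s) := by
    intro t j hj; rw [hwv]; simp only [if_neg (by omega : ¬ j ≤ p t)]
  have hwW : ∀ t, 1 ≤ t → t ≤ σ → ∀ j, 1 ≤ j → wv t j ∈ W t := by
    intro t ht1 ht2 j hj
    have hPh := hP t ht1 ht2
    have hq1 := hp1' t ht1 ht2
    by_cases hjq : j ≤ p t
    · rw [hwlow t j hjq]
      exact (hWmem t _ (by omega) (by omega)).1
    · rw [hwhigh t j (by omega)]
      apply Submodule.sum_mem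
      intro s hs
      rw [Finset.mem_range] at hs
      exact Submodule.smul_mem _ _ (hWmem t _ (by omega) (by omega)).2
  -- action of gl - 1 on the top half of the chains
  have hNhigh : ∀ t, 1 ≤ t → t ≤ σ → ∀ m,
      gl (∑ s ∈ Finset.range (p t),
          (((-1:k)^(s+1)) * ((s.choose m : ℕ) : k)) • e' (partialSum p t - s))
        - (∑ s ∈ Finset.range (p t),
          (((-1:k)^(s+1)) * ((s.choose m : ℕ) : k)) • e' (partialSum p t - s))
      = ∑ s ∈ Finset.range (p t),
          (((-1:k)^(s+1)) * ((s.choose (m+1) : ℕ) : k)) • e' (partialSum p t - s) := by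
    intro t ht1 ht2 m
    have hPh := hP t ht1 ht2
    have hq1 := hp1' t ht1 ht2
    have ht : t ∈ Finset.Icc 1 σ := Finset.mem_Icc.2 ⟨ht1, ht2⟩
    have hxW : (∑ s ∈ Finset.range (p t),
        (((-1:k)^(s+1)) * ((s.choose m : ℕ) : k)) • e' (partialSum p t - s)) ∈ W t := by
      apply Submodule.sum_mem
      intro s hs
      rw [Finset.mem_range] at hs
      exact Submodule.smul_mem _ _ (hWmem t _ (by omega) (by omega)).2
    rw [hgblock t ht1 ht2 _ hxW, map_sum, ← Finset.sum_sub_distrib]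
    have hterm : ∀ s ∈ Finset.range (p t),
        (G t) ((((-1:k)^(s+1)) * ((s.choose m : ℕ) : k)) • e' (partialSum p t - s))
          - (((-1:k)^(s+1)) * ((s.choose m : ℕ) : k)) • e' (partialSum p t - s)
        = (((-1:k)^(s+1)) * ((s.choose m : ℕ) : k)) •
            (∑ i ∈ Finset.range (p t - 1 - s), ((-1:k)^(i+1)) • e' (partialSum p t - (s+1+i))) := by
      intro s hs
      rw [Finset.mem_range] at hs
      rw [map_smul, ← smul_sub]
      congr 1
      rw [hGdual t ht s (by omega)]
      rw [show p t - s = (p t - s - 1) + 1 by omega,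
        Finset.sum_range_succ' (fun w => ((-1:k)^w) • e' (partialSum p t - s - w)) (p t - s - 1)]
      simp only [pow_zero, one_smul, Nat.sub_zero]
      rw [add_sub_cancel_right, show p t - s - 1 = p t - 1 - s by omega]
      apply Finset.sum_congr rfl
      intro i hi
      rw [Finset.mem_range] at hi
      rw [show partialSum p t - s - (i+1) = partialSum p t - (s+1+i) by omega]
    rw [Finset.sum_congr rfl hterm]
    exact aux_sumA (p t) m (fun u => e' (partialSum p t - u))
  have hchain : ∀ t, 1 ≤ t → t ≤ σ → ∀ j, 1 ≤ j → j + 1 ≤ 2 * p t →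
      gl (wv t j) - wv t j = wv t (j+1) := by
    intro t ht1 ht2 j hj1 hj2
    have hPh := hP t ht1 ht2
    have hq1 := hp1' t ht1 ht2
    have ht : t ∈ Finset.Icc 1 σ := Finset.mem_Icc.2 ⟨ht1, ht2⟩
    by_cases hjlow : j + 1 ≤ p t
    · rw [hwlow t j (by omega), hwlow t (j+1) hjlow,
        hgblock t ht1 ht2 _ (hWmem t _ (by omega) (by omega)).1,
        hGstep t ht (partialSum p (t-1) + j) (by omega) (by omega),
        show partialSum p (t-1) + j + 1 = partialSum p (t-1) + (j+1) by omega]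
      abel
    · by_cases hjq : j = p t
      · rw [hwlow t j (by omega), show partialSum p (t-1) + j = partialSum p t by omega,
          hgblock t ht1 ht2 _ (hWmem t _ (by omega) (by omega)).1,
          hGlast t ht, add_sub_cancel_left, hwhigh t (j+1) (by omega),
          aux_Icc1 (p t) (fun v => ((-1:k)^v) • e' (partialSum p t - v + 1))]
        apply Finset.sum_congr rfl
        intro w hw
        rw [Finset.mem_range] at hw
        rw [show partialSum p t - (w+1) + 1 = partialSum p t - w by omega,
          show j + 1 - p t - 1 = 0 by omega, Nat.choose_zero_right, Nat.cast_one, mul_one]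
      · rw [hwhigh t j (by omega), hwhigh t (j+1) (by omega),
          show j + 1 - p t - 1 = (j - p t - 1) + 1 by omega]
        exact hNhigh t ht1 ht2 (j - p t - 1)
  have hlastrel : ∀ t, 1 ≤ t → t ≤ σ → gl (wv t (2 * p t)) - wv t (2 * p t) = 0 := by
    intro t ht1 ht2
    have hq1 := hp1' t ht1 ht2
    rw [hwhigh t (2 * p t) (by omega), hNhigh t ht1 ht2 (2 * p t - p t - 1)]
    apply Finset.sum_eq_zero
    intro s hs
    rw [Finset.mem_range] at hs
    rw [show 2 * p t - p t - 1 + 1 = p t by omega, Nat.choose_eq_zero_of_lt hs,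
      Nat.cast_zero, mul_zero, zero_smul]
  -- locate the block of an index
  have hfind : ∀ i, 1 ≤ i → i ≤ n →
      ∃ t, 1 ≤ t ∧ t ≤ σ ∧ partialSum p (t-1) < i ∧ i ≤ partialSum p t := by
    have haux : ∀ m, m ≤ σ → ∀ i, 1 ≤ i → i ≤ partialSum p m →
        ∃ t, 1 ≤ t ∧ t ≤ m ∧ partialSum p (t-1) < i ∧ i ≤ partialSum p t := by
      intro m
      induction m with
      | zero => intro _ i hi1 hi2; rw [pS0] at hi2; omega
      | succ m ih =>
        intro hm i hi1 hi2
        by_cases hile : i ≤ partialSum p m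
        · obtain ⟨t, u1, u2, u3, u4⟩ := ih (by omega) i hi1 hile
          exact ⟨t, u1, by omega, u3, u4⟩
        · exact ⟨m+1, by omega, le_rfl, by simp only [Nat.add_sub_cancel]; omega, hi2⟩
    intro i hi1 hi2
    have hn : partialSum p σ = n := hsum
    obtain ⟨t, u1, u2, u3, u4⟩ := haux σ le_rfl i hi1 (by omega)
    exact ⟨t, u1, u2, u3, u4⟩
  set wfam : {q : ℕ × ℕ // 1 ≤ q.1 ∧ q.1 ≤ σ ∧ 1 ≤ q.2 ∧ q.2 ≤ 2 * p q.1} → V :=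
    fun q => wv q.1.1 q.1.2 with hwfam
  have hwmemT : ∀ t j, 1 ≤ t → t ≤ σ → 1 ≤ j → j ≤ 2 * p t →
      wv t j ∈ Submodule.span k (Set.range wfam) := by
    intro t j u1 u2 u3 u4
    exact Submodule.subset_span ⟨⟨(t,j), ⟨u1,u2,u3,u4⟩⟩, rfl⟩
  have hspan_le : ⊤ ≤ Submodule.span k (Set.range wfam) := by
    rw [← hbasis_sp]
    apply Submodule.span_le.2
    intro x hx
    obtain ⟨i, hi1, hi2, hxe⟩ := hScases x hx
    obtain ⟨t, ht1, ht2, hti1, hti2⟩ := hfind i hi1 hi2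
    have hPh := hP t ht1 ht2
    have hq1 := hp1' t ht1 ht2
    rcases hxe with rfl | rfl
    · have hrw : e i = wv t (i - partialSum p (t-1)) := by
        rw [hwlow t _ (by omega), show partialSum p (t-1) + (i - partialSum p (t-1)) = i by omega]
      rw [SetLike.mem_coe, hrw]
      exact hwmemT t _ ht1 ht2 (by omega) (by omega)
    · have core : ∀ s, s ≤ p t - 1 →
          (∀ s', s < s' → s' ≤ p t - 1 → e' (partialSum p t - s') ∈ Submodule.span k (Set.range wfam)) →
          e' (partialSum p t - s) ∈ Submodule.span k (Set.range wfam) := by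
        intro s hs hrec
        have hsmem : s ∈ Finset.range (p t) := Finset.mem_range.2 (by omega)
        have hw := hwhigh t (p t + 1 + s) (by omega)
        rw [show p t + 1 + s - p t - 1 = s by omega,
          ← Finset.sum_erase_add _ _ hsmem, Nat.choose_self, Nat.cast_one, mul_one] at hw
        have h1 : ((-1:k)^(s+1)) • e' (partialSum p t - s)
            = wv t (p t + 1 + s) - ∑ s' ∈ (Finset.range (p t)).erase s,
                (((-1:k)^(s'+1)) * ((s'.choose s : ℕ):k)) • e' (partialSum p t - s') := by
          rw [hw]; abel
        have h2 : e' (partialSum p t - s) = ((-1:k)^(s+1)) •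
            (wv t (p t + 1 + s) - ∑ s' ∈ (Finset.range (p t)).erase s,
                (((-1:k)^(s'+1)) * ((s'.choose s : ℕ):k)) • e' (partialSum p t - s')) := by
          rw [← h1, smul_smul, ← pow_add, show (s+1)+(s+1) = 2*(s+1) by ring, pow_mul,
            neg_one_sq, one_pow, one_smul]
        rw [h2]
        apply Submodule.smul_mem
        apply Submodule.sub_mem
        · exact hwmemT t _ ht1 ht2 (by omega) (by omega)
        · apply Submodule.sum_mem
          intro s' hs'
          rw [Finset.mem_erase, Finset.mem_range] at hs'
          rcases lt_or_gt_of_ne hs'.1 with hlt | hgt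
          · rw [Nat.choose_eq_zero_of_lt hlt, Nat.cast_zero, mul_zero, zero_smul]
            exact Submodule.zero_mem _
          · exact Submodule.smul_mem _ _ (hrec s' hgt (by omega))
      have descend : ∀ d s, s ≤ p t - 1 → p t - 1 - s ≤ d →
          e' (partialSum p t - s) ∈ Submodule.span k (Set.range wfam) := by
        intro d
        induction d with
        | zero =>
          intro s hs hd
          exact core s hs (fun s' h1 h2 => by omega)
        | succ d ih =>
          intro s hs hd
          exact core s hs (fun s' h1 h2 => ih s' h2 (by omega))
      have hrw : e' i = e' (partialSum p t - (partialSum p t - i)) := by congr 1; omega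
      rw [SetLike.mem_coe, hrw]
      exact descend (p t) _ (by omega) (by omega)
  have hsp_eq : Submodule.span k (Set.range wfam) = ⊤ := le_antisymm le_top hspan_le
  -- cardinalities
  haveI instn : Fintype {i : ℕ // 1 ≤ i ∧ i ≤ n} :=
    Fintype.subtype (Finset.Icc 1 n) (fun x => by rw [Finset.mem_Icc])
  have hfr : Module.finrank k V = 2 * n := by
    let b : Module.Basis _ k V := Module.Basis.mk hbasis_li (le_of_eq hbasis_sp.symm)
    rw [Module.finrank_eq_card_basis b, Fintype.card_sum,
      Fintype.card_of_subtype (Finset.Icc 1 n) (fun x => by rw [Finset.mem_Icc]),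
      Nat.card_Icc]
    omega
  haveI instι : Fintype {q : ℕ × ℕ // 1 ≤ q.1 ∧ q.1 ≤ σ ∧ 1 ≤ q.2 ∧ q.2 ≤ 2 * p q.1} :=
    Fintype.subtype ((Finset.Icc 1 σ).biUnion (fun t => (Finset.Icc 1 (2 * p t)).image (fun j => (t, j))))
      (fun x => by
        simp only [Finset.mem_biUnion, Finset.mem_image, Finset.mem_Icc]
        constructor
        · rintro ⟨t, ⟨ht1, ht2⟩, j, ⟨hj1, hj2⟩, rfl⟩
          exact ⟨ht1, ht2, hj1, hj2⟩
        · rintro ⟨u1, u2, u3, u4⟩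
          exact ⟨x.1, ⟨u1, u2⟩, x.2, ⟨u3, u4⟩, rfl⟩)
  have hcard : Fintype.card {q : ℕ × ℕ // 1 ≤ q.1 ∧ q.1 ≤ σ ∧ 1 ≤ q.2 ∧ q.2 ≤ 2 * p q.1} = 2 * n := by
    rw [Fintype.card_of_subtype ((Finset.Icc 1 σ).biUnion (fun t => (Finset.Icc 1 (2 * p t)).image (fun j => (t, j))))
      (fun x => by
        simp only [Finset.mem_biUnion, Finset.mem_image, Finset.mem_Icc]
        constructor
        · rintro ⟨t, ⟨ht1, ht2⟩, j, ⟨hj1, hj2⟩, rfl⟩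
          exact ⟨ht1, ht2, hj1, hj2⟩
        · rintro ⟨u1, u2, u3, u4⟩
          exact ⟨x.1, ⟨u1, u2⟩, x.2, ⟨u3, u4⟩, rfl⟩)]
    rw [Finset.card_biUnion]
    · have hc : ∀ t ∈ Finset.Icc 1 σ,
          ((Finset.Icc 1 (2 * p t)).image (fun j => (t, j))).card = 2 * p t := by
        intro t ht
        rw [Finset.card_image_of_injective _ (fun a b hab => (Prod.ext_iff.1 hab).2),
          Nat.card_Icc]
        omega
      rw [Finset.sum_congr rfl hc, ← Finset.mul_sum, hsum]
    · intro t ht t' ht' hne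
      rw [Function.onFun, Finset.disjoint_left]
      rintro x hx hx'
      simp only [Finset.mem_image] at hx hx'
      obtain ⟨j, _, rfl⟩ := hx
      obtain ⟨j', _, hj'⟩ := hx'
      exact hne ((Prod.ext_iff.1 hj').1.symm)
  have hlin : LinearIndependent k wfam :=
    linearIndependent_of_top_le_span_of_card_eq_finrank hspan_le (hcard.trans hfr.symm)
  -- nilpotency
  have hNpow : ∀ t, 1 ≤ t → t ≤ σ → ∀ d j, 1 ≤ j → j ≤ 2 * p t → 2 * p t < j + d →
      (((gl.toLinearMap - LinearMap.id : Module.End k V))^d) (wv t j) = 0 := by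
    intro t ht1 ht2 d
    induction d with
    | zero => intro j u1 u2 u3; omega
    | succ d ih =>
      intro j u1 u2 u3
      rw [pow_succ, Module.End.mul_apply]
      have hNx : (gl.toLinearMap - LinearMap.id : Module.End k V) (wv t j)
          = gl (wv t j) - wv t j := rfl
      rw [hNx]
      by_cases hj : j = 2 * p t
      · rw [hj, hlastrel t ht1 ht2, map_zero]
      · rw [hchain t ht1 ht2 j u1 (by omega)]
        exact ih (j+1) (by omega) (by omega) (by omega)
  have hptn : ∀ t, 1 ≤ t → t ≤ σ → p t ≤ n := by
    intro t u1 u2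
    rw [← hsum]
    exact Finset.single_le_sum (fun _ _ => Nat.zero_le _) (Finset.mem_Icc.2 ⟨u1, u2⟩)
  have hnil : IsNilpotent (gl.toLinearMap - LinearMap.id : Module.End k V) := by
    refine ⟨2 * n + 1, ?_⟩
    apply LinearMap.ext_on hsp_eq
    rintro x ⟨⟨⟨t, j⟩, u1, u2, u3, u4⟩, rfl⟩
    rw [LinearMap.zero_apply]
    exact hNpow t u1 u2 (2*n+1) j u3 u4 (by have := hptn t u1 u2; omega)
  -- isometry of the product
  have hgiso : ∀ x y : V, B (gl x) (gl y) = B x y := by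
    have key : ∀ (l : List ℕ), (∀ b ∈ l, b + 1 ∈ Finset.Icc 1 σ) →
        ∀ x y : V, B (((l.map (fun s => G (s+1))).prod) x) (((l.map (fun s => G (s+1))).prod) y)
          = B x y := by
      intro l
      induction l with
      | nil => intro _ x y; rfl
      | cons b l ih =>
        intro hmem x y
        rw [List.map_cons, List.prod_cons]
        have happ : ∀ (u v : V ≃ₗ[k] V) (y : V), (u * v) y = u (v y) := fun _ _ _ => rfl
        rw [happ, happ, hiso (b+1) (hmem b List.mem_cons_self)]
        exact ih (fun c hc => hmem c (List.mem_cons_of_mem b hc)) x y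
    intro x y
    rw [hgl]
    exact key (List.range σ)
      (fun c hc => Finset.mem_Icc.2 ⟨by omega, by rw [List.mem_range] at hc; omega⟩) x y
  refine ⟨hiso, hcomm, hgiso, hnil, wv, hlin, hsp_eq, ?_, ?_⟩
  · intro t ht j hj1 hj2
    rw [Finset.mem_Icc] at ht
    exact hchain t ht.1 ht.2 j hj1 hj2
  · intro t ht
    rw [Finset.mem_Icc] at ht
    exact hlastrel t ht.1 ht.2


end
end
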